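/- arXiv:2504.09492 — 9 statements merged into one kernel-verified Lean document; each statement's English description precedes it below -/
import Mathlib

section
/- For every dimension d ≥ 1, every shape parameter ε > 0, every n ≥ 1, every family of pairwise distinct points x_1, …, x_n ∈ ℝ^d, and every nonzero vector c ∈ ℝ^n, one has Σ_{i,j} c_i c_j · exp(−ε² ‖x_i − x_j‖²) > 0; that is, the Gaussian kernel Φ(x) = exp(−ε²‖x‖²) is strictly positive definite on ℝ^d, and in particular the Gaussian interpolation matrix A with A_{ij} = exp(−ε²‖x_i − x_j‖²) is positive definite. -/
open Finset

/-- If all "moment" sums vanish, then sums against products of linear forms vanish. -/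
lemma gauss_aux_lin {n d : ℕ} (b : Fin n → ℝ) (x : Fin n → Fin d → ℝ)
    (H : ∀ (k : ℕ) (f : Fin k → Fin d), ∑ i, b i * ∏ s, x i (f s) = 0)
    (T : Finset (Fin n)) (a : Fin n → Fin d → ℝ) :
    ∑ i, b i * ∏ j ∈ T, (∑ t, a j t * x i t) = 0 := by
  classical
  simp_rw [Finset.prod_sum, Finset.mul_sum]
  rw [Finset.sum_comm]
  refine Finset.sum_eq_zero fun p hp => ?_
  have h2 : ∀ i, b i * ∏ j ∈ T.attach, (a j.1 (p j.1 j.2) * x i (p j.1 j.2))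
      = (∏ j ∈ T.attach, a j.1 (p j.1 j.2)) * (b i * ∏ j ∈ T.attach, x i (p j.1 j.2)) := by
    intro i
    rw [Finset.prod_mul_distrib]; ring
  simp_rw [h2, ← Finset.mul_sum]
  have e : Fin (Fintype.card {j // j ∈ T}) ≃ {j // j ∈ T} := (Fintype.equivFin _).symm
  have h3 : ∀ i, ∏ j ∈ T.attach, x i (p j.1 j.2)
      = ∏ s, x i (p (e s).1 (e s).2) := by
    intro i
    rw [← Finset.univ_eq_attach]
    exact (Equiv.prod_comp e fun j => x i (p j.1 j.2)).symm
  simp_rw [h3, H _ (fun s => p (e s).1 (e s).2), mul_zero]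

/-- Expansion of the `k`-th moment quadratic form as a sum of squares. -/
lemma gauss_aux_sq {n d : ℕ} (b : Fin n → ℝ) (x : Fin n → Fin d → ℝ) (k : ℕ) :
    ∑ i, ∑ j, b i * b j * (∑ t, x i t * x j t) ^ k
      = ∑ f : Fin k → Fin d, (∑ i, b i * ∏ s, x i (f s)) ^ 2 := by
  classical
  have h1 : ∀ i j : Fin n, b i * b j * (∑ t, x i t * x j t) ^ k
      = ∑ f : Fin k → Fin d, (b i * ∏ s, x i (f s)) * (b j * ∏ s, x j (f s)) := by
    intro i j
    rw [Finset.sum_pow', Fintype.piFinset_univ, Finset.mul_sum]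
    refine Finset.sum_congr rfl fun f _ => ?_
    rw [Finset.prod_mul_distrib]; ring
  simp_rw [h1]
  have h2 : ∀ i : Fin n, ∑ j, ∑ f : Fin k → Fin d,
        (b i * ∏ s, x i (f s)) * (b j * ∏ s, x j (f s))
      = ∑ f : Fin k → Fin d, ∑ j, (b i * ∏ s, x i (f s)) * (b j * ∏ s, x j (f s)) :=
    fun i => Finset.sum_comm
  simp_rw [h2]
  rw [Finset.sum_comm]
  refine Finset.sum_congr rfl fun f _ => ?_
  rw [sq, Finset.sum_mul_sum]

/-- For distinct points and nonzero `b`, some moment quadratic form is positive. -/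
lemma gauss_aux_exists {n d : ℕ} (b : Fin n → ℝ) (x : Fin n → Fin d → ℝ)
    (hx : Function.Injective x) (hb : b ≠ 0) :
    ∃ k : ℕ, 0 < ∑ i, ∑ j, b i * b j * (∑ t, x i t * x j t) ^ k := by
  classical
  by_contra h
  push_neg at h
  have hz : ∀ k, ∑ i, ∑ j, b i * b j * (∑ t, x i t * x j t) ^ k = 0 := by
    intro k
    refine le_antisymm (h k) ?_
    rw [gauss_aux_sq]
    exact Finset.sum_nonneg fun f _ => sq_nonneg _
  have H : ∀ (k : ℕ) (f : Fin k → Fin d), ∑ i, b i * ∏ s, x i (f s) = 0 := by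
    intro k f
    have h0 := hz k
    rw [gauss_aux_sq] at h0
    have h1 := (Finset.sum_eq_zero_iff_of_nonneg (fun f _ => sq_nonneg _)).1 h0 f
      (Finset.mem_univ f)
    exact pow_eq_zero_iff (two_ne_zero) |>.1 h1
  obtain ⟨i0, hi0⟩ : ∃ i0, b i0 ≠ 0 := Function.ne_iff.1 hb
  set T : Finset (Fin n) := Finset.univ.erase i0 with hT
  set a : Fin n → Fin d → ℝ := fun j t => x i0 t - x j t with ha
  set r : Fin n → ℝ := fun j => -∑ t, a j t * x j t with hr
  have haff : ∑ i, b i * ∏ j ∈ T, (∑ t, a j t * x i t + r j) = 0 := by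
    simp_rw [Finset.prod_add, Finset.mul_sum]
    rw [Finset.sum_comm]
    refine Finset.sum_eq_zero fun t' ht' => ?_
    have h4 : ∀ i, b i * ((∏ j ∈ t', ∑ t, a j t * x i t) * ∏ j ∈ T \ t', r j)
        = (b i * ∏ j ∈ t', ∑ t, a j t * x i t) * ∏ j ∈ T \ t', r j := fun i => by ring
    simp_rw [h4, ← Finset.sum_mul, gauss_aux_lin b x H t' a, zero_mul]
  have hval : ∀ (i j : Fin n), (∑ t, a j t * x i t + r j)
      = ∑ t, a j t * (x i t - x j t) := by
    intro i j
    simp only [hr, mul_sub, Finset.sum_sub_distrib, sub_eq_add_neg, mul_add, mul_neg,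
      Finset.sum_add_distrib, Finset.sum_neg_distrib]
  simp_rw [hval] at haff
  rw [Finset.sum_eq_single i0 (fun i _ hi => ?_) (fun hni => absurd (Finset.mem_univ i0) hni)]
    at haff
  · -- haff : b i0 * ∏ ... = 0, but both factors are nonzero
    have hpos : 0 < ∏ j ∈ T, ∑ t, a j t * (x i0 t - x j t) := by
      refine Finset.prod_pos fun j hj => ?_
      have hji0 : j ≠ i0 := Finset.ne_of_mem_erase hj
      have hne : x i0 ≠ x j := fun hxe => hji0 (hx hxe).symm
      have hterm : ∀ t, a j t * (x i0 t - x j t) = (x i0 t - x j t) ^ 2 := by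
        intro t; rw [ha]; ring
      simp_rw [hterm]
      have hnn : 0 ≤ ∑ t, (x i0 t - x j t) ^ 2 :=
        Finset.sum_nonneg fun t _ => sq_nonneg _
      rcases hnn.lt_or_eq with hlt | heq
      · exact hlt
      · exfalso
        apply hne
        funext t
        have := (Finset.sum_eq_zero_iff_of_nonneg (fun t _ => sq_nonneg _)).1 heq.symm t
          (Finset.mem_univ t)
        have := pow_eq_zero_iff (two_ne_zero) |>.1 this
        linarith [sub_eq_zero.1 this]
    exact hi0 (by
      rcases mul_eq_zero.1 haff with h' | h'
      · exact h'
      · exact absurd h' hpos.ne')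
  · -- for i ≠ i0 the product vanishes
    have hiT : i ∈ T := Finset.mem_erase.2 ⟨hi, Finset.mem_univ i⟩
    rw [Finset.prod_eq_zero hiT (by simp), mul_zero]

/-- Master lemma: the Gaussian quadratic form is positive for nonzero `c`. -/
lemma gauss_qf_pos {d n : ℕ} (ε : ℝ) (hε : 0 < ε)
    (x : Fin n → EuclideanSpace ℝ (Fin d)) (hx : Function.Injective x)
    (c : Fin n → ℝ) (hc : c ≠ 0) :
    0 < ∑ i, ∑ j, c i * c j * Real.exp (-(ε ^ 2 * ‖x i - x j‖ ^ 2)) := by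
  classical
  set X : Fin n → Fin d → ℝ := fun i t => x i t with hX
  have hXinj : Function.Injective X := fun i j hij => hx (PiLp.ext fun t => congrFun hij t)
  set N : Fin n → ℝ := fun i => ∑ t, X i t ^ 2 with hN
  set D : Fin n → Fin n → ℝ := fun i j => ∑ t, X i t * X j t with hD
  have hnorm : ∀ i j, ‖x i - x j‖ ^ 2 = N i - 2 * D i j + N j := by
    intro i j
    have h1 : ‖x i - x j‖ ^ 2 = ∑ t, (X i t - X j t) ^ 2 := by
      rw [EuclideanSpace.norm_eq,
        Real.sq_sqrt (Finset.sum_nonneg fun t _ => sq_nonneg _)]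
      simp [Real.norm_eq_abs, sq_abs, PiLp.sub_apply]
      rfl
    have h2 : ∀ t, (X i t - X j t) ^ 2
        = X i t ^ 2 - 2 * (X i t * X j t) + X j t ^ 2 := fun t => by ring
    rw [h1]
    simp_rw [h2, Finset.sum_add_distrib, Finset.sum_sub_distrib, ← Finset.mul_sum]
    rfl
  set b : Fin n → ℝ := fun i => c i * Real.exp (-(ε ^ 2 * N i)) with hb
  have hbne : b ≠ 0 := by
    obtain ⟨i0, hi0⟩ := Function.ne_iff.1 hc
    exact Function.ne_iff.2 ⟨i0, by
      simp only [hb, Pi.zero_apply] at *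
      exact mul_ne_zero hi0 (Real.exp_ne_zero _)⟩
  have hsplit : ∀ i j, c i * c j * Real.exp (-(ε ^ 2 * ‖x i - x j‖ ^ 2))
      = b i * b j * Real.exp (2 * ε ^ 2 * D i j) := by
    intro i j
    rw [hnorm i j,
      show -(ε ^ 2 * (N i - 2 * D i j + N j))
        = -(ε ^ 2 * N i) + -(ε ^ 2 * N j) + 2 * ε ^ 2 * D i j by ring,
      Real.exp_add, Real.exp_add, hb]
    ring
  simp_rw [hsplit]
  obtain ⟨k0, hk0⟩ := gauss_aux_exists b X hXinj hbne
  have hsummand : ∀ i j : Fin n,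
      Summable (fun k : ℕ => b i * b j * ((2 * ε ^ 2 * D i j) ^ k / k.factorial)) :=
    fun i j => (Real.summable_pow_div_factorial _).mul_left _
  have hexp : ∀ i j : Fin n, Real.exp (2 * ε ^ 2 * D i j)
      = ∑' k : ℕ, (2 * ε ^ 2 * D i j) ^ k / k.factorial := by
    intro i j
    rw [Real.exp_eq_exp_ℝ, NormedSpace.exp_eq_tsum_div]
  have hsum2 : ∀ i : Fin n, Summable
      (fun k : ℕ => ∑ j, b i * b j * ((2 * ε ^ 2 * D i j) ^ k / k.factorial)) :=
    fun i => summable_sum fun j _ => hsummand i j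
  have hQ : ∑ i, ∑ j, b i * b j * Real.exp (2 * ε ^ 2 * D i j)
      = ∑' k : ℕ, ∑ i, ∑ j, b i * b j * ((2 * ε ^ 2 * D i j) ^ k / k.factorial) := by
    simp_rw [hexp, ← tsum_mul_left]
    have h2 : ∀ i : Fin n, ∑ j, ∑' k : ℕ, b i * b j * ((2 * ε ^ 2 * D i j) ^ k / k.factorial)
        = ∑' k : ℕ, ∑ j, b i * b j * ((2 * ε ^ 2 * D i j) ^ k / k.factorial) :=
      fun i => (Summable.tsum_finsetSum fun j _ => hsummand i j).symm
    simp_rw [h2]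
    exact (Summable.tsum_finsetSum fun i _ => hsum2 i).symm
  rw [hQ]
  have hw : ∀ k : ℕ, (0 : ℝ) < (2 * ε ^ 2) ^ k / k.factorial :=
    fun k => div_pos (pow_pos (by positivity) k) (by exact_mod_cast k.factorial_pos)
  have hF : ∀ k : ℕ, ∑ i, ∑ j, b i * b j * ((2 * ε ^ 2 * D i j) ^ k / k.factorial)
      = ((2 * ε ^ 2) ^ k / k.factorial)
        * ∑ i, ∑ j, b i * b j * (D i j) ^ k := by
    intro k
    rw [Finset.mul_sum]
    refine Finset.sum_congr rfl fun i _ => ?_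
    rw [Finset.mul_sum]
    refine Finset.sum_congr rfl fun j _ => ?_
    rw [mul_pow]
    ring
  have hFnonneg : ∀ k : ℕ,
      0 ≤ ∑ i, ∑ j, b i * b j * ((2 * ε ^ 2 * D i j) ^ k / k.factorial) := by
    intro k
    rw [hF k]
    refine mul_nonneg (hw k).le ?_
    rw [gauss_aux_sq]
    exact Finset.sum_nonneg fun f _ => sq_nonneg _
  have hFk0 : 0 < ∑ i, ∑ j, b i * b j * ((2 * ε ^ 2 * D i j) ^ k0 / k0.factorial) := by
    rw [hF k0]
    exact mul_pos (hw k0) hk0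
  have hFsummable : Summable
      (fun k : ℕ => ∑ i, ∑ j, b i * b j * ((2 * ε ^ 2 * D i j) ^ k / k.factorial)) :=
    summable_sum fun i _ => hsum2 i
  exact lt_of_lt_of_le hFk0 (Summable.le_tsum hFsummable k0 fun j _ => hFnonneg j)

/-- The Gaussian kernel `Φ(x) = exp(−ε²‖x‖²)` is strictly positive definite on `ℝ^d`:
for pairwise distinct points `x_1, …, x_n` and every nonzero `c ∈ ℝ^n`, the quadratic
form `Σ_{i,j} c_i c_j exp(−ε²‖x_i − x_j‖²)` is positive; in particular the Gaussian
interpolation matrix `A_{ij} = exp(−ε²‖x_i − x_j‖²)` is positive definite. -/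
theorem gaussian_strictly_pos_def (d : ℕ) (hd : 1 ≤ d) (ε : ℝ) (hε : 0 < ε)
    (n : ℕ) (hn : 1 ≤ n) (x : Fin n → EuclideanSpace ℝ (Fin d))
    (hx : Function.Injective x) (c : Fin n → ℝ) (hc : c ≠ 0) :
    0 < ∑ i, ∑ j, c i * c j * Real.exp (-(ε ^ 2 * ‖x i - x j‖ ^ 2)) ∧
    (Matrix.of fun i j => Real.exp (-(ε ^ 2 * ‖x i - x j‖ ^ 2))).PosDef := by
  refine ⟨gauss_qf_pos ε hε x hx c hc, ?_, ?_⟩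
  · ext i j
    simp only [Matrix.conjTranspose_apply, Matrix.of_apply, star_trivial]
    rw [norm_sub_rev]
  · intro v hv
    have h := gauss_qf_pos ε hε x hx v (fun h0 => hv (Finsupp.ext (congrFun h0)))
    have heq : (v.sum fun i xi => v.sum fun j xj => star xi * (Matrix.of fun i j =>
        Real.exp (-(ε ^ 2 * ‖x i - x j‖ ^ 2))) i j * xj)
        = ∑ i, ∑ j, v i * v j * Real.exp (-(ε ^ 2 * ‖x i - x j‖ ^ 2)) := by
      rw [Finsupp.sum_fintype _ _ (by simp)]
      refine Finset.sum_congr rfl fun i _ => ?_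
      rw [Finsupp.sum_fintype _ _ (by simp)]
      refine Finset.sum_congr rfl fun j _ => ?_
      simp only [Matrix.of_apply, star_trivial]
      ring
    rw [heq]
    exact h
end

section
/- For every dimension d ≥ 1, every shape parameter ε > 0, every n ≥ 1, every family of pairwise distinct points x_1, …, x_n ∈ ℝ^d, and every nonzero vector c ∈ ℝ^n, one has Σ_{i,j} c_i c_j · (1 + ε²‖x_i − x_j‖²)^{−1/2} > 0; that is, the inverse multiquadric kernel is strictly positive definite on ℝ^d, and in particular the interpolation matrix A with A_{ij} = (1 + ε²‖x_i − x_j‖²)^{−1/2} is positive definite. -/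
open MeasureTheory Real Set Finset Filter

private lemma inner_pow_quadform_nonneg {d n : ℕ} (k : ℕ)
    (y : Fin n → EuclideanSpace ℝ (Fin d)) (h : Fin n → ℝ) :
    0 ≤ ∑ i, ∑ j, h i * h j * (inner ℝ (y i) (y j) : ℝ) ^ k := by
  have hin : ∀ i j : Fin n, (inner ℝ (y i) (y j) : ℝ) ^ k
      = ∑ p : Fin k → Fin d, (∏ l, y i (p l)) * (∏ l, y j (p l)) := by
    intro i j
    have hii : (inner ℝ (y i) (y j) : ℝ) = ∑ m, y i m * y j m := by
      simp [PiLp.inner_apply, RCLike.inner_apply, conj_trivial, mul_comm]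
    rw [hii, Fintype.sum_pow]
    exact Finset.sum_congr rfl fun p _ => by rw [Finset.prod_mul_distrib]
  rw [← Fintype.sum_prod_type']
  simp_rw [hin, Finset.mul_sum]
  rw [Finset.sum_comm]
  refine Finset.sum_nonneg fun p _ => ?_
  have hsq : ∑ q : Fin n × Fin n, h q.1 * h q.2 * ((∏ l, y q.1 (p l)) * ∏ l, y q.2 (p l))
      = (∑ i, h i * ∏ l, y i (p l)) ^ 2 := by
    rw [sq, Finset.sum_mul_sum, ← Fintype.sum_prod_type']
    exact Finset.sum_congr rfl fun q _ => by ring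
  rw [hsq]
  exact sq_nonneg _

private lemma gaussian_psd {d n : ℕ} (a : ℝ) (ha : 0 ≤ a)
    (y : Fin n → EuclideanSpace ℝ (Fin d)) (g : Fin n → ℝ) :
    0 ≤ ∑ i, ∑ j, g i * g j * Real.exp (-(a * ‖y i - y j‖ ^ 2)) := by
  have hsplit : ∀ i j : Fin n, g i * g j * Real.exp (-(a * ‖y i - y j‖ ^ 2))
      = (g i * Real.exp (-(a * ‖y i‖ ^ 2))) * (g j * Real.exp (-(a * ‖y j‖ ^ 2)))
        * Real.exp (2 * a * (inner ℝ (y i) (y j) : ℝ)) := by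
    intro i j
    rw [norm_sub_sq_real, show -(a * (‖y i‖ ^ 2 - 2 * (inner ℝ (y i) (y j) : ℝ) + ‖y j‖ ^ 2))
        = -(a * ‖y i‖ ^ 2) + -(a * ‖y j‖ ^ 2) + 2 * a * (inner ℝ (y i) (y j) : ℝ) by ring,
      Real.exp_add, Real.exp_add]
    ring
  simp_rw [hsplit]
  set h : Fin n → ℝ := fun i => g i * Real.exp (-(a * ‖y i‖ ^ 2)) with hh
  have hexp : ∀ s : ℝ, Real.exp (2 * a * s) = ∑' k : ℕ, (2 * a * s) ^ k / Nat.factorial k := by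
    intro s
    rw [Real.exp_eq_exp_ℝ, NormedSpace.exp_eq_tsum_div]
  simp_rw [hexp, ← tsum_mul_left, ← Fintype.sum_prod_type']
  rw [← Summable.tsum_finsetSum (f := fun (q : Fin n × Fin n) (k : ℕ) =>
      h q.1 * h q.2 * ((2 * a * (inner ℝ (y q.1) (y q.2) : ℝ)) ^ k / Nat.factorial k))
    (fun q _ => (Real.summable_pow_div_factorial _).mul_left _)]
  refine tsum_nonneg fun k => ?_
  have hterm : ∀ q : Fin n × Fin n,
      h q.1 * h q.2 * ((2 * a * (inner ℝ (y q.1) (y q.2) : ℝ)) ^ k / Nat.factorial k)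
      = ((2 * a) ^ k / Nat.factorial k) * (h q.1 * h q.2 * (inner ℝ (y q.1) (y q.2) : ℝ) ^ k) := by
    intro q
    rw [mul_pow]
    ring
  simp_rw [hterm]
  rw [← Finset.mul_sum]
  refine mul_nonneg (by positivity) ?_
  rw [Fintype.sum_prod_type]
  exact inner_pow_quadform_nonneg k y h

private lemma imq_quadform_pos (d : ℕ) (ε : ℝ) (hε : 0 < ε) (n : ℕ)
    (x : Fin n → EuclideanSpace ℝ (Fin d)) (hx : Function.Injective x)
    (c : Fin n → ℝ) (hc : c ≠ 0) :
    0 < ∑ i, ∑ j, c i * c j * (1 / Real.sqrt (1 + ε ^ 2 * ‖x i - x j‖ ^ 2)) := by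
  classical
  set A : Fin n → Fin n → ℝ := fun i j => 1 + ε ^ 2 * ‖x i - x j‖ ^ 2 with hAdef
  have hA1 : ∀ i j, 1 ≤ A i j := fun i j => le_add_of_nonneg_right (by positivity)
  have hA0 : ∀ i j, 0 < A i j := fun i j => lt_of_lt_of_le one_pos (hA1 i j)
  have hπ : 0 < Real.sqrt π := Real.sqrt_pos.mpr Real.pi_pos
  -- integral representation of 1/sqrt
  have hrep : ∀ i j, 1 / Real.sqrt (A i j)
      = (Real.sqrt π)⁻¹ * ∫ t in Ioi (0 : ℝ),
          t ^ ((1 : ℝ) / 2 - 1) * Real.exp (-(A i j * t)) := by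
    intro i j
    rw [Real.integral_rpow_mul_exp_neg_mul_Ioi (by norm_num) (hA0 i j),
      Real.Gamma_one_half_eq, ← Real.sqrt_eq_rpow, show (1:ℝ)/A i j = (A i j)⁻¹ from one_div _, Real.sqrt_inv]
    have h1 : Real.sqrt (A i j) ≠ 0 := (Real.sqrt_pos.mpr (hA0 i j)).ne'
    field_simp
  -- integrability
  have hint : ∀ i j, IntegrableOn
      (fun t : ℝ => t ^ ((1 : ℝ) / 2 - 1) * Real.exp (-(A i j * t))) (Ioi 0) := by
    intro i j
    refine (Real.GammaIntegral_convergent (by norm_num : (0:ℝ) < 1/2)).mono' ?_ ?_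
    · apply Measurable.aestronglyMeasurable
      fun_prop
    · rw [ae_restrict_iff' measurableSet_Ioi]
      refine Eventually.of_forall fun t ht => ?_
      have ht0 : (0:ℝ) < t := ht
      have h1 : Real.exp (-(A i j * t)) ≤ Real.exp (-t) := by
        apply Real.exp_le_exp.mpr
        nlinarith [hA1 i j]
      have h2 : (0:ℝ) ≤ t ^ ((1:ℝ)/2 - 1) := Real.rpow_nonneg ht0.le _
      rw [Real.norm_eq_abs, abs_of_nonneg (mul_nonneg h2 (Real.exp_pos _).le)]
      calc t ^ ((1:ℝ)/2 - 1) * Real.exp (-(A i j * t))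
          ≤ t ^ ((1:ℝ)/2 - 1) * Real.exp (-t) := mul_le_mul_of_nonneg_left h1 h2
        _ = Real.exp (-t) * t ^ ((1:ℝ)/2 - 1) := by ring
  -- the combined integrand
  set H : ℝ → ℝ := fun t => ∑ i, ∑ j,
      (c i * c j) * (t ^ ((1 : ℝ) / 2 - 1) * Real.exp (-(A i j * t))) with hHdef
  have hHint : Integrable H (volume.restrict (Ioi 0)) := by
    refine integrable_finset_sum _ fun i _ => integrable_finset_sum _ fun j _ => ?_
    exact (hint i j).const_mul _
  -- key identity
  have key : Real.sqrt π * (∑ i, ∑ j, c i * c j * (1 / Real.sqrt (A i j)))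
      = ∫ t in Ioi (0 : ℝ), H t := by
    rw [hHdef]
    rw [integral_finset_sum _ fun i _ =>
      integrable_finset_sum _ fun j _ => (hint i j).const_mul _]
    rw [Finset.mul_sum]
    refine Finset.sum_congr rfl fun i _ => ?_
    rw [integral_finset_sum _ fun j _ => (hint i j).const_mul _, Finset.mul_sum]
    refine Finset.sum_congr rfl fun j _ => ?_
    rw [integral_const_mul, hrep i j]
    have h1 : Real.sqrt π ≠ 0 := hπ.ne'
    field_simp
  -- Gaussian part
  set G : ℝ → ℝ := fun t => ∑ i, ∑ j,
      c i * c j * Real.exp (-((t * ε ^ 2) * ‖x i - x j‖ ^ 2)) with hGdef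
  have hHG : ∀ t : ℝ, H t = (t ^ ((1 : ℝ) / 2 - 1) * Real.exp (-t)) * G t := by
    intro t
    rw [hHdef, hGdef, Finset.mul_sum]
    refine Finset.sum_congr rfl fun i _ => ?_
    rw [Finset.mul_sum]
    refine Finset.sum_congr rfl fun j _ => ?_
    have hAe : -(A i j * t) = -t + -((t * ε ^ 2) * ‖x i - x j‖ ^ 2) := by
      rw [hAdef]; ring
    rw [hAe, Real.exp_add]
    ring
  have hGnonneg : ∀ t : ℝ, 0 ≤ t → 0 ≤ G t := fun t ht =>
    gaussian_psd (t * ε ^ 2) (by positivity) x c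
  have hHnonneg : ∀ t ∈ Ioi (0:ℝ), 0 ≤ H t := by
    intro t ht
    have ht0 : (0:ℝ) < t := ht
    rw [hHG t]
    exact mul_nonneg (mul_nonneg (Real.rpow_nonneg ht0.le _) (Real.exp_pos _).le)
      (hGnonneg t ht0.le)
  -- positivity of the sum of squares
  have hS : 0 < ∑ i, c i * c i := by
    obtain ⟨i0, hi0⟩ := Function.ne_iff.mp hc
    refine Finset.sum_pos' (fun i _ => mul_self_nonneg _)
      ⟨i0, Finset.mem_univ _, mul_self_pos.mpr (by simpa using hi0)⟩
  set S : ℝ := ∑ i, c i * c i with hSdef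
  -- G tends to S at infinity
  have hGtend : Tendsto G atTop (nhds S) := by
    have hSsum : S = ∑ i, ∑ j, (if i = j then c i * c j else 0) := by
      rw [hSdef]
      refine Finset.sum_congr rfl fun i _ => ?_
      simp
    rw [hGdef, hSsum]
    refine tendsto_finset_sum _ fun i _ => tendsto_finset_sum _ fun j _ => ?_
    by_cases hij : i = j
    · subst hij
      simp only [if_pos rfl, sub_self, norm_zero]
      have : ∀ t : ℝ, c i * c i * Real.exp (-((t * ε ^ 2) * (0:ℝ) ^ 2)) = c i * c i := by
        intro t; simp
      simp only [this]
      exact tendsto_const_nhds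
    · simp only [if_neg hij]
      have hxij : x i ≠ x j := fun hxx => hij (hx hxx)
      have h0 : 0 < ‖x i - x j‖ := by rwa [norm_pos_iff, sub_ne_zero]
      have hb : 0 < ε ^ 2 * ‖x i - x j‖ ^ 2 := by positivity
      have h1 : Tendsto (fun t : ℝ => t * (ε ^ 2 * ‖x i - x j‖ ^ 2)) atTop atTop :=
        Tendsto.atTop_mul_const hb tendsto_id
      have h2 : Tendsto (fun t : ℝ => Real.exp (-(t * (ε ^ 2 * ‖x i - x j‖ ^ 2))))
          atTop (nhds 0) :=
        Real.tendsto_exp_atBot.comp (tendsto_neg_atTop_atBot.comp h1)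
      have h4 := h2.const_mul (c i * c j)
      rw [mul_zero] at h4
      simpa only [mul_assoc] using h4
  obtain ⟨T, hT⟩ := eventually_atTop.mp
    (hGtend.eventually (eventually_gt_nhds (by linarith : S / 2 < S)))
  -- positivity of the integral
  have hpos : 0 < ∫ t in Ioi (0:ℝ), H t := by
    rw [integral_pos_iff_support_of_nonneg_ae
      ((ae_restrict_iff' measurableSet_Ioi).mpr (Eventually.of_forall hHnonneg)) hHint]
    have hsub : Ioi (max T 1) ⊆ Function.support H := by
      intro t ht
      have ht1 : (1:ℝ) < t := lt_of_le_of_lt (le_max_right _ _) ht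
      have htT : T ≤ t := le_of_lt (lt_of_le_of_lt (le_max_left _ _) ht)
      have hGt : S / 2 < G t := hT t htT
      have ht0 : (0:ℝ) < t := lt_trans one_pos ht1
      have hHt : 0 < H t := by
        rw [hHG t]
        exact mul_pos (mul_pos (Real.rpow_pos_of_pos ht0 _) (Real.exp_pos _))
          (by linarith)
      exact hHt.ne'
    calc (0:ENNReal) < (volume.restrict (Ioi 0)) (Ioi (max T 1)) := by
          rw [Measure.restrict_apply measurableSet_Ioi,
            Set.inter_eq_self_of_subset_left (Set.Ioi_subset_Ioi (by positivity)),
            Real.volume_Ioi]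
          simp
      _ ≤ (volume.restrict (Ioi 0)) (Function.support H) := measure_mono hsub
  rw [← key] at hpos
  nlinarith [hπ, hpos]

/-- The inverse multiquadric kernel `Φ(x) = (1 + ε²‖x‖²)^{−1/2}` is strictly positive
definite on `ℝ^d`: for pairwise distinct points `x_1, …, x_n` and every nonzero
`c ∈ ℝ^n`, the quadratic form `Σ_{i,j} c_i c_j (1 + ε²‖x_i − x_j‖²)^{−1/2}` is positive;
in particular the IMQ interpolation matrix is positive definite. -/
theorem inverse_multiquadric_strictly_pos_def (d : ℕ) (hd : 1 ≤ d) (ε : ℝ) (hε : 0 < ε)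
    (n : ℕ) (hn : 1 ≤ n) (x : Fin n → EuclideanSpace ℝ (Fin d))
    (hx : Function.Injective x) (c : Fin n → ℝ) (hc : c ≠ 0) :
    0 < ∑ i, ∑ j, c i * c j * (1 / Real.sqrt (1 + ε ^ 2 * ‖x i - x j‖ ^ 2)) ∧
    (Matrix.of fun i j => 1 / Real.sqrt (1 + ε ^ 2 * ‖x i - x j‖ ^ 2)).PosDef := by
  constructor
  · exact imq_quadform_pos d ε hε n x hx c hc
  · rw [Matrix.posDef_iff_dotProduct_mulVec]
    constructor
    · ext i j
      simp only [Matrix.conjTranspose_apply, Matrix.of_apply, star_trivial]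
      rw [norm_sub_rev]
    · intro v hv
      have h := imq_quadform_pos d ε hε n x hx v hv
      have hdot : dotProduct (star v) ((Matrix.of fun i j =>
          1 / Real.sqrt (1 + ε ^ 2 * ‖x i - x j‖ ^ 2)).mulVec v)
          = ∑ i, ∑ j, v i * v j * (1 / Real.sqrt (1 + ε ^ 2 * ‖x i - x j‖ ^ 2)) := by
        simp only [dotProduct, Matrix.mulVec, star_trivial, Matrix.of_apply,
          Finset.mul_sum]
        exact Finset.sum_congr rfl fun i _ => Finset.sum_congr rfl fun j _ => by ring
      rw [hdot]
      exact h
end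

section
/- For every dimension d ≥ 1, every n ≥ 1, every family of pairwise distinct points x_1, …, x_n ∈ ℝ^d, and every nonzero vector c ∈ ℝ^n satisfying Σ_i c_i = 0 and Σ_i c_i x_i = 0 (equivalently, Σ_i c_i p(x_i) = 0 for every polynomial p of total degree at most 1), one has Σ_{i,j} c_i c_j ‖x_i − x_j‖³ > 0; that is, the cubic radial kernel φ(x) = ‖x‖³ is strictly conditionally positive definite of order 2 on ℝ^d. -/
open MeasureTheory Real Set

-- f s = exp(-s) - 1 + s
lemma cubicAux_nonneg {s : ℝ} : 0 ≤ Real.exp (-s) - 1 + s := by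
  have := Real.add_one_le_exp (-s)
  linarith

lemma cubicAux_pos {s : ℝ} (hs : s ≠ 0) : 0 < Real.exp (-s) - 1 + s := by
  have := Real.add_one_lt_exp (neg_ne_zero.mpr hs)
  linarith

lemma cubicAux_le_self {s : ℝ} (hs : 0 ≤ s) : Real.exp (-s) - 1 + s ≤ s := by
  nlinarith [Real.exp_le_one_iff.mpr (neg_nonpos.mpr hs)]

lemma cubicAux_le_sq {s : ℝ} (hs : 0 ≤ s) : Real.exp (-s) - 1 + s ≤ s ^ 2 / 2 := by
  have key : ∀ t : ℝ, 0 ≤ t → Real.exp (-t) ≤ 1 - t + t ^ 2 / 2 := by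
    intro t ht
    have h1 : ∀ u ∈ Set.Icc (0:ℝ) t, HasDerivAt (fun y => 1 - y + y ^ 2 / 2 - Real.exp (-y))
        (-1 + u + Real.exp (-u)) u := by
      intro u _
      have : HasDerivAt (fun y : ℝ => Real.exp (-y)) (-Real.exp (-u)) u := by
        simpa [Function.comp_def] using (Real.hasDerivAt_exp (-u)).comp u ((hasDerivAt_id u).neg)
      have h2 : HasDerivAt (fun y : ℝ => 1 - y + y ^ 2 / 2) (-1 + u) u := by
        have := ((hasDerivAt_id u).const_sub 1).add
          (((hasDerivAt_pow 2 u)).div_const 2)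
        simpa [mul_comm, Pi.add_def] using this
      simpa [Pi.sub_def] using h2.sub this
    have h0 : (fun y : ℝ => 1 - y + y ^ 2 / 2 - Real.exp (-y)) 0 = 0 := by simp
    have mono : MonotoneOn (fun y : ℝ => 1 - y + y ^ 2 / 2 - Real.exp (-y)) (Set.Icc 0 t) := by
      apply monotoneOn_of_deriv_nonneg (convex_Icc 0 t)
      · exact (Continuous.continuousOn (by continuity))
      · intro u hu
        rw [interior_Icc] at hu
        exact (h1 u ⟨hu.1.le, hu.2.le⟩).differentiableAt.differentiableWithinAt
      · intro u hu
        rw [interior_Icc] at hu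
        rw [HasDerivAt.deriv (h1 u ⟨hu.1.le, hu.2.le⟩)]
        have := Real.add_one_le_exp (-u)
        linarith
    rcases eq_or_lt_of_le ht with h | h
    · simp [← h]
    · have := mono ⟨le_refl 0, ht⟩ ⟨ht, le_refl t⟩ ht
      rw [h0] at this
      linarith
  have := key s hs
  linarith

lemma cubicAux_integrable {r : ℝ} (hr : 0 ≤ r) :
    IntegrableOn (fun t : ℝ => (Real.exp (-(t * r)) - 1 + t * r) * t ^ (-(5/2) : ℝ))
      (Ioi 0) := by
  have hmeas : AEStronglyMeasurable
      (fun t : ℝ => (Real.exp (-(t * r)) - 1 + t * r) * t ^ (-(5/2) : ℝ)) (volume.restrict (Ioi (0:ℝ))) := by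
    refine ContinuousOn.aestronglyMeasurable (fun t ht => ?_) measurableSet_Ioi
    apply ContinuousWithinAt.mul
    · exact (((Real.continuous_exp.comp ((continuous_id.mul continuous_const).neg)).sub
        continuous_const).add (continuous_id.mul continuous_const)).continuousWithinAt
    · exact (Real.continuousAt_rpow_const t _ (Or.inl (ne_of_gt ht))).continuousWithinAt
  have key : Ioi (0:ℝ) = Ioc (0:ℝ) 1 ∪ Ioi 1 := (Ioc_union_Ioi_eq_Ioi zero_le_one).symm
  rw [key]
  apply IntegrableOn.union
  · -- on Ioc 0 1, dominate by (r^2/2) * t^(-1/2)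
    have hg : IntegrableOn (fun t : ℝ => r ^ 2 / 2 * t ^ (-(1/2) : ℝ)) (Ioc (0:ℝ) 1) := by
      apply Integrable.const_mul
      exact (intervalIntegrable_iff_integrableOn_Ioc_of_le zero_le_one).mp
        (intervalIntegral.intervalIntegrable_rpow' (by norm_num))
    apply Integrable.mono' hg (hmeas.mono_measure (Measure.restrict_mono (by rw [key]; exact subset_union_left) le_rfl))
    filter_upwards [ae_restrict_mem measurableSet_Ioc] with t ht
    have ht0 : 0 < t := ht.1
    have h1 : 0 ≤ (Real.exp (-(t * r)) - 1 + t * r) * t ^ (-(5/2) : ℝ) :=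
      mul_nonneg cubicAux_nonneg (Real.rpow_nonneg ht0.le _)
    rw [Real.norm_eq_abs, abs_of_nonneg h1]
    have hb : Real.exp (-(t * r)) - 1 + t * r ≤ (t * r) ^ 2 / 2 :=
      cubicAux_le_sq (mul_nonneg ht0.le hr)
    have h2 : (t * r) ^ 2 / 2 * t ^ (-(5/2) : ℝ) = r ^ 2 / 2 * (t ^ (2:ℝ) * t ^ (-(5/2) : ℝ)) := by
      rw [mul_pow, Real.rpow_two]; ring
    have h3 : t ^ (2:ℝ) * t ^ (-(5/2) : ℝ) = t ^ (-(1/2) : ℝ) := by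
      rw [← Real.rpow_add ht0]; norm_num
    calc (Real.exp (-(t * r)) - 1 + t * r) * t ^ (-(5/2) : ℝ)
        ≤ (t * r) ^ 2 / 2 * t ^ (-(5/2) : ℝ) := by
          apply mul_le_mul_of_nonneg_right hb (Real.rpow_nonneg ht0.le _)
      _ = r ^ 2 / 2 * t ^ (-(1/2) : ℝ) := by rw [h2, h3]
  · -- on Ioi 1, dominate by r * t^(-3/2)
    have hg : IntegrableOn (fun t : ℝ => r * t ^ (-(3/2) : ℝ)) (Ioi (1:ℝ)) := by
      apply Integrable.const_mul
      exact integrableOn_Ioi_rpow_of_lt (by norm_num) zero_lt_one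
    apply Integrable.mono' hg (hmeas.mono_measure (Measure.restrict_mono (by rw [key]; exact subset_union_right) le_rfl))
    filter_upwards [ae_restrict_mem measurableSet_Ioi] with t ht
    have ht0 : (0:ℝ) < t := lt_trans zero_lt_one ht
    have h1 : 0 ≤ (Real.exp (-(t * r)) - 1 + t * r) * t ^ (-(5/2) : ℝ) :=
      mul_nonneg cubicAux_nonneg (Real.rpow_nonneg ht0.le _)
    rw [Real.norm_eq_abs, abs_of_nonneg h1]
    have hb : Real.exp (-(t * r)) - 1 + t * r ≤ t * r :=
      cubicAux_le_self (mul_nonneg ht0.le hr)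
    have h3 : t ^ (1:ℝ) * t ^ (-(5/2) : ℝ) = t ^ (-(3/2) : ℝ) := by
      rw [← Real.rpow_add ht0]; norm_num
    calc (Real.exp (-(t * r)) - 1 + t * r) * t ^ (-(5/2) : ℝ)
        ≤ t * r * t ^ (-(5/2) : ℝ) :=
          mul_le_mul_of_nonneg_right hb (Real.rpow_nonneg ht0.le _)
      _ = r * (t ^ (1:ℝ) * t ^ (-(5/2) : ℝ)) := by rw [Real.rpow_one]; ring
      _ = r * t ^ (-(3/2) : ℝ) := by rw [h3]

lemma cubicAux_setIntegral_pos {g : ℝ → ℝ}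
    (hg : IntegrableOn g (Ioi (0:ℝ))) (hpos : ∀ t ∈ Ioi (0:ℝ), 0 < g t) :
    0 < ∫ t in Ioi (0:ℝ), g t := by
  rw [setIntegral_pos_iff_support_of_nonneg_ae _ hg]
  · have hsub : Ioi (0:ℝ) ⊆ Function.support g ∩ Ioi 0 :=
      fun t ht => ⟨ne_of_gt (hpos t ht), ht⟩
    have h1 : (0:ENNReal) < volume (Ioi (0:ℝ)) := by simp [Real.volume_Ioi]
    exact lt_of_lt_of_le h1 (measure_mono hsub)
  · filter_upwards [ae_restrict_mem measurableSet_Ioi] with t ht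
    exact (hpos t ht).le

lemma cubicAux_C_pos : 0 < ∫ t in Ioi (0:ℝ),
    (Real.exp (-(t * 1)) - 1 + t * 1) * t ^ (-(5/2) : ℝ) := by
  apply cubicAux_setIntegral_pos (cubicAux_integrable zero_le_one)
  intro t ht
  have ht' : (0:ℝ) < t := ht
  exact mul_pos (cubicAux_pos (by nlinarith)) (Real.rpow_pos_of_pos ht' _)

lemma cubicAux_repr {r : ℝ} (hr : 0 < r) :
    ∫ t in Ioi (0:ℝ), (Real.exp (-(t * r)) - 1 + t * r) * t ^ (-(5/2) : ℝ)
      = r ^ ((3:ℝ)/2) * ∫ t in Ioi (0:ℝ), (Real.exp (-(t * 1)) - 1 + t * 1) * t ^ (-(5/2) : ℝ) := by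
  set G : ℝ → ℝ := fun u => (Real.exp (-u) - 1 + u) * u ^ (-(5/2) : ℝ) with hG
  have key : Set.EqOn (fun t : ℝ => (Real.exp (-(t * r)) - 1 + t * r) * t ^ (-(5/2) : ℝ))
      (fun t : ℝ => r ^ ((5:ℝ)/2) * G (r * t)) (Ioi (0:ℝ)) := by
    intro t ht
    have ht' : (0:ℝ) < t := ht
    have h1 : (r * t) ^ (-(5/2) : ℝ) = r ^ (-(5/2) : ℝ) * t ^ (-(5/2) : ℝ) :=
      Real.mul_rpow hr.le ht'.le
    have h2 : r ^ ((5:ℝ)/2) * r ^ (-(5/2) : ℝ) = 1 := by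
      rw [← Real.rpow_add hr]; norm_num
    show (Real.exp (-(t * r)) - 1 + t * r) * t ^ (-(5/2) : ℝ)
      = r ^ ((5:ℝ)/2) * ((Real.exp (-(r * t)) - 1 + r * t) * (r * t) ^ (-(5/2) : ℝ))
    rw [h1, mul_comm t r]
    linear_combination (-((Real.exp (-(r * t)) - 1 + r * t) * t ^ (-(5/2) : ℝ))) * h2
  rw [setIntegral_congr_fun measurableSet_Ioi key]
  rw [integral_const_mul]
  rw [integral_comp_mul_left_Ioi G 0 hr]
  have hC : ∫ t in Ioi (0:ℝ), (Real.exp (-(t * 1)) - 1 + t * 1) * t ^ (-(5/2) : ℝ)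
      = ∫ t in Ioi (r * 0), G t := by
    rw [mul_zero]
    apply setIntegral_congr_fun measurableSet_Ioi
    intro t _
    simp [hG]
  rw [hC, smul_eq_mul, ← mul_assoc]
  congr 1
  rw [← Real.rpow_neg_one r, ← Real.rpow_add hr]
  norm_num

open scoped RealInnerProductSpace in
lemma sep_lemma {d n : ℕ} (x : Fin n → EuclideanSpace ℝ (Fin d)) (hx : Function.Injective x)
    (a : Fin n → ℝ)
    (h : ∀ (k : ℕ) (p : Fin k → Fin d), ∑ i, a i * ∏ l, x i (p l) = 0) : a = 0 := by
  -- Step 1: the exponential sums vanish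
  have step1 : ∀ y : EuclideanSpace ℝ (Fin d), ∑ i, a i * Real.exp ⟪x i, y⟫ = 0 := by
    intro y
    have hexp : ∀ i : Fin n, a i * Real.exp ⟪x i, y⟫
        = ∑' k : ℕ, a i * (⟪x i, y⟫ ^ k / (Nat.factorial k : ℝ)) := by
      intro i
      rw [Real.exp_eq_exp_ℝ, NormedSpace.exp_eq_tsum_div, ← tsum_mul_left]
    rw [Finset.sum_congr rfl (fun i _ => hexp i)]
    rw [← Summable.tsum_finsetSum (fun i _ => (Real.summable_pow_div_factorial _).mul_left (a i))]
    have hzero : ∀ k : ℕ, ∑ i, a i * (⟪x i, y⟫ ^ k / (Nat.factorial k : ℝ)) = 0 := by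
      intro k
      have hinner : ∀ i : Fin n, ⟪x i, y⟫ ^ k
          = ∑ p : Fin k → Fin d, (∏ l, x i (p l)) * ∏ l, y (p l) := by
        intro i
        have : ⟪x i, y⟫ = ∑ m, x i m * y m := by
          simp [PiLp.inner_apply, RCLike.inner_apply, conj_trivial]
          exact Finset.sum_congr rfl fun _ _ => mul_comm _ _
        rw [this, Fintype.sum_pow]
        exact Finset.sum_congr rfl fun p _ => by rw [← Finset.prod_mul_distrib]
      have key : ∑ i, a i * ⟪x i, y⟫ ^ k
          = ∑ p : Fin k → Fin d, (∏ l, y (p l)) * ∑ i, a i * ∏ l, x i (p l) := by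
        simp_rw [hinner, Finset.mul_sum]
        rw [Finset.sum_comm]
        refine Finset.sum_congr rfl fun p _ => Finset.sum_congr rfl fun i _ => by ring
      have key2 : ∑ i, a i * ⟪x i, y⟫ ^ k = 0 := by
        rw [key, Finset.sum_congr rfl fun p _ => by rw [h k p, mul_zero], Finset.sum_const,
          smul_zero]
      calc ∑ i, a i * (⟪x i, y⟫ ^ k / (Nat.factorial k : ℝ))
          = (∑ i, a i * ⟪x i, y⟫ ^ k) / (Nat.factorial k : ℝ) := by
            rw [Finset.sum_div]
            exact Finset.sum_congr rfl fun i _ => by ring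
        _ = 0 := by rw [key2, zero_div]
    rw [tsum_congr hzero]
    simp
  -- Step 2: Dedekind's independence of characters
  have hne : ∀ i j : Fin n, i ≠ j → x i ≠ x j := fun i j hij => fun hxx => hij (hx hxx)
  let χ : Fin n → (Multiplicative (EuclideanSpace ℝ (Fin d)) →* ℝ) := fun i =>
    { toFun := fun y => Real.exp ⟪x i, Multiplicative.toAdd y⟫
      map_one' := by simp
      map_mul' := fun y z => by
        rw [← Real.exp_add, ← inner_add_right]
        rfl }
  have hχinj : Function.Injective χ := by
    intro i j hij
    by_contra hne'
    have hxij : x i ≠ x j := hne i j hne'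
    have := DFunLike.congr_fun hij (Multiplicative.ofAdd (x i - x j))
    simp only [χ, MonoidHom.coe_mk, OneHom.coe_mk, toAdd_ofAdd] at this
    have h2 := Real.exp_injective this
    rw [inner_sub_right, inner_sub_right] at h2
    have h3 : ⟪x i - x j, x i - x j⟫ = 0 := by
      rw [inner_sub_left, inner_sub_right, inner_sub_right]
      linarith [real_inner_comm (x i) (x j)]
    exact hxij (sub_eq_zero.mp (inner_self_eq_zero.mp h3))
  have li : LinearIndependent ℝ (fun i => ((χ i : Multiplicative (EuclideanSpace ℝ (Fin d)) →* ℝ) :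
      Multiplicative (EuclideanSpace ℝ (Fin d)) → ℝ)) :=
    (linearIndependent_monoidHom (Multiplicative (EuclideanSpace ℝ (Fin d))) ℝ).comp χ hχinj
  have hsum : ∑ i, a i • ((χ i : Multiplicative (EuclideanSpace ℝ (Fin d)) →* ℝ) :
      Multiplicative (EuclideanSpace ℝ (Fin d)) → ℝ) = 0 := by
    funext y
    have := step1 (Multiplicative.toAdd y)
    simpa [χ, Finset.sum_apply] using this
  funext i
  exact (Fintype.linearIndependent_iff.mp li a hsum) i

open scoped RealInnerProductSpace in
lemma gaussian_strict_pd {d n : ℕ} (x : Fin n → EuclideanSpace ℝ (Fin d))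
    (hx : Function.Injective x) (c : Fin n → ℝ) (hc : c ≠ 0) {t : ℝ} (ht : 0 < t) :
    0 < ∑ i, ∑ j, c i * c j * Real.exp (-(t * ‖x i - x j‖ ^ 2)) := by
  set a : Fin n → ℝ := fun i => c i * Real.exp (-(t * ‖x i‖ ^ 2)) with ha
  set g : ℕ → ℝ := fun k => (2*t) ^ k / (Nat.factorial k : ℝ)
    * ∑ p : Fin k → Fin d, (∑ i, a i * ∏ l, x i (p l)) ^ 2 with hg
  have hinner : ∀ (i j : Fin n) (k : ℕ), ⟪x i, x j⟫ ^ k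
      = ∑ p : Fin k → Fin d, (∏ l, x i (p l)) * ∏ l, x j (p l) := by
    intro i j k
    have : ⟪x i, x j⟫ = ∑ m, x i m * x j m := by
      simp [PiLp.inner_apply, RCLike.inner_apply, conj_trivial]
      exact Finset.sum_congr rfl fun _ _ => mul_comm _ _
    rw [this, Fintype.sum_pow]
    exact Finset.sum_congr rfl fun p _ => by rw [← Finset.prod_mul_distrib]
  -- rewrite the Gaussian kernel
  have hexp_eq : ∀ i j, c i * c j * Real.exp (-(t * ‖x i - x j‖ ^ 2))
      = a i * a j * Real.exp (2*t*⟪x i, x j⟫) := by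
    intro i j
    have hsq : Real.exp (-(t * ‖x i - x j‖ ^ 2)) = Real.exp (-(t * ‖x i‖ ^ 2))
        * Real.exp (-(t * ‖x j‖ ^ 2)) * Real.exp (2*t*⟪x i, x j⟫) := by
      rw [← Real.exp_add, ← Real.exp_add]
      congr 1
      have := norm_sub_sq_real (x i) (x j)
      rw [this]; ring
    rw [hsq, ha]; ring
  -- the k-th coefficient computation
  have hk : ∀ k : ℕ, ∑ i, ∑ j, a i * a j * ((2*t*⟪x i, x j⟫) ^ k / (Nat.factorial k : ℝ))
      = g k := by
    intro k
    have step : ∑ i, ∑ j, a i * a j * ⟪x i, x j⟫ ^ k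
        = ∑ p : Fin k → Fin d, (∑ i, a i * ∏ l, x i (p l)) ^ 2 := by
      calc ∑ i, ∑ j, a i * a j * ⟪x i, x j⟫ ^ k
          = ∑ i, ∑ p : Fin k → Fin d, ∑ j, (a i * ∏ l, x i (p l)) * (a j * ∏ l, x j (p l)) := by
            refine Finset.sum_congr rfl fun i _ => ?_
            rw [Finset.sum_comm]
            refine Finset.sum_congr rfl fun j _ => ?_
            rw [hinner i j k, Finset.mul_sum]
            exact Finset.sum_congr rfl fun p _ => by ring
        _ = ∑ p : Fin k → Fin d, ∑ i, ∑ j, (a i * ∏ l, x i (p l)) * (a j * ∏ l, x j (p l)) :=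
            Finset.sum_comm
        _ = ∑ p : Fin k → Fin d, (∑ i, a i * ∏ l, x i (p l)) ^ 2 := by
            refine Finset.sum_congr rfl fun p _ => ?_
            rw [sq, Finset.sum_mul_sum]
    calc ∑ i, ∑ j, a i * a j * ((2*t*⟪x i, x j⟫) ^ k / (Nat.factorial k : ℝ))
        = (2*t) ^ k / (Nat.factorial k : ℝ) * ∑ i, ∑ j, a i * a j * ⟪x i, x j⟫ ^ k := by
          rw [Finset.mul_sum]
          refine Finset.sum_congr rfl fun i _ => ?_
          rw [Finset.mul_sum]
          refine Finset.sum_congr rfl fun j _ => ?_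
          rw [mul_pow]
          ring
      _ = g k := by rw [step, hg]
  -- the tsum identity
  have claim1 : ∑ i, ∑ j, c i * c j * Real.exp (-(t * ‖x i - x j‖ ^ 2)) = ∑' k : ℕ, g k := by
    rw [Finset.sum_congr rfl fun i _ => Finset.sum_congr rfl fun j _ => hexp_eq i j]
    have hterm : ∀ i j : Fin n, a i * a j * Real.exp (2*t*⟪x i, x j⟫)
        = ∑' k : ℕ, a i * a j * ((2*t*⟪x i, x j⟫) ^ k / (Nat.factorial k : ℝ)) := by
      intro i j
      rw [Real.exp_eq_exp_ℝ, NormedSpace.exp_eq_tsum_div, ← tsum_mul_left]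
    rw [Finset.sum_congr rfl fun i _ => Finset.sum_congr rfl fun j _ => hterm i j]
    rw [Finset.sum_congr rfl fun i (_ : i ∈ Finset.univ) =>
      (Summable.tsum_finsetSum (f := fun j k => a i * a j * ((2*t*⟪x i, x j⟫) ^ k / (Nat.factorial k : ℝ)))
        (fun j _ => (Real.summable_pow_div_factorial _).mul_left _)).symm]
    rw [← Summable.tsum_finsetSum (fun i _ => summable_sum
      (fun j _ => (Real.summable_pow_div_factorial (2*t*⟪x i, x j⟫)).mul_left (a i * a j)))]
    exact tsum_congr hk
  have claim2 : ∀ k, 0 ≤ g k := by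
    intro k
    apply mul_nonneg
    · apply div_nonneg (pow_nonneg (by linarith) k) (Nat.cast_nonneg _)
    · exact Finset.sum_nonneg fun p _ => sq_nonneg _
  have claim3 : Summable g := by
    have : Summable (fun k : ℕ => ∑ i, ∑ j : Fin n,
        a i * a j * ((2*t*⟪x i, x j⟫) ^ k / (Nat.factorial k : ℝ))) :=
      summable_sum (fun i _ => summable_sum
        (fun j _ => (Real.summable_pow_div_factorial _).mul_left _))
    exact this.congr hk
  -- find a positive term
  have claim4 : ∃ (k : ℕ) (p : Fin k → Fin d), ∑ i, a i * ∏ l, x i (p l) ≠ 0 := by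
    by_contra hcon
    push_neg at hcon
    have := sep_lemma x hx a (fun k p => hcon k p)
    obtain ⟨i0, hi0⟩ := Function.ne_iff.mp hc
    have : a i0 = 0 := by rw [this]; rfl
    exact hi0 (by
      have := mul_eq_zero.mp this
      rcases this with h | h
      · exact h
      · exact absurd h (Real.exp_ne_zero _))
  obtain ⟨k, p, hS⟩ := claim4
  have hgk : 0 < g k := by
    apply mul_pos
    · exact div_pos (pow_pos (by linarith) k) (Nat.cast_pos.mpr (Nat.factorial_pos k))
    · calc (0:ℝ) < (∑ i, a i * ∏ l, x i (p l)) ^ 2 := by positivity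
        _ ≤ ∑ p' : Fin k → Fin d, (∑ i, a i * ∏ l, x i (p' l)) ^ 2 :=
          Finset.single_le_sum (f := fun p' : Fin k → Fin d =>
            (∑ i, a i * ∏ l, x i (p' l)) ^ 2) (fun p' _ => sq_nonneg _) (Finset.mem_univ p)
  rw [claim1]
  exact Summable.tsum_pos claim3 claim2 k hgk

lemma double_sum_add {n : ℕ} (f g : Fin n → Fin n → ℝ) :
    ∑ i, ∑ j, (f i j + g i j) = (∑ i, ∑ j, f i j) + ∑ i, ∑ j, g i j := by
  rw [← Finset.sum_add_distrib]
  exact Finset.sum_congr rfl fun i _ => Finset.sum_add_distrib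

lemma double_sum_mul_right {n : ℕ} (f : Fin n → Fin n → ℝ) (r : ℝ) :
    ∑ i, ∑ j, f i j * r = (∑ i, ∑ j, f i j) * r := by
  rw [Finset.sum_mul]
  exact Finset.sum_congr rfl fun i _ => (Finset.sum_mul _ _ _).symm

open scoped RealInnerProductSpace

/-- The cubic radial kernel `φ(x) = ‖x‖³` is strictly conditionally positive definite of
order 2 on `ℝ^d`: for pairwise distinct points `x_1, …, x_n` and every nonzero `c ∈ ℝ^n`
with `Σ_i c_i = 0` and `Σ_i c_i x_i = 0`, one has `Σ_{i,j} c_i c_j ‖x_i − x_j‖³ > 0`. -/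
theorem cubic_kernel_strictly_cond_pos_def_order_two (d : ℕ) (hd : 1 ≤ d)
    (n : ℕ) (hn : 1 ≤ n) (x : Fin n → EuclideanSpace ℝ (Fin d))
    (hx : Function.Injective x) (c : Fin n → ℝ) (hc : c ≠ 0)
    (hc0 : ∑ i, c i = 0) (hc1 : ∑ i, c i • x i = 0) :
    0 < ∑ i, ∑ j, c i * c j * ‖x i - x j‖ ^ 3 := by
  set C : ℝ := ∫ t in Ioi (0:ℝ), (Real.exp (-(t * 1)) - 1 + t * 1) * t ^ (-(5/2) : ℝ) with hCdef
  have hC : 0 < C := cubicAux_C_pos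
  -- Step A: integral representation of the cube of the norm
  have stepA : ∀ z : EuclideanSpace ℝ (Fin d),
      ∫ t in Ioi (0:ℝ), (Real.exp (-(t * ‖z‖ ^ 2)) - 1 + t * ‖z‖ ^ 2) * t ^ (-(5/2) : ℝ)
        = ‖z‖ ^ 3 * C := by
    intro z
    rcases eq_or_ne z 0 with rfl | hz
    · simp
    · have hr : 0 < ‖z‖ ^ 2 := by
        have : 0 < ‖z‖ := norm_pos_iff.mpr hz
        positivity
      rw [cubicAux_repr hr, ← hCdef]
      congr 1
      have h0 : (0:ℝ) ≤ ‖z‖ := norm_nonneg z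
      rw [← Real.rpow_natCast ‖z‖ 2, ← Real.rpow_mul h0, ← Real.rpow_natCast ‖z‖ 3]
      norm_num
  -- basic moment identities
  have E1 : ∑ i, ∑ j, c i * c j = 0 := by
    rw [← Finset.sum_mul_sum, hc0, zero_mul]
  have Einner : ∑ i, ∑ j, c i * c j * ⟪x i, x j⟫ = 0 := by
    have h0 : ⟪∑ i, c i • x i, ∑ j, c j • x j⟫ = (0:ℝ) := by rw [hc1, inner_zero_left]
    rw [sum_inner] at h0
    rw [← h0]
    refine Finset.sum_congr rfl fun i _ => ?_
    rw [real_inner_smul_left, inner_sum, Finset.mul_sum]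
    refine Finset.sum_congr rfl fun j _ => ?_
    rw [real_inner_smul_right]
    ring
  have EA : ∑ i, ∑ j, c i * c j * ‖x i‖ ^ 2 = 0 := by
    refine Finset.sum_eq_zero fun i _ => ?_
    rw [Finset.sum_congr rfl fun j _ => show c i * c j * ‖x i‖ ^ 2
      = c i * ‖x i‖ ^ 2 * c j from by ring, ← Finset.mul_sum, hc0, mul_zero]
  have EB : ∑ i, ∑ j, c i * c j * ‖x j‖ ^ 2 = 0 := by
    rw [Finset.sum_comm]
    refine Finset.sum_eq_zero fun j _ => ?_
    rw [Finset.sum_congr rfl fun i _ => show c i * c j * ‖x j‖ ^ 2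
      = c j * ‖x j‖ ^ 2 * c i from by ring, ← Finset.mul_sum, hc0, mul_zero]
  have E2 : ∑ i, ∑ j, c i * c j * ‖x i - x j‖ ^ 2 = 0 := by
    have expand : ∀ i j : Fin n, c i * c j * ‖x i - x j‖ ^ 2
        = c i * c j * ‖x i‖ ^ 2 + (c i * c j * ‖x j‖ ^ 2 + c i * c j * ⟪x i, x j⟫ * (-2)) := by
      intro i j
      rw [norm_sub_sq_real]
      ring
    rw [Finset.sum_congr rfl fun i _ => Finset.sum_congr rfl fun j _ => expand i j,
      double_sum_add, double_sum_add, double_sum_mul_right, EA, EB, Einner]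
    ring
  -- Step B: pointwise identity for the integrands
  have stepB : ∀ t : ℝ,
      ∑ i, ∑ j, c i * c j * ((Real.exp (-(t * ‖x i - x j‖ ^ 2)) - 1 + t * ‖x i - x j‖ ^ 2)
        * t ^ (-(5/2) : ℝ))
      = (∑ i, ∑ j, c i * c j * Real.exp (-(t * ‖x i - x j‖ ^ 2))) * t ^ (-(5/2) : ℝ) := by
    intro t
    have expand : ∀ i j : Fin n,
        c i * c j * ((Real.exp (-(t * ‖x i - x j‖ ^ 2)) - 1 + t * ‖x i - x j‖ ^ 2)
          * t ^ (-(5/2) : ℝ))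
        = (c i * c j * Real.exp (-(t * ‖x i - x j‖ ^ 2))) * t ^ (-(5/2) : ℝ)
          + ((c i * c j) * (-(t ^ (-(5/2) : ℝ)))
            + (c i * c j * ‖x i - x j‖ ^ 2) * (t * t ^ (-(5/2) : ℝ))) := by
      intro i j
      ring
    rw [Finset.sum_congr rfl fun i _ => Finset.sum_congr rfl fun j _ => expand i j,
      double_sum_add, double_sum_add, double_sum_mul_right, double_sum_mul_right,
      double_sum_mul_right, E1, E2]
    ring
  -- integrability of the summed integrand
  have hint : ∀ i j : Fin n, IntegrableOn (fun t : ℝ =>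
      c i * c j * ((Real.exp (-(t * ‖x i - x j‖ ^ 2)) - 1 + t * ‖x i - x j‖ ^ 2)
        * t ^ (-(5/2) : ℝ))) (Ioi (0:ℝ)) := fun i j =>
    (cubicAux_integrable (by positivity)).const_mul _
  have hFint : IntegrableOn (fun t : ℝ => ∑ i, ∑ j,
      c i * c j * ((Real.exp (-(t * ‖x i - x j‖ ^ 2)) - 1 + t * ‖x i - x j‖ ^ 2)
        * t ^ (-(5/2) : ℝ))) (Ioi (0:ℝ)) :=
    integrable_finset_sum _ fun i _ => integrable_finset_sum _ fun j _ => hint i j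
  -- the key integral identity
  have key : (∑ i, ∑ j, c i * c j * ‖x i - x j‖ ^ 3) * C
      = ∫ t in Ioi (0:ℝ), ∑ i, ∑ j,
          c i * c j * ((Real.exp (-(t * ‖x i - x j‖ ^ 2)) - 1 + t * ‖x i - x j‖ ^ 2)
            * t ^ (-(5/2) : ℝ)) := by
    rw [← double_sum_mul_right]
    rw [integral_finset_sum _ fun i _ => integrable_finset_sum _ fun j _ => hint i j]
    refine Finset.sum_congr rfl fun i _ => ?_
    rw [integral_finset_sum _ fun j _ => hint i j]
    refine Finset.sum_congr rfl fun j _ => ?_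
    rw [integral_const_mul, stepA (x i - x j)]
    ring
  -- positivity of the integral
  have pos : 0 < ∫ t in Ioi (0:ℝ), ∑ i, ∑ j,
      c i * c j * ((Real.exp (-(t * ‖x i - x j‖ ^ 2)) - 1 + t * ‖x i - x j‖ ^ 2)
        * t ^ (-(5/2) : ℝ)) := by
    apply cubicAux_setIntegral_pos hFint
    intro t ht
    have ht' : (0:ℝ) < t := ht
    rw [stepB t]
    exact mul_pos (gaussian_strict_pd x hx c hc ht') (Real.rpow_pos_of_pos ht' _)
  nlinarith [key, pos, hC]
end

section
/- For every dimension d ≥ 1, every n ≥ 1, every family of pairwise distinct points x_1, …, x_n ∈ ℝ^d, and every nonzero vector c ∈ ℝ^n satisfying Σ_i c_i = 0 and Σ_i c_i x_i = 0, one has Σ_{i≠j} c_i c_j ‖x_i − x_j‖² · ln‖x_i − x_j‖ > 0; that is, the thin plate spline kernel φ(x) = ‖x‖² ln‖x‖ (extended by the value 0 at x = 0) is strictly conditionally positive definite of order 2 on ℝ^d. -/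
open Real Finset Set MeasureTheory Filter Topology Nat

lemma tps_sum_inner_pow_nonneg {d n : ℕ} (b : Fin n → ℝ)
    (x : Fin n → EuclideanSpace ℝ (Fin d)) (k : ℕ) :
    0 ≤ ∑ i, ∑ j, b i * b j * (inner ℝ (x i) (x j) : ℝ) ^ k := by
  set G := Fintype.piFinset (fun _ : Fin k => (univ : Finset (Fin d))) with hG
  have hin : ∀ i j, (inner ℝ (x i) (x j) : ℝ) ^ k
      = ∑ g ∈ G, ∏ l, x i (g l) * x j (g l) := by
    intro i j
    rw [real_inner_comm, PiLp.inner_apply]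
    simp only [RCLike.inner_apply, starRingEnd_apply, star_trivial]
    rw [Finset.sum_pow']
  have key : ∀ g : Fin k → Fin d, (∑ i, b i * ∏ l, x i (g l)) ^ 2
      = ∑ i, ∑ j, b i * b j * ∏ l, x i (g l) * x j (g l) := by
    intro g
    rw [sq, Finset.sum_mul_sum]
    refine Finset.sum_congr rfl fun i _ => Finset.sum_congr rfl fun j _ => ?_
    rw [Finset.prod_mul_distrib]
    ring
  have h2 : ∑ i, ∑ j, b i * b j * (inner ℝ (x i) (x j) : ℝ) ^ k
      = ∑ g ∈ G, (∑ i, b i * ∏ l, x i (g l)) ^ 2 :=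
    calc ∑ i, ∑ j, b i * b j * (inner ℝ (x i) (x j) : ℝ) ^ k
        = ∑ i, ∑ j, ∑ g ∈ G, b i * b j * ∏ l, x i (g l) * x j (g l) := by
          simp only [hin, Finset.mul_sum]
      _ = ∑ i, ∑ g ∈ G, ∑ j, b i * b j * ∏ l, x i (g l) * x j (g l) :=
          Finset.sum_congr rfl fun i _ => Finset.sum_comm
      _ = ∑ g ∈ G, ∑ i, ∑ j, b i * b j * ∏ l, x i (g l) * x j (g l) :=
          Finset.sum_comm
      _ = ∑ g ∈ G, (∑ i, b i * ∏ l, x i (g l)) ^ 2 :=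
          Finset.sum_congr rfl fun g _ => (key g).symm
  rw [h2]
  positivity

lemma tps_exp_eq_tsum (y : ℝ) : Real.exp y = ∑' k : ℕ, y ^ k / k ! := by
  rw [Real.exp_eq_exp_ℝ, NormedSpace.exp_eq_tsum_div]

lemma tps_gaussian_psd {d n : ℕ} (x : Fin n → EuclideanSpace ℝ (Fin d))
    (c : Fin n → ℝ) {t : ℝ} (ht : 0 ≤ t) :
    0 ≤ ∑ i, ∑ j, c i * c j * Real.exp (-(‖x i - x j‖ ^ 2 * t)) := by
  set b : Fin n → ℝ := fun i => c i * Real.exp (-(‖x i‖ ^ 2 * t)) with hb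
  have hterm : ∀ i j, c i * c j * Real.exp (-(‖x i - x j‖ ^ 2 * t))
      = ∑' k : ℕ, b i * b j * ((2 * t) ^ k / k ! * (inner ℝ (x i) (x j) : ℝ) ^ k) := by
    intro i j
    have hnorm : ‖x i - x j‖ ^ 2 = ‖x i‖ ^ 2 - 2 * (inner ℝ (x i) (x j) : ℝ) + ‖x j‖ ^ 2 :=
      norm_sub_sq_real _ _
    have : -(‖x i - x j‖ ^ 2 * t)
        = -(‖x i‖ ^ 2 * t) + -(‖x j‖ ^ 2 * t) + 2 * t * (inner ℝ (x i) (x j) : ℝ) := by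
      rw [hnorm]; ring
    rw [this, Real.exp_add, Real.exp_add, tps_exp_eq_tsum (2 * t * (inner ℝ (x i) (x j) : ℝ))]
    rw [← tsum_mul_left, ← tsum_mul_left]
    exact tsum_congr fun k => by simp only [hb]; rw [mul_pow]; ring
  calc (0:ℝ) ≤ ∑' k : ℕ, ∑ i, ∑ j, b i * b j * ((2 * t) ^ k / k ! * (inner ℝ (x i) (x j) : ℝ) ^ k) := by
        refine tsum_nonneg fun k => ?_
        have : ∑ i, ∑ j, b i * b j * ((2 * t) ^ k / k ! * (inner ℝ (x i) (x j) : ℝ) ^ k)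
            = (2 * t) ^ k / k ! * ∑ i, ∑ j, b i * b j * (inner ℝ (x i) (x j) : ℝ) ^ k := by
          simp only [Finset.mul_sum]
          exact Finset.sum_congr rfl fun i _ => Finset.sum_congr rfl fun j _ => by ring
        rw [this]
        have h2t : (0:ℝ) ≤ (2 * t) ^ k / k ! := by positivity
        exact mul_nonneg h2t (tps_sum_inner_pow_nonneg b x k)
    _ = ∑ i, ∑ j, c i * c j * Real.exp (-(‖x i - x j‖ ^ 2 * t)) := by
        have hsummable : ∀ (i j : Fin n), Summable (fun k : ℕ =>
            b i * b j * ((2 * t) ^ k / k ! * (inner ℝ (x i) (x j) : ℝ) ^ k)) := by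
          intro i j
          have : Summable (fun k : ℕ => (2 * t * (inner ℝ (x i) (x j) : ℝ)) ^ k / k !) :=
            Real.summable_pow_div_factorial _
          refine (this.mul_left (b i * b j)).congr fun k => ?_
          rw [mul_pow, mul_pow]
          ring
        rw [Summable.tsum_finsetSum (fun i _ => summable_sum fun j _ => hsummable i j)]
        refine Finset.sum_congr rfl fun i _ => ?_
        rw [Summable.tsum_finsetSum (fun j _ => hsummable i j)]
        exact Finset.sum_congr rfl fun j _ => (hterm i j).symm

lemma tps_one_sub_le (y : ℝ) : 1 - y ≤ Real.exp (-y) := by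
  have := Real.add_one_le_exp (-y); linarith

lemma tps_exp_quad {y : ℝ} (hy : 0 ≤ y) : Real.exp (-y) - 1 + y ≤ y ^ 2 / 2 := by
  set g : ℝ → ℝ := fun u => u ^ 2 / 2 - (Real.exp (-u) - 1 + u) with hg
  have hderiv : ∀ u : ℝ, HasDerivAt g (u - (1 - Real.exp (-u))) u := by
    intro u
    have h1 : HasDerivAt (fun u : ℝ => Real.exp (-u)) (-Real.exp (-u)) u := by
      simpa [Function.comp_def] using (Real.hasDerivAt_exp (-u)).comp u (hasDerivAt_neg u)
    have h2 : HasDerivAt (fun u : ℝ => u ^ 2 / 2) u u := by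
      simpa using ((hasDerivAt_pow 2 u).div_const 2)
    exact (h2.sub ((h1.sub_const 1).add (hasDerivAt_id u))) |>.congr_deriv (by ring)
  have hmono : MonotoneOn g (Set.Ici 0) := by
    refine monotoneOn_of_deriv_nonneg (convex_Ici 0) ?_ ?_ ?_
    · exact (fun u _ => (hderiv u).continuousAt.continuousWithinAt)
    · exact fun u _ => (hderiv u).differentiableAt.differentiableWithinAt
    · intro u hu
      rw [(hderiv u).deriv]
      rw [interior_Ici] at hu
      have := tps_one_sub_le u
      have hu' : (0:ℝ) < u := hu
      nlinarith [Real.exp_pos (-u)]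
  have h0 : g 0 = 0 := by simp [hg]
  have := hmono (Set.self_mem_Ici) hy hy
  rw [h0] at this
  simp only [hg] at this
  linarith

lemma tps_exp_nonneg_lower {y : ℝ} (hy : 0 ≤ y) : 0 ≤ Real.exp (-y) - 1 + y := by
  have := tps_one_sub_le y; linarith

lemma tps_mul_exp_le_one {t : ℝ} (ht : 0 ≤ t) : t * Real.exp (-t) ≤ 1 := by
  rw [Real.exp_neg, mul_inv_le_iff₀' (Real.exp_pos t)]
  have := Real.add_one_le_exp t; nlinarith

lemma tps_exp_sub_exp_le {p q : ℝ} (h : p ≤ q) :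
    Real.exp (-p) - Real.exp (-q) ≤ (q - p) * Real.exp (-p) := by
  have h1 : Real.exp (-q) = Real.exp (-p) * Real.exp (-(q - p)) := by
    rw [← Real.exp_add]; ring_nf
  have h2 : 1 - (q - p) ≤ Real.exp (-(q - p)) := tps_one_sub_le (q - p)
  nlinarith [Real.exp_pos (-p)]

noncomputable def tpsF (s : ℝ) : ℝ → ℝ :=
  fun t => (Real.exp (-(s * t)) - 1 + s * t * Real.exp (-t)) / t ^ 2

lemma tpsF_continuousOn (s : ℝ) : ContinuousOn (tpsF s) {t : ℝ | t ≠ 0} := by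
  unfold tpsF
  refine ContinuousOn.div (by fun_prop) (by fun_prop) ?_
  intro t ht
  exact pow_ne_zero 2 ht

lemma tpsF_bound1 {s t : ℝ} (hs : 0 ≤ s) (ht : 0 < t) : |tpsF s t| ≤ s ^ 2 / 2 + s := by
  have hst : 0 ≤ s * t := mul_nonneg hs ht.le
  have hA := tps_exp_nonneg_lower hst
  have hB := tps_exp_quad hst
  have hC := tps_one_sub_le t
  have hD : Real.exp (-t) ≤ 1 := by
    rw [Real.exp_le_one_iff]; linarith
  have habs : |Real.exp (-(s * t)) - 1 + s * t * Real.exp (-t)| ≤ (s ^ 2 / 2 + s) * t ^ 2 := by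
    rw [abs_le]
    constructor
    · nlinarith
    · nlinarith
  unfold tpsF
  rw [abs_div, abs_of_nonneg (by positivity : (0:ℝ) ≤ t ^ 2)]
  rw [div_le_iff₀ (by positivity)]
  exact habs

lemma tpsF_bound2 {s t : ℝ} (hs : 0 ≤ s) (ht : 1 ≤ t) : |tpsF s t| ≤ (2 + s) / t ^ 2 := by
  have ht0 : (0:ℝ) < t := lt_of_lt_of_le one_pos ht
  have h1 : Real.exp (-(s * t)) ≤ 1 := by
    rw [Real.exp_le_one_iff]; nlinarith
  have h2 : s * t * Real.exp (-t) ≤ s := by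
    have := tps_mul_exp_le_one ht0.le
    nlinarith [Real.exp_pos (-t)]
  have h3 : 0 < Real.exp (-(s*t)) := Real.exp_pos _
  have h4 : 0 ≤ s * t * Real.exp (-t) := by positivity
  have habs : |Real.exp (-(s * t)) - 1 + s * t * Real.exp (-t)| ≤ 2 + s := by
    rw [abs_le]; constructor <;> nlinarith
  unfold tpsF
  rw [abs_div, abs_of_nonneg (by positivity : (0:ℝ) ≤ t ^ 2)]
  exact div_le_div_of_nonneg_right habs (by positivity) |>.trans (le_refl _)

lemma tps_inv_sq_integrableOn : IntegrableOn (fun t : ℝ => (t ^ 2)⁻¹) (Ioi (1:ℝ)) := by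
  have h := integrableOn_Ioi_rpow_of_lt (show (-2:ℝ) < -1 by norm_num) (zero_lt_one)
  refine h.congr_fun (fun t ht => ?_) measurableSet_Ioi
  have ht0 : (0:ℝ) < t := lt_trans zero_lt_one ht
  beta_reduce
  rw [Real.rpow_neg ht0.le]
  congr 1
  rw [show (2:ℝ) = ((2:ℕ):ℝ) by norm_num, Real.rpow_natCast]

lemma tpsF_integrableOn {s : ℝ} (hs : 0 ≤ s) : IntegrableOn (tpsF s) (Ioi (0:ℝ)) := by
  rw [← Set.Ioc_union_Ioi_eq_Ioi (zero_le_one)]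
  apply IntegrableOn.union
  · refine Integrable.mono' (g := fun _ => s ^ 2 / 2 + s)
      (integrableOn_const measure_Ioc_lt_top.ne) ?_ ?_
    · exact ((tpsF_continuousOn s).mono (fun t ht => ne_of_gt ht.1)).aestronglyMeasurable
        measurableSet_Ioc
    · filter_upwards [ae_restrict_mem measurableSet_Ioc] with t ht
      rw [Real.norm_eq_abs]
      exact tpsF_bound1 hs ht.1
  · refine Integrable.mono' (g := fun t => (2 + s) * (t ^ 2)⁻¹)
      (tps_inv_sq_integrableOn.const_mul _) ?_ ?_
    · exact ((tpsF_continuousOn s).mono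
        (fun t ht => ne_of_gt (lt_trans zero_lt_one ht))).aestronglyMeasurable measurableSet_Ioi
    · filter_upwards [ae_restrict_mem measurableSet_Ioi] with t ht
      rw [Real.norm_eq_abs]
      have := tpsF_bound2 hs ht.le
      rwa [div_eq_mul_inv] at this

noncomputable def tpsD (u : ℝ) : ℝ → ℝ :=
  fun t => (Real.exp (-t) - Real.exp (-(u * t))) / t

lemma tpsD_continuousOn (u : ℝ) : ContinuousOn (tpsD u) {t : ℝ | t ≠ 0} := by
  unfold tpsD
  exact ContinuousOn.div (by fun_prop) (by fun_prop) (fun t ht => ht)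

lemma tpsD_bound {u t : ℝ} (hu : 0 < u) (ht : 0 < t) :
    |tpsD u t| ≤ |1 - u| * Real.exp (-(min u 1 * t)) := by
  rcases le_total u 1 with h | h
  · have hmin : min u 1 = u := min_eq_left h
    have hle : u * t ≤ t := by nlinarith
    have h1 : Real.exp (-t) ≤ Real.exp (-(u * t)) := by
      apply Real.exp_le_exp.2; linarith
    have h2 : Real.exp (-(u * t)) - Real.exp (-t) ≤ (t - u * t) * Real.exp (-(u * t)) :=
      tps_exp_sub_exp_le hle
    have habs : |tpsD u t| = (Real.exp (-(u * t)) - Real.exp (-t)) / t := by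
      unfold tpsD
      rw [abs_div, abs_of_pos ht, abs_of_nonpos (by linarith), neg_sub]
    rw [habs, hmin, abs_of_nonneg (by linarith)]
    rw [div_le_iff₀ ht]
    nlinarith [Real.exp_pos (-(u * t))]
  · have hmin : min u 1 = 1 := min_eq_right h
    have hle : t ≤ u * t := by nlinarith
    have h1 : Real.exp (-(u * t)) ≤ Real.exp (-t) := by
      apply Real.exp_le_exp.2; linarith
    have h2 : Real.exp (-t) - Real.exp (-(u * t)) ≤ (u * t - t) * Real.exp (-t) :=
      tps_exp_sub_exp_le hle
    have habs : |tpsD u t| = (Real.exp (-t) - Real.exp (-(u * t))) / t := by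
      unfold tpsD
      rw [abs_div, abs_of_pos ht, abs_of_nonneg (by linarith)]
    rw [habs, hmin, abs_of_nonpos (by linarith), neg_sub, one_mul]
    rw [div_le_iff₀ ht]
    nlinarith [Real.exp_pos (-t)]

lemma tpsD_integrableOn {u : ℝ} (hu : 0 < u) : IntegrableOn (tpsD u) (Ioi (0:ℝ)) := by
  have hm : 0 < min u 1 := lt_min hu one_pos
  refine Integrable.mono' (g := fun t => |1 - u| * Real.exp (-min u 1 * t))
    ((exp_neg_integrableOn_Ioi 0 hm).const_mul _) ?_ ?_
  · exact ((tpsD_continuousOn u).mono (fun t ht => ne_of_gt ht)).aestronglyMeasurable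
      measurableSet_Ioi
  · filter_upwards [ae_restrict_mem measurableSet_Ioi] with t ht
    rw [Real.norm_eq_abs]
    have := tpsD_bound hu ht
    rwa [show -min u 1 * t = -(min u 1 * t) by ring]

lemma tps_integral_exp {u : ℝ} (hu : 0 < u) :
    ∫ t in Ioi (0:ℝ), Real.exp (-(u * t)) = 1 / u := by
  have hderiv : ∀ t ∈ Ici (0:ℝ), HasDerivAt (fun t => -Real.exp (-(u * t)) / u)
      (Real.exp (-(u * t))) t := by
    intro t _
    have h : HasDerivAt (fun t : ℝ => -(u * t)) (-u) t := by
      exact ((hasDerivAt_id t).const_mul u).neg.congr_deriv (by ring)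
    have := ((Real.hasDerivAt_exp (-(u * t))).comp t h).neg.div_const u
    refine this.congr_deriv ?_
    field_simp
  have hint : IntegrableOn (fun t => Real.exp (-(u * t))) (Ioi (0:ℝ)) := by
    have := exp_neg_integrableOn_Ioi 0 hu
    simpa [neg_mul] using this
  have htend : Tendsto (fun t => -Real.exp (-(u * t)) / u) atTop (𝓝 0) := by
    have h1 : Tendsto (fun t : ℝ => -(u * t)) atTop atBot :=
      tendsto_neg_atBot_iff.mpr (tendsto_id.const_mul_atTop hu)
    have := (Real.tendsto_exp_atBot.comp h1).neg.div_const u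
    simpa using this
  have := integral_Ioi_of_hasDerivAt_of_tendsto' hderiv hint htend
  rw [this]
  simp
  ring

noncomputable def tpsG (u : ℝ) : ℝ := ∫ t in Ioi (0:ℝ), tpsD u t

lemma tps_hasDerivAt_exp_aux (v t : ℝ) :
    HasDerivAt (fun v : ℝ => Real.exp (-(v * t))) (-t * Real.exp (-(v * t))) v := by
  have h : HasDerivAt (fun v : ℝ => -(v * t)) (-t) v := by
    exact ((hasDerivAt_id v).mul_const t).neg.congr_deriv (by ring)
  simpa [mul_comm, Function.comp_def] using (Real.hasDerivAt_exp (-(v * t))).comp v h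

lemma tpsD_hasDerivAt {v t : ℝ} (ht : t ≠ 0) :
    HasDerivAt (fun v => tpsD v t) (Real.exp (-(v * t))) v := by
  have h := ((hasDerivAt_const v (Real.exp (-t))).sub (tps_hasDerivAt_exp_aux v t)).div_const t
  refine h.congr_deriv ?_
  field_simp
  ring

lemma tpsG_hasDerivAt {u : ℝ} (hu : 0 < u) : HasDerivAt tpsG (1 / u) u := by
  have hb : (0:ℝ) < u / 2 := by positivity
  have h := hasDerivAt_integral_of_dominated_loc_of_deriv_le
    (μ := volume.restrict (Ioi (0:ℝ))) (x₀ := u)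
    (F := fun v t => tpsD v t) (F' := fun v t => Real.exp (-(v * t)))
    (bound := fun t => Real.exp (-(u / 2) * t)) (s := Metric.ball u (u / 2)) (Metric.ball_mem_nhds u hb)
    (Eventually.of_forall fun v =>
      (((tpsD_continuousOn v).mono (fun t (ht : t ∈ Ioi (0:ℝ)) => ne_of_gt ht)).aestronglyMeasurable
        measurableSet_Ioi))
    (tpsD_integrableOn hu)
    ((Continuous.aestronglyMeasurable (by fun_prop)))
    ?_ (exp_neg_integrableOn_Ioi 0 hb) ?_
  · have h2 := h.2
    rwa [tps_integral_exp hu] at h2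
  · filter_upwards [ae_restrict_mem measurableSet_Ioi] with t ht
    intro v hv
    rw [Real.norm_eq_abs, abs_of_pos (Real.exp_pos _), Real.exp_le_exp]
    have hv' : u / 2 < v := by
      have h := mem_ball_iff_norm.1 hv
      rw [Real.norm_eq_abs] at h
      have := abs_lt.1 h
      linarith
    have ht' : (0:ℝ) < t := ht
    nlinarith
  · filter_upwards [ae_restrict_mem measurableSet_Ioi] with t ht
    intro v _
    exact tpsD_hasDerivAt (ne_of_gt ht)

lemma tpsG_eq_log {u : ℝ} (hu : 0 < u) : tpsG u = Real.log u := by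
  have huIcc : ∀ v ∈ uIcc (1:ℝ) u, 0 < v := fun v hv =>
    lt_of_lt_of_le (lt_min one_pos hu) hv.1
  have hkey : ∫ v in (1:ℝ)..u, 1 / v = tpsG u - tpsG 1 := by
    apply intervalIntegral.integral_eq_sub_of_hasDerivAt
    · exact fun v hv => tpsG_hasDerivAt (huIcc v hv)
    · apply ContinuousOn.intervalIntegrable
      exact ContinuousOn.div continuousOn_const continuousOn_id
        (fun v hv => ne_of_gt (huIcc v hv))
  have hG1 : tpsG 1 = 0 := by
    unfold tpsG tpsD
    simp [one_mul]
  rw [integral_one_div (fun h => by exact absurd (huIcc 0 h) (lt_irrefl 0)), hG1] at hkey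
  rw [sub_zero] at hkey
  rw [← hkey, div_one]

noncomputable def tpsPhi (s : ℝ) : ℝ := ∫ t in Ioi (0:ℝ), tpsF s t

lemma tpsF_hasDerivAt_param {v t : ℝ} (ht : t ≠ 0) :
    HasDerivAt (fun v => tpsF v t) (tpsD v t) v := by
  have h3 : HasDerivAt (fun v : ℝ => v * t * Real.exp (-t)) (t * Real.exp (-t)) v := by
    simpa using (((hasDerivAt_id v).mul_const t).mul_const (Real.exp (-t)))
  have h := (((tps_hasDerivAt_exp_aux v t).sub_const 1).add h3).div_const (t ^ 2)
  refine h.congr_deriv ?_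
  unfold tpsD
  field_simp
  ring

lemma tpsPhi_hasDerivAt {s : ℝ} (hs : 0 < s) : HasDerivAt tpsPhi (Real.log s) s := by
  have hb : (0:ℝ) < s / 2 := by positivity
  have hm : (0:ℝ) < min (s / 2) 1 := lt_min hb one_pos
  have h := hasDerivAt_integral_of_dominated_loc_of_deriv_le
    (μ := volume.restrict (Ioi (0:ℝ))) (x₀ := s)
    (F := fun v t => tpsF v t) (F' := fun v t => tpsD v t)
    (bound := fun t => (1 + 3 * s / 2) * Real.exp (-min (s / 2) 1 * t)) (s := Metric.ball s (s / 2)) (Metric.ball_mem_nhds s hb)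
    (Eventually.of_forall fun v =>
      (((tpsF_continuousOn v).mono (fun t (ht : t ∈ Ioi (0:ℝ)) => ne_of_gt ht)).aestronglyMeasurable
        measurableSet_Ioi))
    (tpsF_integrableOn hs.le)
    (((tpsD_continuousOn s).mono (fun t (ht : t ∈ Ioi (0:ℝ)) => ne_of_gt ht)).aestronglyMeasurable
        measurableSet_Ioi)
    ?_ ((exp_neg_integrableOn_Ioi 0 hm).const_mul _) ?_
  · have h2 := h.2
    rwa [show (∫ t in Ioi (0:ℝ), tpsD s t) = Real.log s from tpsG_eq_log hs] at h2
  · filter_upwards [ae_restrict_mem measurableSet_Ioi] with t ht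
    intro v hv
    have ht' : (0:ℝ) < t := ht
    have hv' : s / 2 < v ∧ v < 3 * s / 2 := by
      have h := mem_ball_iff_norm.1 hv
      rw [Real.norm_eq_abs] at h
      have := abs_lt.1 h
      constructor <;> linarith
    have hv0 : 0 < v := lt_trans hb hv'.1
    rw [Real.norm_eq_abs]
    calc |tpsD v t| ≤ |1 - v| * Real.exp (-(min v 1 * t)) := tpsD_bound hv0 ht'
      _ ≤ (1 + 3 * s / 2) * Real.exp (-min (s / 2) 1 * t) := by
          have h1 : |1 - v| ≤ 1 + 3 * s / 2 := by
            rw [abs_le]; constructor <;> linarith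
          have h2 : Real.exp (-(min v 1 * t)) ≤ Real.exp (-min (s / 2) 1 * t) := by
            rw [Real.exp_le_exp]
            have : min (s / 2) 1 ≤ min v 1 := min_le_min hv'.1.le (le_refl 1)
            nlinarith
          exact mul_le_mul h1 h2 (Real.exp_pos _).le (by linarith)
  · filter_upwards [ae_restrict_mem measurableSet_Ioi] with t ht
    intro v _
    exact tpsF_hasDerivAt_param (ne_of_gt ht)

lemma tpsPhi_one : tpsPhi 1 = -1 := by
  classical
  set H : ℝ → ℝ := fun t => if t = 0 then 1 else (1 - Real.exp (-t)) / t with hH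
  have hderiv : ∀ t ∈ Ioi (0:ℝ), HasDerivAt H (tpsF 1 t) t := by
    intro t ht
    have ht' : (0:ℝ) < t := ht
    have hnum : HasDerivAt (fun t : ℝ => 1 - Real.exp (-t)) (Real.exp (-t)) t := by
      simpa using ((Real.hasDerivAt_exp (-t)).comp t (hasDerivAt_neg t)).const_sub 1
    have hg : HasDerivAt (fun t : ℝ => (1 - Real.exp (-t)) / t)
        ((Real.exp (-t) * t - (1 - Real.exp (-t)) * 1) / t ^ 2) t :=
      hnum.div (hasDerivAt_id t) (ne_of_gt ht')
    have heq : H =ᶠ[𝓝 t] fun t : ℝ => (1 - Real.exp (-t)) / t := by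
      filter_upwards [eventually_ne_nhds (ne_of_gt ht')] with y hy
      simp [hH, hy]
    refine (hg.congr_of_eventuallyEq heq).congr_deriv ?_
    unfold tpsF
    field_simp
    ring
  have hcont : ContinuousWithinAt H (Ici (0:ℝ)) 0 := by
    rw [← Set.Ioi_insert, continuousWithinAt_insert_self]
    have hslope : Tendsto (slope Real.exp 0) (𝓝[≠] (0:ℝ)) (𝓝 1) := by
      simpa using hasDerivAt_iff_tendsto_slope.1 (Real.hasDerivAt_exp 0)
    have hmap : Tendsto (fun t : ℝ => -t) (𝓝[>] (0:ℝ)) (𝓝[≠] (0:ℝ)) := by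
      apply tendsto_nhdsWithin_of_tendsto_nhds_of_eventually_within
      · simpa using (continuous_neg.tendsto (0:ℝ)).mono_left nhdsWithin_le_nhds
      · filter_upwards [self_mem_nhdsWithin] with t ht
        exact ne_of_lt (by simpa using (neg_neg_iff_pos.2 (show (0:ℝ) < t from ht)).le.lt_of_ne (by simp [ne_of_gt (show (0:ℝ) < t from ht)]))
    have : Tendsto H (𝓝[>] (0:ℝ)) (𝓝 1) := by
      refine (hslope.comp hmap).congr' ?_
      filter_upwards [self_mem_nhdsWithin] with t ht
      have ht' : t ≠ 0 := ne_of_gt ht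
      simp only [Function.comp, hH, if_neg ht', slope_def_field]
      rw [Real.exp_zero, sub_zero]
      rw [div_eq_div_iff (neg_ne_zero.2 ht') ht']
      ring
    have hH0 : H 0 = 1 := by simp [hH]
    rw [ContinuousWithinAt, hH0]
    exact this
  have htend : Tendsto H atTop (𝓝 0) := by
    have h1 : Tendsto (fun t : ℝ => 1 - Real.exp (-t)) atTop (𝓝 1) := by
      have : Tendsto (fun t : ℝ => Real.exp (-t)) atTop (𝓝 0) :=
        Real.tendsto_exp_atBot.comp (tendsto_neg_atBot_iff.2 tendsto_id)
      simpa using this.const_sub 1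
    have h2 : Tendsto (fun t : ℝ => (1 - Real.exp (-t)) / t) atTop (𝓝 0) :=
      h1.div_atTop tendsto_id
    refine h2.congr' ?_
    filter_upwards [eventually_gt_atTop (0:ℝ)] with t ht
    simp [hH, ne_of_gt ht]
  have := integral_Ioi_of_hasDerivAt_of_tendsto hcont hderiv (tpsF_integrableOn zero_le_one) htend
  unfold tpsPhi
  rw [this]
  simp [hH]

lemma tpsPhi_value {s : ℝ} (hs : 0 < s) : tpsPhi s = s * Real.log s - s := by
  have huIcc : ∀ v ∈ uIcc (1:ℝ) s, 0 < v := fun v hv =>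
    lt_of_lt_of_le (lt_min one_pos hs) hv.1
  have hkey : ∫ v in (1:ℝ)..s, Real.log v = tpsPhi s - tpsPhi 1 := by
    apply intervalIntegral.integral_eq_sub_of_hasDerivAt
    · exact fun v hv => tpsPhi_hasDerivAt (huIcc v hv)
    · apply ContinuousOn.intervalIntegrable
      exact Real.continuousOn_log.mono (fun v hv => ne_of_gt (huIcc v hv))
  rw [integral_log, tpsPhi_one] at hkey
  simp only [Real.log_one] at hkey
  linarith

/-- The thin plate spline kernel `φ(x) = ‖x‖² ln‖x‖` (with `φ(0) = 0`) is strictly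
conditionally positive definite of order 2 on `ℝ^d`: for pairwise distinct points
`x_1, …, x_n` and every nonzero `c ∈ ℝ^n` with `Σ_i c_i = 0` and `Σ_i c_i x_i = 0`,
one has `Σ_{i≠j} c_i c_j ‖x_i − x_j‖² ln‖x_i − x_j‖ > 0`. -/
theorem thin_plate_spline_strictly_cond_pos_def_order_two (d : ℕ) (hd : 1 ≤ d)
    (n : ℕ) (hn : 1 ≤ n) (x : Fin n → EuclideanSpace ℝ (Fin d))
    (hx : Function.Injective x) (c : Fin n → ℝ) (hc : c ≠ 0)
    (hc0 : ∑ i, c i = 0) (hc1 : ∑ i, c i • x i = 0) :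
    0 < ∑ i, ∑ j ∈ Finset.univ.filter (fun j => j ≠ i),
      c i * c j * (‖x i - x j‖ ^ 2 * Real.log ‖x i - x j‖) := by
  classical
  set s : Fin n → Fin n → ℝ := fun i j => ‖x i - x j‖ ^ 2 with hs_def
  have hs_nonneg : ∀ i j, 0 ≤ s i j := fun i j => sq_nonneg _
  have hs_pos : ∀ i j, i ≠ j → 0 < s i j := by
    intro i j hij
    have : x i - x j ≠ 0 := sub_ne_zero.2 (fun h => hij (hx h))
    have : 0 < ‖x i - x j‖ := norm_pos_iff.2 this
    positivity
  have hs_diag : ∀ i, s i i = 0 := by intro i; simp [hs_def]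
  -- constraint sums
  have hsum0 : ∑ i, ∑ j, c i * c j = 0 := by
    rw [← Finset.sum_mul_sum]
    rw [hc0, mul_zero]
  have hsum1 : ∑ i, ∑ j, c i * c j * s i j = 0 := by
    have hinner : ∑ i, ∑ j, c i * c j * (inner ℝ (x i) (x j) : ℝ) = 0 := by
      have h1 : ∀ i, ∑ j, c i * c j * (inner ℝ (x i) (x j) : ℝ)
          = (inner ℝ (c i • x i) (∑ j, c j • x j) : ℝ) := by
        intro i
        rw [inner_sum]
        refine Finset.sum_congr rfl fun j _ => ?_
        rw [real_inner_smul_left, real_inner_smul_right]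
        ring
      simp only [h1, hc1, inner_zero_right, Finset.sum_const_zero]
    have h2 : ∀ i j, c i * c j * s i j
        = c i * ‖x i‖ ^ 2 * c j - 2 * (c i * c j * (inner ℝ (x i) (x j) : ℝ))
          + c i * (c j * ‖x j‖ ^ 2) := by
      intro i j
      have : s i j = ‖x i‖ ^ 2 - 2 * (inner ℝ (x i) (x j) : ℝ) + ‖x j‖ ^ 2 :=
        norm_sub_sq_real _ _
      rw [this]; ring
    simp only [h2, Finset.sum_add_distrib, Finset.sum_sub_distrib]
    have e1 : ∑ i, ∑ j, c i * ‖x i‖ ^ 2 * c j = 0 := by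
      rw [← Finset.sum_mul_sum, hc0, mul_zero]
    have e2 : ∑ i, ∑ j, c i * (c j * ‖x j‖ ^ 2) = 0 := by
      rw [← Finset.sum_mul_sum, hc0, zero_mul]
    have e3 : ∑ i, ∑ j, 2 * (c i * c j * (inner ℝ (x i) (x j) : ℝ)) = 0 := by
      simp only [← Finset.mul_sum]
      rw [hinner, mul_zero]
    rw [e1, e2, e3]
    ring
  -- the Gaussian quadratic form
  set Q : ℝ → ℝ := fun t => ∑ i, ∑ j, c i * c j * Real.exp (-(s i j * t)) with hQ_def
  have hQ_nonneg : ∀ t : ℝ, 0 ≤ t → 0 ≤ Q t := fun t ht => tps_gaussian_psd x c ht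
  -- pointwise representation
  have hrep : ∀ t ∈ Ioi (0:ℝ), ∑ i, ∑ j, c i * c j * tpsF (s i j) t = Q t / t ^ 2 := by
    intro t ht
    have ht' : (0:ℝ) < t := ht
    have hterm : ∀ i j, c i * c j * tpsF (s i j) t
        = (c i * c j * Real.exp (-(s i j * t)) - c i * c j
            + c i * c j * s i j * (t * Real.exp (-t))) / t ^ 2 := by
      intro i j
      unfold tpsF
      field_simp
    simp only [hterm, ← Finset.sum_div]
    congr 1
    simp only [Finset.sum_add_distrib, Finset.sum_sub_distrib]
    have e4 : ∑ i, ∑ j, c i * c j * s i j * (t * Real.exp (-t))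
        = (∑ i, ∑ j, c i * c j * s i j) * (t * Real.exp (-t)) := by
      rw [Finset.sum_mul]
      exact Finset.sum_congr rfl fun i _ => (Finset.sum_mul ..).symm
    rw [e4, hsum1, hsum0, zero_mul]
    ring
  -- integrability
  have hint_sum : IntegrableOn (fun t => ∑ i, ∑ j, c i * c j * tpsF (s i j) t) (Ioi (0:ℝ)) := by
    apply integrable_finset_sum
    intro i _
    apply integrable_finset_sum
    intro j _
    exact ((tpsF_integrableOn (hs_nonneg i j)).const_mul _)
  have hQint : IntegrableOn (fun t => Q t / t ^ 2) (Ioi (0:ℝ)) :=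
    hint_sum.congr_fun hrep measurableSet_Ioi
  -- value of the integral
  have hPhi : ∀ i j, c i * c j * tpsPhi (s i j)
      = c i * c j * (s i j * Real.log (s i j)) - c i * c j * s i j := by
    intro i j
    by_cases hij : i = j
    · subst hij
      have h0 : tpsPhi (s i i) = 0 := by
        rw [hs_diag]
        unfold tpsPhi tpsF
        simp
      rw [h0, hs_diag i]
      simp
    · rw [tpsPhi_value (hs_pos i j hij)]
      ring
  have hval : ∫ t in Ioi (0:ℝ), Q t / t ^ 2
      = ∑ i, ∑ j, c i * c j * (s i j * Real.log (s i j)) := by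
    have hstep : ∫ t in Ioi (0:ℝ), Q t / t ^ 2
        = ∑ i, ∑ j, c i * c j * tpsPhi (s i j) := by
      rw [← setIntegral_congr_fun measurableSet_Ioi hrep]
      rw [integral_finset_sum _ (fun i _ => integrable_finset_sum _
        (fun j _ => (tpsF_integrableOn (hs_nonneg i j)).const_mul _))]
      refine Finset.sum_congr rfl fun i _ => ?_
      rw [integral_finset_sum _ (fun j _ => (tpsF_integrableOn (hs_nonneg i j)).const_mul _)]
      refine Finset.sum_congr rfl fun j _ => ?_
      exact MeasureTheory.integral_const_mul _ _
    rw [hstep]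
    simp only [hPhi, Finset.sum_sub_distrib]
    rw [hsum1, sub_zero]
  -- relate to the target sum
  have htarget : ∑ i, ∑ j ∈ Finset.univ.filter (fun j => j ≠ i),
        c i * c j * (‖x i - x j‖ ^ 2 * Real.log ‖x i - x j‖)
      = (1 / 2) * ∑ i, ∑ j, c i * c j * (s i j * Real.log (s i j)) := by
    rw [Finset.mul_sum]
    refine Finset.sum_congr rfl fun i _ => ?_
    have hfull : ∑ j ∈ Finset.univ.filter (fun j => j ≠ i),
          c i * c j * (‖x i - x j‖ ^ 2 * Real.log ‖x i - x j‖)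
        = ∑ j, c i * c j * (‖x i - x j‖ ^ 2 * Real.log ‖x i - x j‖) := by
      apply Finset.sum_filter_of_ne
      intro j _ hne
      intro hji
      apply hne
      subst hji
      simp
    rw [hfull, Finset.mul_sum]
    refine Finset.sum_congr rfl fun j _ => ?_
    have hlog : Real.log (s i j) = 2 * Real.log ‖x i - x j‖ := by
      rw [hs_def]
      simp only []
      rw [show ‖x i - x j‖ ^ 2 = ‖x i - x j‖ ^ (2:ℕ) from rfl, Real.log_pow]
      push_cast
      ring
    rw [hlog]
    ring
  -- positivity of the sum of squares
  have hsumsq : 0 < ∑ i, c i ^ 2 := by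
    obtain ⟨i0, hi0⟩ := Function.ne_iff.1 hc
    refine Finset.sum_pos' (fun i _ => sq_nonneg _)
      ⟨i0, Finset.mem_univ _, lt_of_le_of_ne (sq_nonneg _) (Ne.symm (pow_ne_zero 2 hi0))⟩
  -- Q tends to the sum of squares at infinity
  have htendQ : Tendsto Q atTop (𝓝 (∑ i, c i ^ 2)) := by
    have h1 : Tendsto Q atTop (𝓝 (∑ i, ∑ j, if i = j then c i * c j else 0)) := by
      apply tendsto_finset_sum
      intro i _
      apply tendsto_finset_sum
      intro j _
      by_cases hij : i = j
      · subst hij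
        rw [if_pos rfl]
        refine tendsto_const_nhds.congr fun t => ?_
        rw [hs_diag i]
        simp
      · rw [if_neg hij]
        have h0 : Tendsto (fun t : ℝ => Real.exp (-(s i j * t))) atTop (𝓝 0) :=
          Real.tendsto_exp_atBot.comp
            (tendsto_neg_atBot_iff.2 (tendsto_id.const_mul_atTop (hs_pos i j hij)))
        simpa using h0.const_mul (c i * c j)
    have h2 : ∑ i, ∑ j, (if i = j then c i * c j else 0) = ∑ i, c i ^ 2 := by
      refine Finset.sum_congr rfl fun i _ => ?_
      rw [Finset.sum_ite_eq Finset.univ i (fun j => c i * c j)]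
      simp [sq]
    rwa [h2] at h1
  -- eventually bounded below
  set ε := (∑ i, c i ^ 2) / 2 with hε
  have hεpos : 0 < ε := by positivity
  obtain ⟨T₀, hT₀⟩ := eventually_atTop.1 (htendQ.eventually (eventually_ge_nhds (by linarith)))
  set T := max T₀ 1 with hT
  have hT1 : (1:ℝ) ≤ T := le_max_right _ _
  have hTpos : (0:ℝ) < T := lt_of_lt_of_le one_pos hT1
  have hTQ : ∀ t, T ≤ t → ε ≤ Q t := fun t ht => hT₀ t ((le_max_left _ _).trans ht)
  have hsub : Ioc T (T + 1) ⊆ Ioi (0:ℝ) := fun t ht => lt_trans hTpos ht.1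
  -- positivity of the integral
  have hpos_int : 0 < ∫ t in Ioi (0:ℝ), Q t / t ^ 2 := by
    have hmono : ∫ t in Ioc T (T + 1), Q t / t ^ 2 ≤ ∫ t in Ioi (0:ℝ), Q t / t ^ 2 := by
      apply setIntegral_mono_set hQint
      · filter_upwards [ae_restrict_mem measurableSet_Ioi] with t ht
        exact div_nonneg (hQ_nonneg t (le_of_lt ht)) (sq_nonneg t)
      · exact HasSubset.Subset.eventuallyLE hsub
    have hconst : ∫ t in Ioc T (T + 1), (ε / (T + 1) ^ 2)
        ≤ ∫ t in Ioc T (T + 1), Q t / t ^ 2 := by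
      apply setIntegral_mono_on (integrableOn_const measure_Ioc_lt_top.ne)
        (hQint.mono_set hsub) measurableSet_Ioc
      intro t ht
      have h1 : ε ≤ Q t := hTQ t ht.1.le
      have ht0 : 0 < t := lt_trans hTpos ht.1
      exact div_le_div₀ (le_trans hεpos.le h1) h1 (by positivity)
        (by nlinarith [ht.2])
    rw [setIntegral_const, Real.volume_real_Ioc, show T + 1 - T = 1 by ring,
      max_eq_left zero_le_one, one_smul] at hconst
    have h2 : 0 < ε / (T + 1) ^ 2 := by positivity
    linarith
  rw [htarget, ← hval]
  linarith
end

section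
/- Let d ≥ 1, let Ω ⊂ ℝ^d be a nonempty compact set, let S : Ω × Ω → ℝ be continuous, and let u : Ω → ℝ be continuous. Then for every x ∈ Ω the function t ↦ ln‖x − t‖ · S(x,t) · u(t) is Lebesgue integrable on Ω, and the function F u : Ω → ℝ defined by (F u)(x) = ∫_Ω ln‖x − t‖ · S(x,t) · u(t) dt is continuous on Ω. -/
set_option maxHeartbeats 1000000

open MeasureTheory Metric Set Filter


-- |log| ≤ 2 * |s|^(-1/2) on [-1,1]
lemma log_abs_le (s : ℝ) (hs : s ∈ Set.Icc (-1:ℝ) 1) :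
    abs (Real.log (abs s)) ≤ 2 * |s| ^ (-(1/2) : ℝ) := by
  rcases eq_or_ne s 0 with rfl | h0
  · simp [Real.rpow_def_of_pos]
  · have h1 : 0 < |s| := abs_pos.2 h0
    have h2 : |s| ≤ 1 := abs_le.2 ⟨hs.1, hs.2⟩
    have hlog : Real.log |s| ≤ 0 := Real.log_nonpos h1.le h2
    rw [abs_of_nonpos hlog]
    have key : -Real.log |s| = 2 * Real.log (|s| ^ (-(1/2):ℝ)) := by
      rw [Real.log_rpow h1]; ring
    rw [key]
    have := Real.log_le_sub_one_of_pos (Real.rpow_pos_of_pos h1 (-(1/2)))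
    nlinarith [Real.rpow_pos_of_pos h1 (-(1/2):ℝ)]

lemma aux1 : IntegrableOn (fun s : ℝ => abs (Real.log (abs s))) (Set.Icc (-1:ℝ) 1) volume := by
  have hmeas : Measurable fun s : ℝ => abs (Real.log (abs s)) :=
    (Real.measurable_log.comp measurable_abs).abs
  have hrpow : IntegrableOn (fun s : ℝ => |s| ^ (-(1/2):ℝ)) (Set.Icc (-1:ℝ) 1) volume := by
    have h1 : IntegrableOn (fun s : ℝ => |s| ^ (-(1/2):ℝ)) (Set.Ioc (0:ℝ) 1) volume := by
      have := (intervalIntegral.intervalIntegrable_rpow' (a := 0) (b := 1) (r := -(1/2)) (by norm_num)).1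
      refine this.congr_fun (fun s hs => by rw [abs_of_pos hs.1]) measurableSet_Ioc
    have h2 : IntegrableOn (fun s : ℝ => |s| ^ (-(1/2):ℝ)) (Set.Ico (-1:ℝ) 0) volume := by
      have hmp : MeasurePreserving (fun s : ℝ => -s) volume volume :=
        Measure.measurePreserving_neg volume
      have hemb : MeasurableEmbedding (fun s : ℝ => -s) :=
        (Homeomorph.neg ℝ).measurableEmbedding
      have := (hmp.integrableOn_comp_preimage hemb
        (f := fun s : ℝ => |s| ^ (-(1/2):ℝ)) (s := Set.Ioc (0:ℝ) 1)).2 h1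
      have hset : (fun s : ℝ => -s) ⁻¹' Set.Ioc (0:ℝ) 1 = Set.Ico (-1:ℝ) 0 := by
        ext s
        simp only [Set.mem_preimage, Set.mem_Ioc, Set.mem_Ico]
        constructor
        · rintro ⟨h1, h2⟩; exact ⟨by linarith, by linarith⟩
        · rintro ⟨h1, h2⟩; exact ⟨by linarith, by linarith⟩
      rw [hset] at this
      exact this.congr_fun (fun s _ => by simp [abs_neg]) measurableSet_Ico
    have h0 : IntegrableOn (fun s : ℝ => |s| ^ (-(1/2):ℝ)) ({0} : Set ℝ) volume := by
      rw [IntegrableOn, Measure.restrict_eq_zero.2 (by simp)]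
      exact integrable_zero_measure
    have : IntegrableOn (fun s : ℝ => |s| ^ (-(1/2):ℝ))
        (Set.Ico (-1:ℝ) 0 ∪ Set.Ioc (0:ℝ) 1 ∪ {0}) volume := (h2.union h1).union h0
    refine this.mono_set ?_
    intro s hs
    rcases lt_or_ge s 0 with h | h
    · exact Or.inl (Or.inl ⟨hs.1, h⟩)
    · rcases eq_or_lt_of_le h with rfl | h'
      · exact Or.inr rfl
      · exact Or.inl (Or.inr ⟨h', hs.2⟩)
  refine Integrable.mono' (hrpow.const_mul 2) hmeas.aestronglyMeasurable ?_
  filter_upwards [ae_restrict_mem measurableSet_Icc] with s hs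
  rw [Real.norm_eq_abs, abs_abs]
  exact log_abs_le s hs


lemma coord_le_norm {d : ℕ} (x : EuclideanSpace ℝ (Fin d)) (i : Fin d) : |x i| ≤ ‖x‖ := by
  rw [EuclideanSpace.norm_eq]
  rw [← Real.sqrt_sq_eq_abs]
  apply Real.sqrt_le_sqrt
  have : |x i| ^ 2 ≤ ∑ j, ‖x j‖ ^ 2 := by
    have := Finset.single_le_sum (f := fun j => ‖x j‖ ^ 2)
      (fun j _ => by positivity) (Finset.mem_univ i)
    simpa [Real.norm_eq_abs, sq_abs] using this
  simpa [sq_abs] using this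

lemma aux3 {d : ℕ} (hd : 1 ≤ d) :
    IntegrableOn (fun x : EuclideanSpace ℝ (Fin d) => abs (Real.log ‖x‖))
      (Metric.ball 0 1) volume := by
  classical
  set i0 : Fin d := ⟨0, hd⟩
  set f0 : ℝ → ℝ := (Set.Icc (-1:ℝ) 1).indicator (fun s => abs (Real.log (abs s))) with hf0
  set f1 : ℝ → ℝ := (Set.Icc (-1:ℝ) 1).indicator (fun _ => 1) with hf1
  have hif0 : Integrable f0 := by
    rw [hf0, integrable_indicator_iff measurableSet_Icc]; exact aux1
  have hif1 : Integrable f1 := by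
    rw [hf1, integrable_indicator_iff measurableSet_Icc]
    exact integrableOn_const (by simp)
  set f : Fin d → ℝ → ℝ := fun i => if i = i0 then f0 else f1 with hf
  have hG : Integrable (fun y : Fin d → ℝ => ∏ i, f i (y i)) := by
    apply Integrable.fintype_prod
    intro i
    by_cases h : i = i0 <;> simp [hf, h, hif0, hif1]
  -- transfer to EuclideanSpace
  have hmp := EuclideanSpace.volume_preserving_symm_measurableEquiv_toLp (Fin d)
  have hemb := (MeasurableEquiv.toLp 2 (Fin d → ℝ)).symm.measurableEmbedding
  have hGE : Integrable (fun x : EuclideanSpace ℝ (Fin d) =>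
      ∏ i, f i (x i)) volume := by
    have := (hmp.integrable_comp_emb hemb).2 hG
    exact this
  -- null set where coordinate vanishes
  have hnull : volume {x : EuclideanSpace ℝ (Fin d) | x i0 = 0} = 0 := by
    have h1 : volume {y : Fin d → ℝ | y i0 = 0} = 0 := by
      simpa [volume_pi] using Measure.pi_hyperplane (fun _ : Fin d => (volume : Measure ℝ)) i0 0
    have : {x : EuclideanSpace ℝ (Fin d) | x i0 = 0}
        = (MeasurableEquiv.toLp 2 (Fin d → ℝ)).symm ⁻¹' {y : Fin d → ℝ | y i0 = 0} := rfl
    rw [this, hmp.measure_preimage]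
    · exact h1
    · exact ((measurable_pi_apply i0) (measurableSet_singleton 0)).nullMeasurableSet
  refine Integrable.mono' hGE.integrableOn
    (((Real.measurable_log.comp measurable_norm).abs).aestronglyMeasurable) ?_
  have hae : ∀ᵐ x ∂(volume.restrict (Metric.ball (0 : EuclideanSpace ℝ (Fin d)) 1)),
      x i0 ≠ 0 := by
    refine ae_restrict_of_ae ?_
    rw [ae_iff]
    simpa using hnull
  filter_upwards [ae_restrict_mem measurableSet_ball, hae] with x hx hx0
  rw [Real.norm_eq_abs, abs_abs]
  have hxnorm : ‖x‖ < 1 := by simpa using hx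
  have hxpos : 0 < |x i0| := abs_pos.2 hx0
  have hcoords : ∀ i, x i ∈ Set.Icc (-1:ℝ) 1 := fun i =>
    abs_le.1 ((coord_le_norm x i).trans hxnorm.le)
  have hprod : (∏ i, f i (x i)) = abs (Real.log (abs (x i0))) := by
    rw [Finset.prod_eq_single i0]
    · simp [hf, hf0, Set.indicator_of_mem (hcoords i0)]
    · intro b _ hb
      simp [hf, hb, hf1, Set.indicator_of_mem (hcoords b)]
    · simp
  rw [hprod]
  have h1 : |x i0| ≤ ‖x‖ := coord_le_norm x i0
  have hn : 0 < ‖x‖ := lt_of_lt_of_le hxpos h1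
  have hl1 : Real.log ‖x‖ ≤ 0 := Real.log_nonpos hn.le hxnorm.le
  have hl2 : Real.log |x i0| ≤ Real.log ‖x‖ := Real.log_le_log hxpos h1
  rw [abs_of_nonpos hl1, abs_of_nonpos (hl2.trans hl1)]
  linarith


lemma aux4 {d : ℕ} (hd : 1 ≤ d) (M : ℝ) :
    IntegrableOn (fun x : EuclideanSpace ℝ (Fin d) => abs (Real.log ‖x‖))
      (Metric.ball 0 M) volume := by
  rcases le_total M 1 with hM | hM
  · exact (aux3 hd).mono_set (Metric.ball_subset_ball hM)
  have hmeas : Measurable fun x : EuclideanSpace ℝ (Fin d) => abs (Real.log ‖x‖) :=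
    (Real.measurable_log.comp measurable_norm).abs
  set g : EuclideanSpace ℝ (Fin d) → ℝ :=
    fun x => (Metric.ball (0:EuclideanSpace ℝ (Fin d)) 1).indicator
      (fun x => abs (Real.log ‖x‖)) x + Real.log M with hg
  have hgint : IntegrableOn g (Metric.ball 0 M) volume := by
    apply Integrable.add
    · exact (((integrable_indicator_iff measurableSet_ball).2 (aux3 hd))).integrableOn
    · exact integrableOn_const measure_ball_lt_top.ne
  refine Integrable.mono' hgint hmeas.aestronglyMeasurable ?_
  filter_upwards [ae_restrict_mem measurableSet_ball] with x hx
  rw [Real.norm_eq_abs, abs_abs]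
  have hxM : ‖x‖ < M := by simpa using hx
  rcases lt_or_ge ‖x‖ 1 with h1 | h1
  · have : x ∈ Metric.ball (0:EuclideanSpace ℝ (Fin d)) 1 := by simpa using h1
    simp only [hg, Set.indicator_of_mem this]
    have : (0:ℝ) ≤ Real.log M := Real.log_nonneg hM
    linarith
  · have hlog : 0 ≤ Real.log ‖x‖ := Real.log_nonneg h1
    rw [abs_of_nonneg hlog]
    have h2 : Real.log ‖x‖ ≤ Real.log M :=
      Real.log_le_log (lt_of_lt_of_le one_pos h1) hxM.le
    have h3 : (0:ℝ) ≤ (Metric.ball (0:EuclideanSpace ℝ (Fin d)) 1).indicator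
        (fun x => abs (Real.log ‖x‖)) x := Set.indicator_nonneg (fun y _ => abs_nonneg _) x
    rw [hg]; dsimp only; linarith

-- translation: integral over ball x r of |log ‖x - t‖|
lemma aux5 {d : ℕ} (x : EuclideanSpace ℝ (Fin d)) (A : Set (EuclideanSpace ℝ (Fin d))) :
    (∫ t in (fun t => x - t) ⁻¹' A, abs (Real.log ‖t‖) ∂volume)
      = ∫ t in A, abs (Real.log ‖x - t‖) ∂volume := by
  have hmp : MeasurePreserving (fun t : EuclideanSpace ℝ (Fin d) => x - t) volume volume :=
    Measure.measurePreserving_sub_left volume x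
  have hemb : MeasurableEmbedding (fun t : EuclideanSpace ℝ (Fin d) => x - t) :=
    (Homeomorph.subLeft x).measurableEmbedding
  have := hmp.setIntegral_preimage_emb hemb
    (fun t => abs (Real.log ‖x - t‖)) A
  simpa [sub_sub_cancel] using this

lemma aux5' {d : ℕ} (x : EuclideanSpace ℝ (Fin d)) (A : Set (EuclideanSpace ℝ (Fin d))) :
    IntegrableOn (fun t => abs (Real.log ‖x - t‖)) A volume
      ↔ IntegrableOn (fun t : EuclideanSpace ℝ (Fin d) => abs (Real.log ‖t‖))
          ((fun t => x - t) ⁻¹' A) volume := by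
  have hmp : MeasurePreserving (fun t : EuclideanSpace ℝ (Fin d) => x - t) volume volume :=
    Measure.measurePreserving_sub_left volume x
  have hemb : MeasurableEmbedding (fun t : EuclideanSpace ℝ (Fin d) => x - t) :=
    (Homeomorph.subLeft x).measurableEmbedding
  rw [← hmp.integrableOn_comp_preimage hemb]
  have hfun : ((fun t => abs (Real.log ‖x - t‖)) ∘ (fun t : EuclideanSpace ℝ (Fin d) => x - t))
      = fun t : EuclideanSpace ℝ (Fin d) => abs (Real.log ‖t‖) := by
    funext t; simp [Function.comp, sub_sub_cancel]
  rw [hfun]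


lemma aux6 {d : ℕ} (hd : 1 ≤ d) {ε : ℝ} (hε : 0 < ε) :
    ∃ δ : ℝ, 0 < δ ∧ δ ≤ 1 ∧
      (∫ t in Metric.ball (0 : EuclideanSpace ℝ (Fin d)) δ, abs (Real.log ‖t‖) ∂volume) < ε := by
  haveI : Nonempty (Fin d) := ⟨⟨0, hd⟩⟩
  set μ := volume.restrict (Metric.ball (0 : EuclideanSpace ℝ (Fin d)) 1) with hμ
  have hint : Integrable (fun x : EuclideanSpace ℝ (Fin d) => abs (Real.log ‖x‖)) μ := aux3 hd
  have hvol : Tendsto (fun δ : ℝ => volume (Metric.ball (0 : EuclideanSpace ℝ (Fin d)) δ))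
      (nhdsWithin 0 (Set.Ioi 0)) (nhds 0) := by
    have h1 : Tendsto (fun δ : ℝ => ENNReal.ofReal (δ ^ (Module.finrank ℝ (EuclideanSpace ℝ (Fin d)))))
        (nhdsWithin 0 (Set.Ioi 0)) (nhds 0) := by
      have : Tendsto (fun δ : ℝ => δ ^ (Module.finrank ℝ (EuclideanSpace ℝ (Fin d))))
          (nhdsWithin 0 (Set.Ioi 0)) (nhds 0) := by
        have hc : Continuous (fun δ : ℝ => δ ^ (Module.finrank ℝ (EuclideanSpace ℝ (Fin d)))) :=
          continuous_pow _
        have h0 : (0:ℝ) ^ (Module.finrank ℝ (EuclideanSpace ℝ (Fin d))) = 0 := by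
          apply zero_pow
          simp [finrank_euclideanSpace]
          omega
        have := hc.tendsto (0:ℝ)
        rw [h0] at this
        exact this.mono_left nhdsWithin_le_nhds
      simpa [ENNReal.ofReal_zero, Function.comp_def] using
        (ENNReal.continuous_ofReal.tendsto 0).comp this
    have h2 : ∀ᶠ δ in nhdsWithin (0:ℝ) (Set.Ioi 0),
        volume (Metric.ball (0 : EuclideanSpace ℝ (Fin d)) δ)
          = ENNReal.ofReal (δ ^ (Module.finrank ℝ (EuclideanSpace ℝ (Fin d))))
            * volume (Metric.ball (0 : EuclideanSpace ℝ (Fin d)) 1) := by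
      filter_upwards [self_mem_nhdsWithin] with δ hδ
      exact Measure.addHaar_ball volume _ (le_of_lt hδ)
    have h3 := ENNReal.Tendsto.mul_const h1 (Or.inr (measure_ball_lt_top (μ := (volume : Measure (EuclideanSpace ℝ (Fin d)))) (x := 0) (r := 1)).ne)
    rw [zero_mul] at h3
    exact Tendsto.congr' (EventuallyEq.symm h2) h3
  have hμvol : Tendsto (fun δ : ℝ => μ (Metric.ball (0 : EuclideanSpace ℝ (Fin d)) δ))
      (nhdsWithin 0 (Set.Ioi 0)) (nhds 0) := by
    refine tendsto_of_tendsto_of_tendsto_of_le_of_le tendsto_const_nhds hvol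
      (fun δ => zero_le) (fun δ => ?_)
    rw [hμ, Measure.restrict_apply measurableSet_ball]
    exact measure_mono Set.inter_subset_left
  have htend := hint.tendsto_setIntegral_nhds_zero (s := fun δ : ℝ =>
    Metric.ball (0 : EuclideanSpace ℝ (Fin d)) δ) hμvol
  have hev := ((Metric.tendsto_nhds.1 htend) ε hε).and
    (Ioo_mem_nhdsGT_of_mem (Set.left_mem_Ico.2 one_pos))
  rcases hev.exists with ⟨δ, h1, h2⟩
  refine ⟨δ, h2.1, h2.2.le, ?_⟩
  have heq : (∫ t in Metric.ball (0 : EuclideanSpace ℝ (Fin d)) δ, abs (Real.log ‖t‖) ∂μ)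
      = ∫ t in Metric.ball (0 : EuclideanSpace ℝ (Fin d)) δ, abs (Real.log ‖t‖) ∂volume := by
    rw [hμ, Measure.restrict_restrict measurableSet_ball,
      Set.inter_eq_left.2 (Metric.ball_subset_ball h2.2.le)]
  rw [heq] at h1
  calc (∫ t in Metric.ball (0 : EuclideanSpace ℝ (Fin d)) δ, abs (Real.log ‖t‖) ∂volume)
      ≤ |(∫ t in Metric.ball (0 : EuclideanSpace ℝ (Fin d)) δ, abs (Real.log ‖t‖) ∂volume)| :=
        le_abs_self _
    _ < ε := by simpa [Real.dist_eq] using h1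


/-- For a nonempty compact `Ω ⊂ ℝ^d`, continuous `S : Ω × Ω → ℝ` and continuous
`u : Ω → ℝ`, the weakly singular integrand `t ↦ ln‖x − t‖ · S(x,t) · u(t)` is Lebesgue
integrable on `Ω` for every `x ∈ Ω`, and `x ↦ ∫_Ω ln‖x − t‖ · S(x,t) · u(t) dt` is
continuous on `Ω`. -/
theorem log_kernel_operator_integrable_and_continuous (d : ℕ) (hd : 1 ≤ d)
    (Ω : Set (EuclideanSpace ℝ (Fin d))) (hΩ : IsCompact Ω) (hne : Ω.Nonempty)
    (S : EuclideanSpace ℝ (Fin d) × EuclideanSpace ℝ (Fin d) → ℝ)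
    (hS : ContinuousOn S (Ω ×ˢ Ω))
    (u : EuclideanSpace ℝ (Fin d) → ℝ) (hu : ContinuousOn u Ω) :
    (∀ x ∈ Ω, IntegrableOn (fun t => Real.log ‖x - t‖ * S (x, t) * u t) Ω volume) ∧
    ContinuousOn (fun x => ∫ t in Ω, Real.log ‖x - t‖ * S (x, t) * u t) Ω := by
  have hΩm : MeasurableSet Ω := hΩ.isClosed.measurableSet
  -- bound on Ω
  obtain ⟨R₀, hR₀⟩ := hΩ.isBounded.subset_closedBall 0
  set R : ℝ := max R₀ 0 + 1 with hRdef
  have hRpos : 0 < R := by positivity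
  have hΩR : Ω ⊆ Metric.ball 0 R := fun t ht => by
    have := hR₀ ht
    simp only [Metric.mem_closedBall] at this
    simp only [Metric.mem_ball]
    have : dist t 0 ≤ max R₀ 0 := this.trans (le_max_left _ _)
    linarith
  -- bounds on S and u
  obtain ⟨C, hC⟩ := (hΩ.prod hΩ).exists_bound_of_continuousOn hS
  obtain ⟨D, hD⟩ := hΩ.exists_bound_of_continuousOn hu
  obtain ⟨x₁, hx₁⟩ := hne
  have hCpos : 0 ≤ C := le_trans (norm_nonneg _) (hC (x₁, x₁) ⟨hx₁, hx₁⟩)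
  have hDpos : 0 ≤ D := le_trans (norm_nonneg _) (hD x₁ hx₁)
  -- integrability of the log kernel on subsets of balls
  have hLint : ∀ (x : EuclideanSpace ℝ (Fin d)) (A : Set (EuclideanSpace ℝ (Fin d))) (r : ℝ),
      ((fun t => x - t) ⁻¹' A) ⊆ Metric.ball 0 r →
      IntegrableOn (fun t => abs (Real.log ‖x - t‖)) A volume := by
    intro x A r hsub
    exact (aux5' x A).2 ((aux4 hd r).mono_set hsub)
  have hLΩ : ∀ x ∈ Ω, IntegrableOn (fun t => abs (Real.log ‖x - t‖)) Ω volume := by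
    intro x hx
    refine hLint x Ω (2 * R) ?_
    intro t ht
    simp only [Set.mem_preimage] at ht
    have h1 : ‖x - t‖ < R := by
      have := hΩR ht; simp only [Metric.mem_ball, dist_zero_right] at this; exact this
    have h2 : ‖x‖ < R := by
      have := hΩR hx; simp only [Metric.mem_ball, dist_zero_right] at this; exact this
    simp only [Metric.mem_ball, dist_zero_right]
    calc ‖t‖ = ‖x - (x - t)‖ := by rw [sub_sub_cancel]
      _ ≤ ‖x‖ + ‖x - t‖ := norm_sub_le _ _
      _ < 2 * R := by linarith
  -- measurability of the integrand
  have hmeas : ∀ x ∈ Ω, AEStronglyMeasurable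
      (fun t => Real.log ‖x - t‖ * S (x, t) * u t) (volume.restrict Ω) := by
    intro x hx
    have h1 : AEStronglyMeasurable (fun t : EuclideanSpace ℝ (Fin d) => Real.log ‖x - t‖)
        (volume.restrict Ω) :=
      (Real.measurable_log.comp (continuous_const.sub continuous_id).norm.measurable
        ).aestronglyMeasurable
    have h2 : ContinuousOn (fun t => S (x, t)) Ω := by
      refine hS.comp (Continuous.continuousOn (by fun_prop)) ?_
      intro t ht; exact ⟨hx, ht⟩
    exact (h1.mul (h2.aestronglyMeasurable hΩm)).mul (hu.aestronglyMeasurable hΩm)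
  -- pointwise bound
  have hptbound : ∀ x ∈ Ω, ∀ t ∈ Ω,
      ‖Real.log ‖x - t‖ * S (x, t) * u t‖ ≤ abs (Real.log ‖x - t‖) * (C * D) := by
    intro x hx t ht
    rw [norm_mul, norm_mul, Real.norm_eq_abs (Real.log _)]
    have h1 : ‖S (x, t)‖ ≤ C := hC (x, t) ⟨hx, ht⟩
    have h2 : ‖u t‖ ≤ D := hD t ht
    calc |Real.log ‖x - t‖| * ‖S (x, t)‖ * ‖u t‖
        ≤ |Real.log ‖x - t‖| * C * D := by
          apply mul_le_mul (mul_le_mul le_rfl h1 (norm_nonneg _) (abs_nonneg _)) h2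
            (norm_nonneg _)
          positivity
      _ = abs (Real.log ‖x - t‖) * (C * D) := by ring
  -- Part 1: integrability
  have key : ∀ x ∈ Ω, IntegrableOn (fun t => Real.log ‖x - t‖ * S (x, t) * u t) Ω volume := by
    intro x hx
    refine Integrable.mono' (((hLΩ x hx).mul_const (C * D))) (hmeas x hx) ?_
    filter_upwards [ae_restrict_mem hΩm] with t ht
    exact hptbound x hx t ht
  refine ⟨key, ?_⟩
  -- Part 2: continuity
  intro x₀ hx₀
  rw [Metric.continuousWithinAt_iff]
  intro ε hε
  set C' : ℝ := C * D + 1 with hC'def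
  have hC'pos : 0 < C' := by positivity
  obtain ⟨δ', hδ'pos, hδ'le1, hδ'int⟩ := aux6 (d := d) hd (div_pos hε (by positivity) :
    0 < ε / (8 * C'))
  set δ : ℝ := δ' / 2 with hδdef
  have hδpos : 0 < δ := by positivity
  -- Near estimate
  have hNear : ∀ x ∈ Ω, dist x x₀ < δ →
      |∫ t in Ω ∩ Metric.ball x₀ δ, Real.log ‖x - t‖ * S (x, t) * u t| ≤ ε / 8 := by
    intro x hx hxd
    have hsub : Ω ∩ Metric.ball x₀ δ ⊆ Metric.ball x δ' := by
      intro t ht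
      simp only [Metric.mem_ball]
      have h1 : dist t x₀ < δ := ht.2
      calc dist t x ≤ dist t x₀ + dist x₀ x := dist_triangle _ _ _
        _ < δ + δ := by rw [dist_comm x₀ x]; linarith
        _ = δ' := by rw [hδdef]; ring
    have hball : IntegrableOn (fun t => abs (Real.log ‖x - t‖)) (Metric.ball x δ') volume := by
      refine hLint x (Metric.ball x δ') δ' ?_
      intro t ht
      simp only [Set.mem_preimage, Metric.mem_ball, dist_eq_norm] at ht ⊢
      rw [sub_zero]
      calc ‖t‖ = ‖x - t - x‖ := by rw [sub_sub_cancel_left, norm_neg]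
        _ < δ' := ht
    have step1 : |∫ t in Ω ∩ Metric.ball x₀ δ, Real.log ‖x - t‖ * S (x, t) * u t|
        ≤ ∫ t in Ω ∩ Metric.ball x₀ δ, ‖Real.log ‖x - t‖ * S (x, t) * u t‖ := by
      rw [← Real.norm_eq_abs]
      exact norm_integral_le_integral_norm _
    have hint1 : IntegrableOn (fun t => ‖Real.log ‖x - t‖ * S (x, t) * u t‖)
        (Ω ∩ Metric.ball x₀ δ) volume :=
      IntegrableOn.mono_set ((key x hx).norm) Set.inter_subset_left
    have hint2 : IntegrableOn (fun t => abs (Real.log ‖x - t‖) * (C * D))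
        (Ω ∩ Metric.ball x₀ δ) volume :=
      IntegrableOn.mono_set ((hLΩ x hx).mul_const (C * D)) Set.inter_subset_left
    have step2 : (∫ t in Ω ∩ Metric.ball x₀ δ, ‖Real.log ‖x - t‖ * S (x, t) * u t‖)
        ≤ ∫ t in Ω ∩ Metric.ball x₀ δ, abs (Real.log ‖x - t‖) * (C * D) := by
      refine setIntegral_mono_on hint1 hint2 (hΩm.inter measurableSet_ball) ?_
      intro t ht
      exact hptbound x hx t ht.1
    have step3 : (∫ t in Ω ∩ Metric.ball x₀ δ, abs (Real.log ‖x - t‖) * (C * D))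
        ≤ ∫ t in Metric.ball x δ', abs (Real.log ‖x - t‖) * (C * D) := by
      refine setIntegral_mono_set (hball.mul_const _) ?_ (HasSubset.Subset.eventuallyLE hsub)
      filter_upwards with t
      positivity
    have hset : ((fun t => x - t) ⁻¹' (Metric.ball x δ'))
        = Metric.ball (0 : EuclideanSpace ℝ (Fin d)) δ' := by
      ext t
      simp only [Set.mem_preimage, Metric.mem_ball, dist_eq_norm, sub_zero]
      constructor
      · intro h
        calc ‖t‖ = ‖x - t - x‖ := by rw [sub_sub_cancel_left, norm_neg]
          _ < δ' := h
      · intro h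
        calc ‖x - t - x‖ = ‖t‖ := by rw [sub_sub_cancel_left, norm_neg]
          _ < δ' := h
    have step4 : (∫ t in Metric.ball x δ', abs (Real.log ‖x - t‖) * (C * D))
        = (∫ t in Metric.ball (0 : EuclideanSpace ℝ (Fin d)) δ', abs (Real.log ‖t‖)) * (C * D) := by
      rw [integral_mul_const]
      congr 1
      rw [← aux5 x (Metric.ball x δ'), hset]
    have step5 : (∫ t in Metric.ball (0 : EuclideanSpace ℝ (Fin d)) δ', abs (Real.log ‖t‖)) * (C * D)
        ≤ (ε / (8 * C')) * C' := by
      have hnn : 0 ≤ ∫ t in Metric.ball (0:EuclideanSpace ℝ (Fin d)) δ', abs (Real.log ‖t‖) :=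
        setIntegral_nonneg measurableSet_ball (fun t _ => abs_nonneg _)
      have h1 : C * D ≤ C' := by rw [hC'def]; linarith
      calc (∫ t in Metric.ball (0 : EuclideanSpace ℝ (Fin d)) δ', abs (Real.log ‖t‖)) * (C * D)
          ≤ (∫ t in Metric.ball (0 : EuclideanSpace ℝ (Fin d)) δ', abs (Real.log ‖t‖)) * C' := by
            apply mul_le_mul le_rfl h1 (by positivity) hnn
        _ ≤ (ε / (8 * C')) * C' := by
            apply mul_le_mul hδ'int.le le_rfl hC'pos.le (by positivity)
    have : (ε / (8 * C')) * C' = ε / 8 := by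
      field_simp
    have hchain := (step1.trans step2).trans step3
    rw [step4] at hchain
    linarith [step5]
  -- Far part: continuity via dominated convergence
  have hKm : MeasurableSet (Ω \ Metric.ball x₀ δ) := hΩm.diff measurableSet_ball
  have hFar : ContinuousWithinAt
      (fun x => ∫ t in Ω \ Metric.ball x₀ δ, Real.log ‖x - t‖ * S (x, t) * u t) Ω x₀ := by
    apply continuousWithinAt_of_dominated
      (bound := fun _ => (|Real.log (δ/2)| + |Real.log (2*R)|) * (C * D))
    · filter_upwards [self_mem_nhdsWithin] with x hx
      exact (hmeas x hx).mono_measure (Measure.restrict_mono Set.diff_subset le_rfl)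
    · have hballmem : Metric.ball x₀ (δ/2) ∈ nhdsWithin x₀ Ω :=
        mem_nhdsWithin_of_mem_nhds (Metric.ball_mem_nhds x₀ (by positivity))
      filter_upwards [self_mem_nhdsWithin, hballmem] with x hx hxball
      filter_upwards [ae_restrict_mem hKm] with t ht
      have hxx₀ : dist x x₀ < δ/2 := by simpa [Metric.mem_ball] using hxball
      have htΩ : t ∈ Ω := ht.1
      have htfar : δ ≤ dist t x₀ := le_of_not_gt (fun h => ht.2 (by simpa [Metric.mem_ball]))
      have hlow : δ/2 ≤ ‖x - t‖ := by
        have h1 : dist t x₀ ≤ dist t x + dist x x₀ := dist_triangle _ _ _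
        have h2 : dist t x = ‖x - t‖ := by rw [dist_comm, dist_eq_norm]
        linarith
      have hpos : 0 < ‖x - t‖ := lt_of_lt_of_le (by positivity) hlow
      have hup : ‖x - t‖ ≤ 2 * R := by
        have h1 : ‖x‖ < R := by simpa [Metric.mem_ball, dist_zero_right] using hΩR hx
        have h2 : ‖t‖ < R := by simpa [Metric.mem_ball, dist_zero_right] using hΩR htΩ
        calc ‖x - t‖ ≤ ‖x‖ + ‖t‖ := norm_sub_le _ _
          _ ≤ 2 * R := by linarith
      have hlog : |Real.log ‖x - t‖| ≤ |Real.log (δ/2)| + |Real.log (2*R)| := by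
        rcases le_total ‖x - t‖ 1 with h | h
        · rw [abs_of_nonpos (Real.log_nonpos hpos.le h)]
          have h3 := Real.log_le_log (by positivity : (0:ℝ) < δ/2) hlow
          calc -Real.log ‖x - t‖ ≤ -Real.log (δ/2) := by linarith
            _ ≤ |Real.log (δ/2)| := neg_le_abs _
            _ ≤ _ := le_add_of_nonneg_right (abs_nonneg _)
        · rw [abs_of_nonneg (Real.log_nonneg h)]
          have h3 := Real.log_le_log hpos hup
          calc Real.log ‖x - t‖ ≤ Real.log (2*R) := h3
            _ ≤ |Real.log (2*R)| := le_abs_self _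
            _ ≤ _ := le_add_of_nonneg_left (abs_nonneg _)
      calc ‖Real.log ‖x - t‖ * S (x, t) * u t‖
          ≤ |Real.log ‖x - t‖| * (C * D) := hptbound x hx t htΩ
        _ ≤ (|Real.log (δ/2)| + |Real.log (2*R)|) * (C * D) :=
            mul_le_mul_of_nonneg_right hlog (by positivity)
    · exact integrableOn_const (lt_of_le_of_lt
        (measure_mono Set.diff_subset) hΩ.measure_lt_top).ne
    · filter_upwards [ae_restrict_mem hKm] with t ht
      have htΩ : t ∈ Ω := ht.1
      have htfar : δ ≤ dist t x₀ := le_of_not_gt (fun h => ht.2 (by simpa [Metric.mem_ball]))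
      have hne0 : ‖x₀ - t‖ ≠ 0 := by
        rw [norm_ne_zero_iff, sub_ne_zero]
        intro h
        rw [← h] at htfar
        simp [dist_self] at htfar
        linarith
      have c1 : ContinuousWithinAt (fun x => Real.log ‖x - t‖) Ω x₀ := by
        apply ContinuousAt.continuousWithinAt
        have hnorm : ContinuousAt (fun x : EuclideanSpace ℝ (Fin d) => ‖x - t‖) x₀ := by
          fun_prop
        exact ContinuousAt.comp (g := Real.log)
          (f := fun x : EuclideanSpace ℝ (Fin d) => ‖x - t‖) (Real.continuousAt_log hne0) hnorm
      have c2 : ContinuousWithinAt (fun x => S (x, t)) Ω x₀ := by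
        have hSc : ContinuousWithinAt S (Ω ×ˢ Ω) (x₀, t) := hS (x₀, t) ⟨hx₀, htΩ⟩
        have hmap : Set.MapsTo (fun y : EuclideanSpace ℝ (Fin d) => (y, t)) Ω (Ω ×ˢ Ω) :=
          fun y hy => ⟨hy, htΩ⟩
        have hcont : ContinuousWithinAt (fun y : EuclideanSpace ℝ (Fin d) => (y, t)) Ω x₀ :=
          Continuous.continuousWithinAt (by fun_prop)
        exact ContinuousWithinAt.comp hSc hcont hmap
      exact (c1.mul c2).mul continuousWithinAt_const
  -- assemble
  rw [Metric.continuousWithinAt_iff] at hFar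
  obtain ⟨η₁, hη₁pos, hη₁⟩ := hFar (ε/2) (by positivity)
  refine ⟨min η₁ δ, by positivity, ?_⟩
  intro x hxΩ hxd
  have hd1 : dist x x₀ < η₁ := lt_of_lt_of_le hxd (min_le_left _ _)
  have hd2 : dist x x₀ < δ := lt_of_lt_of_le hxd (min_le_right _ _)
  have hsplit : ∀ y ∈ Ω, (∫ t in Ω, Real.log ‖y - t‖ * S (y, t) * u t)
      = (∫ t in Ω ∩ Metric.ball x₀ δ, Real.log ‖y - t‖ * S (y, t) * u t)
        + (∫ t in Ω \ Metric.ball x₀ δ, Real.log ‖y - t‖ * S (y, t) * u t) := fun y hy =>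
    (integral_inter_add_diff measurableSet_ball (key y hy)).symm
  rw [Real.dist_eq, hsplit x hxΩ, hsplit x₀ hx₀]
  have hN1 := hNear x hxΩ hd2
  have hN2 := hNear x₀ hx₀ (by simpa [dist_self] using hδpos)
  have hF := hη₁ hxΩ hd1
  rw [Real.dist_eq] at hF
  obtain ⟨hb1, hb2⟩ := abs_le.1 hN1
  obtain ⟨hb3, hb4⟩ := abs_le.1 hN2
  obtain ⟨hb5, hb6⟩ := abs_lt.1 hF
  rw [abs_lt]
  constructor <;> linarith
end

section
/- Let d ≥ 1, let Ω ⊂ ℝ^d be a nonempty compact set, and let S : Ω × Ω → ℝ be continuous. Then the supremum M := sup_{x ∈ Ω} ∫_Ω |ln‖x − t‖ · S(x,t)| dt is finite, and the weakly singular integral operator F defined by (F u)(x) = ∫_Ω ln‖x − t‖ · S(x,t) · u(t) dt is a bounded linear operator from the space C(Ω) of continuous real-valued functions on Ω with the supremum norm to itself, with ‖F u‖_∞ ≤ M · ‖u‖_∞ for every u ∈ C(Ω). -/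
open MeasureTheory
open Set Metric Filter

section aux
variable {d : ℕ}

local notation "E" => EuclideanSpace ℝ (Fin d)

lemma log_integrableOn_ball_one (hd : 1 ≤ d) :
    IntegrableOn (fun y : E => Real.log ‖y‖) (ball (0 : E) 1) := by
  have hm : Measurable fun y : E => Real.log ‖y‖ :=
    Real.measurable_log.comp measurable_norm
  refine ⟨hm.aestronglyMeasurable, ?_⟩
  rw [hasFiniteIntegral_iff_norm]
  have hcong : ∀ᵐ y ∂(volume.restrict (ball (0 : E) 1)),
      ENNReal.ofReal ‖Real.log ‖y‖‖ = ENNReal.ofReal (-Real.log ‖y‖) := by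
    refine (ae_restrict_iff' measurableSet_ball).2 (Eventually.of_forall fun y hy => ?_)
    rcases eq_or_ne y 0 with rfl | hy0
    · simp
    · have h1 : ‖y‖ < 1 := by simpa [mem_ball, dist_eq_norm] using hy
      have h0 : 0 < ‖y‖ := norm_pos_iff.2 hy0
      have : Real.log ‖y‖ < 0 := Real.log_neg h0 h1
      rw [Real.norm_eq_abs, abs_of_neg this]
  rw [lintegral_congr_ae hcong]
  have hnn : 0 ≤ᵐ[volume.restrict (ball (0 : E) 1)] fun y : E => -Real.log ‖y‖ := by
    refine (ae_restrict_iff' measurableSet_ball).2 (Eventually.of_forall fun y hy => ?_)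
    rcases eq_or_ne y 0 with rfl | hy0
    · simp
    · have h1 : ‖y‖ ≤ 1 := le_of_lt (by simpa [mem_ball, dist_eq_norm] using hy)
      have h0 : 0 < ‖y‖ := norm_pos_iff.2 hy0
      simpa using (Real.log_nonpos h0.le h1)
  rw [lintegral_eq_lintegral_meas_le _ hnn ((hm.neg).aemeasurable)]
  set D := Module.finrank ℝ (EuclideanSpace ℝ (Fin d)) with hD
  have hDd : D = d := by simp [hD]
  have hbound : ∀ t : ℝ, (volume.restrict (ball (0 : E) 1)) {a : E | t ≤ -Real.log ‖a‖}
      ≤ volume (closedBall (0 : E) (Real.exp (-t))) := by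
    intro t
    have hms : MeasurableSet {a : E | t ≤ -Real.log ‖a‖} :=
      measurableSet_le measurable_const hm.neg
    rw [Measure.restrict_apply hms]
    refine measure_mono ?_
    rintro a ⟨ht, ha⟩
    have ht' : Real.log ‖a‖ ≤ -t := by
      have : t ≤ -Real.log ‖a‖ := ht
      linarith
    rcases eq_or_ne a 0 with rfl | ha0
    · simp [Real.exp_nonneg]
    · have h0 : 0 < ‖a‖ := norm_pos_iff.2 ha0
      have : ‖a‖ ≤ Real.exp (-t) := by
        calc ‖a‖ = Real.exp (Real.log ‖a‖) := (Real.exp_log h0).symm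
        _ ≤ Real.exp (-t) := Real.exp_le_exp.2 ht'
      simpa [mem_closedBall, dist_eq_norm] using this
  calc ∫⁻ t in Ioi (0:ℝ), (volume.restrict (ball (0 : E) 1)) {a : E | t ≤ -Real.log ‖a‖}
      ≤ ∫⁻ t in Ioi (0:ℝ), volume (closedBall (0 : E) (Real.exp (-t))) :=
        lintegral_mono fun t => hbound t
    _ = ∫⁻ t in Ioi (0:ℝ), ENNReal.ofReal (Real.exp (-(D : ℝ) * t)) *
          volume (ball (0 : E) 1) := by
        refine lintegral_congr fun t => ?_
        rw [Measure.addHaar_closedBall _ _ (Real.exp_nonneg _)]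
        congr 2
        rw [← Real.exp_nat_mul]
        simp only [hD]
        ring_nf
    _ = (∫⁻ t in Ioi (0:ℝ), ENNReal.ofReal (Real.exp (-(D : ℝ) * t))) *
          volume (ball (0 : E) 1) :=
        lintegral_mul_const' _ _ measure_ball_lt_top.ne
    _ < ⊤ := by
        refine ENNReal.mul_lt_top ?_ measure_ball_lt_top
        have hD0 : (0:ℝ) < (D:ℝ) := by
          rw [hDd]; exact_mod_cast hd
        exact (exp_neg_integrableOn_Ioi 0 hD0).setLIntegral_lt_top

lemma abs_log_integrableOn_ball (hd : 1 ≤ d) (r : ℝ) :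
    IntegrableOn (fun y : E => |Real.log ‖y‖|) (ball (0 : E) r) := by
  have hm : Measurable fun y : E => Real.log ‖y‖ :=
    Real.measurable_log.comp measurable_norm
  have h2 : IntegrableOn (fun y : E => Real.log ‖y‖) (ball (0 : E) r \ ball (0 : E) 1) := by
    have hms : MeasurableSet (ball (0 : E) r \ ball (0 : E) 1) :=
      measurableSet_ball.diff measurableSet_ball
    refine Measure.integrableOn_of_bounded
      (ne_of_lt (lt_of_le_of_lt (measure_mono diff_subset) measure_ball_lt_top))
      hm.aestronglyMeasurable (M := |Real.log r|) ?_
    · refine (ae_restrict_iff' hms).2 (Eventually.of_forall fun y hy => ?_)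
      obtain ⟨hyr, hy1⟩ := hy
      have h1 : 1 ≤ ‖y‖ := by
        by_contra h
        exact hy1 (by simpa [mem_ball, dist_eq_norm] using lt_of_not_ge h)
      have hr : ‖y‖ < r := by simpa [mem_ball, dist_eq_norm] using hyr
      have h0 : 0 ≤ Real.log ‖y‖ := Real.log_nonneg h1
      rw [Real.norm_eq_abs, abs_of_nonneg h0]
      calc Real.log ‖y‖ ≤ Real.log r := Real.log_le_log (lt_of_lt_of_le zero_lt_one h1) hr.le
        _ ≤ |Real.log r| := le_abs_self _
  have hsub : ball (0 : E) r ⊆ ball (0 : E) 1 ∪ (ball (0 : E) r \ ball (0 : E) 1) := by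
    intro y hy
    by_cases h : y ∈ ball (0 : E) 1
    · exact Or.inl h
    · exact Or.inr ⟨hy, h⟩
  exact (((log_integrableOn_ball_one hd).union h2).mono_set hsub).abs

end aux

section aux2
variable {d : ℕ}
local notation "E" => EuclideanSpace ℝ (Fin d)

lemma sub_left_preimage_ball (x : E) (r : ℝ) :
    (fun t : E => x - t) ⁻¹' (ball (0 : E) r) = ball x r := by
  ext t
  simp [mem_ball, dist_eq_norm, norm_sub_rev]

lemma abs_log_shift_integrableOn (hd : 1 ≤ d) (x : E) (r : ℝ) :
    IntegrableOn (fun t : E => |Real.log ‖x - t‖|) (ball x r) := by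
  have hmp : MeasurePreserving (fun t : E => x - t) volume volume :=
    Measure.measurePreserving_sub_left volume x
  have hemb : MeasurableEmbedding (fun t : E => x - t) :=
    (MeasurableEquiv.subLeft x).measurableEmbedding
  have := (hmp.integrableOn_comp_preimage hemb).2 (abs_log_integrableOn_ball hd r)
  rwa [sub_left_preimage_ball] at this

lemma abs_log_shift_integral (x : E) (r : ℝ) :
    ∫ t in ball x r, |Real.log ‖x - t‖| = ∫ y in ball (0 : E) r, |Real.log ‖y‖| := by
  have hmp : MeasurePreserving (fun t : E => x - t) volume volume :=
    Measure.measurePreserving_sub_left volume x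
  have hemb : MeasurableEmbedding (fun t : E => x - t) :=
    (MeasurableEquiv.subLeft x).measurableEmbedding
  rw [← sub_left_preimage_ball x r]
  exact hmp.setIntegral_preimage_emb hemb (fun y => |Real.log ‖y‖|) _

/-- key uniform bound -/
lemma setIntegral_abs_log_le (hd : 1 ≤ d) (x : E) {Ω : Set E} (hms : MeasurableSet Ω)
    {r : ℝ} (hsub : Ω ⊆ ball x r) :
    ∫ t in Ω, |Real.log ‖x - t‖| ≤ ∫ y in ball (0 : E) r, |Real.log ‖y‖| := by
  rw [← abs_log_shift_integral x r]
  refine setIntegral_mono_set (abs_log_shift_integrableOn hd x r) ?_ (HasSubset.Subset.eventuallyLE hsub)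
  exact (ae_restrict_iff' measurableSet_ball).2 (Eventually.of_forall fun y _ => abs_nonneg _)

lemma tendsto_L (hd : 1 ≤ d) :
    Tendsto (fun n : ℕ => ∫ y in ball (0 : E) (Real.exp (-(n : ℝ))), |Real.log ‖y‖|)
      atTop (nhds 0) := by
  haveI : Nontrivial (EuclideanSpace ℝ (Fin d)) := by
    have : Nonempty (Fin d) := ⟨⟨0, hd⟩⟩
    infer_instance
  have hm : Measurable fun y : E => |Real.log ‖y‖| :=
    (Real.measurable_log.comp measurable_norm).abs
  have key : Tendsto (fun n : ℕ => ∫ y : E,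
      (ball (0 : E) (Real.exp (-(n : ℝ)))).indicator (fun y => |Real.log ‖y‖|) y) atTop
      (nhds (∫ _ : E, (0:ℝ))) := by
    refine tendsto_integral_of_dominated_convergence
      ((ball (0 : E) 1).indicator fun y => |Real.log ‖y‖|)
      (fun n => (hm.indicator measurableSet_ball).aestronglyMeasurable)
      ((abs_log_integrableOn_ball hd 1).integrable_indicator measurableSet_ball)
      (fun n => Eventually.of_forall fun y => ?_) ?_
    · by_cases hy : y ∈ ball (0 : E) (Real.exp (-(n : ℝ)))
      · have h1 : y ∈ ball (0 : E) 1 := by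
          have := mem_ball.1 hy
          exact mem_ball.2 (lt_of_lt_of_le this (Real.exp_le_one_iff.2 (neg_nonpos.2 (Nat.cast_nonneg n))))
        rw [indicator_of_mem hy, indicator_of_mem h1, Real.norm_eq_abs, abs_abs]
      · rw [indicator_of_notMem hy]
        simp only [norm_zero]
        exact indicator_nonneg (fun y _ => abs_nonneg _) _
    · have h0 : ∀ᵐ y : E ∂volume, y ≠ 0 := by
        refine ae_iff.2 ?_
        simp only [ne_eq, not_not]
        have : {y : E | y = 0} = {(0:E)} := by ext y; simp
        rw [this]
        exact measure_singleton 0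
      filter_upwards [h0] with y hy
      have hpos : 0 < ‖y‖ := norm_pos_iff.2 hy
      have hev : ∀ᶠ n : ℕ in atTop,
          (ball (0 : E) (Real.exp (-(n : ℝ)))).indicator (fun y => |Real.log ‖y‖|) y = 0 := by
        have : Tendsto (fun n : ℕ => Real.exp (-(n : ℝ))) atTop (nhds 0) := by
          refine Real.tendsto_exp_atBot.comp ?_
          exact tendsto_neg_atBot_iff.2 tendsto_natCast_atTop_atTop
        filter_upwards [this.eventually (eventually_lt_nhds hpos)] with n hn
        refine indicator_of_notMem ?_ _
        simp only [mem_ball, dist_eq_norm, sub_zero, not_lt]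
        exact hn.le
      exact tendsto_const_nhds.congr' (hev.mono fun n h => h.symm)
  simp only [integral_zero] at key
  refine key.congr fun n => ?_
  rw [integral_indicator measurableSet_ball]

end aux2
set_option maxHeartbeats 1000000 in

/-- For a nonempty compact `Ω ⊂ ℝ^d` and continuous `S : Ω × Ω → ℝ`, the quantity
`M = sup_{x ∈ Ω} ∫_Ω |ln‖x − t‖ · S(x,t)| dt` is finite, and the weakly singular
integral operator `(F u)(x) = ∫_Ω ln‖x − t‖ · S(x,t) · u(t) dt` is a bounded linear
operator from `C(Ω)` to itself: it maps continuous functions to continuous functions,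
is additive and homogeneous, and satisfies `‖F u‖_∞ ≤ M · ‖u‖_∞`. -/
theorem log_kernel_operator_bounded (d : ℕ) (hd : 1 ≤ d)
    (Ω : Set (EuclideanSpace ℝ (Fin d))) (hΩ : IsCompact Ω) (hne : Ω.Nonempty)
    (S : EuclideanSpace ℝ (Fin d) × EuclideanSpace ℝ (Fin d) → ℝ)
    (hS : ContinuousOn S (Ω ×ˢ Ω)) :
    BddAbove ((fun x => ∫ t in Ω, |Real.log ‖x - t‖ * S (x, t)|) '' Ω) ∧
    ∀ u : EuclideanSpace ℝ (Fin d) → ℝ, ContinuousOn u Ω →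
      (ContinuousOn (fun x => ∫ t in Ω, Real.log ‖x - t‖ * S (x, t) * u t) Ω ∧
      (∀ v : EuclideanSpace ℝ (Fin d) → ℝ, ContinuousOn v Ω → ∀ x ∈ Ω,
        (∫ t in Ω, Real.log ‖x - t‖ * S (x, t) * (u t + v t)) =
          (∫ t in Ω, Real.log ‖x - t‖ * S (x, t) * u t) +
          ∫ t in Ω, Real.log ‖x - t‖ * S (x, t) * v t) ∧
      (∀ a : ℝ, ∀ x ∈ Ω,
        (∫ t in Ω, Real.log ‖x - t‖ * S (x, t) * (a * u t)) =
          a * ∫ t in Ω, Real.log ‖x - t‖ * S (x, t) * u t) ∧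
      ∀ x ∈ Ω, |∫ t in Ω, Real.log ‖x - t‖ * S (x, t) * u t| ≤
        sSup ((fun x => ∫ t in Ω, |Real.log ‖x - t‖ * S (x, t)|) '' Ω) *
          sSup ((fun t => |u t|) '' Ω)) := by
  haveI : Nontrivial (EuclideanSpace ℝ (Fin d)) := by
    have : Nonempty (Fin d) := ⟨⟨0, hd⟩⟩
    infer_instance
  have hmsΩ : MeasurableSet Ω := hΩ.measurableSet
  obtain ⟨R, hR⟩ := hΩ.isBounded.subset_closedBall 0
  set r0 : ℝ := 2 * R + 1 with hr0
  have hΩball : ∀ x ∈ Ω, Ω ⊆ ball x r0 := by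
    intro x hx t ht
    have h1 : ‖t‖ ≤ R := by simpa [mem_closedBall, dist_eq_norm] using hR ht
    have h2 : ‖x‖ ≤ R := by simpa [mem_closedBall, dist_eq_norm] using hR hx
    have : ‖t - x‖ ≤ 2 * R := by
      calc ‖t - x‖ ≤ ‖t‖ + ‖x‖ := norm_sub_le _ _
        _ ≤ 2 * R := by linarith
    rw [mem_ball, dist_eq_norm]
    linarith
  -- bound on S
  obtain ⟨MS0, hMS0⟩ := (hΩ.prod hΩ).exists_bound_of_continuousOn hS
  set MS : ℝ := max MS0 0 with hMSdef
  have hMSnn : 0 ≤ MS := le_max_right _ _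
  have hMS : ∀ x ∈ Ω, ∀ t ∈ Ω, |S (x, t)| ≤ MS := fun x hx t ht =>
    le_trans (hMS0 (x, t) ⟨hx, ht⟩) (le_max_left _ _)
  -- measurability of log kernel
  have hlogmeas : ∀ x : EuclideanSpace ℝ (Fin d),
      Measurable fun t : EuclideanSpace ℝ (Fin d) => Real.log ‖x - t‖ :=
    fun x => Real.measurable_log.comp (measurable_const.sub measurable_id).norm
  have hmeasS : ∀ x ∈ Ω, AEStronglyMeasurable (fun t => S (x, t)) (volume.restrict Ω) := by
    intro x hx
    refine (ContinuousOn.comp hS (Continuous.continuousOn (by fun_prop)) ?_).aestronglyMeasurable hmsΩ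
    exact fun t ht => ⟨hx, ht⟩
  -- integrability of |log| kernel on Ω
  have hAbs : ∀ x ∈ Ω, IntegrableOn (fun t => |Real.log ‖x - t‖|) Ω := fun x hx =>
    (abs_log_shift_integrableOn hd x r0).mono_set (hΩball x hx)
  -- integrability of |log * S| on Ω
  have hAbsKS : ∀ x ∈ Ω, IntegrableOn (fun t => |Real.log ‖x - t‖ * S (x, t)|) Ω := by
    intro x hx
    have hm1 := (((hlogmeas x).aestronglyMeasurable.mul (hmeasS x hx))).norm
    simp only [Real.norm_eq_abs] at hm1
    refine Integrable.mono' ((hAbs x hx).mul_const MS) hm1 ?_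
    refine (ae_restrict_iff' hmsΩ).2 (Filter.Eventually.of_forall fun t ht => ?_)
    rw [Real.norm_eq_abs, abs_abs, abs_mul]
    exact mul_le_mul_of_nonneg_left (hMS x hx t ht) (abs_nonneg _)
  -- integrability of the full integrand
  have hint : ∀ w : EuclideanSpace ℝ (Fin d) → ℝ, ContinuousOn w Ω → ∀ x ∈ Ω,
      IntegrableOn (fun t => Real.log ‖x - t‖ * S (x, t) * w t) Ω := by
    intro w hw x hx
    obtain ⟨Mw0, hMw0⟩ := hΩ.exists_bound_of_continuousOn hw
    set Mw : ℝ := max Mw0 0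
    have hMw : ∀ t ∈ Ω, |w t| ≤ Mw := fun t ht => le_trans (hMw0 t ht) (le_max_left _ _)
    refine Integrable.mono' ((hAbs x hx).mul_const (MS * Mw))
      (((hlogmeas x).aestronglyMeasurable.mul (hmeasS x hx)).mul
        (hw.aestronglyMeasurable hmsΩ)) ?_
    refine (ae_restrict_iff' hmsΩ).2 (Filter.Eventually.of_forall fun t ht => ?_)
    rw [Real.norm_eq_abs, abs_mul, abs_mul, mul_assoc]
    refine mul_le_mul_of_nonneg_left ?_ (abs_nonneg _)
    exact mul_le_mul (hMS x hx t ht) (hMw t ht) (abs_nonneg _) hMSnn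
  -- Part 1 : BddAbove
  have hBdd : BddAbove ((fun x => ∫ t in Ω, |Real.log ‖x - t‖ * S (x, t)|) '' Ω) := by
    refine ⟨(∫ y in ball (0 : EuclideanSpace ℝ (Fin d)) r0, |Real.log ‖y‖|) * MS, ?_⟩
    rintro _ ⟨x, hx, rfl⟩
    calc (∫ t in Ω, |Real.log ‖x - t‖ * S (x, t)|)
        ≤ ∫ t in Ω, |Real.log ‖x - t‖| * MS := by
          refine integral_mono_of_nonneg
            ((ae_restrict_iff' hmsΩ).2 (Filter.Eventually.of_forall fun t _ => abs_nonneg _))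
            ((hAbs x hx).mul_const MS)
            ((ae_restrict_iff' hmsΩ).2 (Filter.Eventually.of_forall fun t ht => ?_))
          simp only [abs_mul]
          exact mul_le_mul_of_nonneg_left (hMS x hx t ht) (abs_nonneg _)
      _ = (∫ t in Ω, |Real.log ‖x - t‖|) * MS := by rw [integral_mul_const]
      _ ≤ (∫ y in ball (0 : EuclideanSpace ℝ (Fin d)) r0, |Real.log ‖y‖|) * MS :=
          mul_le_mul_of_nonneg_right (setIntegral_abs_log_le hd x hmsΩ (hΩball x hx)) hMSnn
  refine ⟨hBdd, fun u hu => ?_⟩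
  obtain ⟨Mu0, hMu0⟩ := hΩ.exists_bound_of_continuousOn hu
  set Mu : ℝ := max Mu0 0 with hMudef
  have hMunn : 0 ≤ Mu := le_max_right _ _
  have hMu : ∀ t ∈ Ω, |u t| ≤ Mu := fun t ht => le_trans (hMu0 t ht) (le_max_left _ _)
  refine ⟨?_, ?_, ?_, ?_⟩
  · -- continuity
    set c : ℝ := max (2 * R) 1 with hc
    have hc1 : (1:ℝ) ≤ c := le_max_right _ _
    have hfar : ∀ x ∈ Ω, ∀ t ∈ Ω, ‖x - t‖ ≤ c := by
      intro x hx t ht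
      have h1 : ‖t‖ ≤ R := by simpa [mem_closedBall, dist_eq_norm] using hR ht
      have h2 : ‖x‖ ≤ R := by simpa [mem_closedBall, dist_eq_norm] using hR hx
      have h3 : ‖x - t‖ ≤ 2 * R := by
        calc ‖x - t‖ ≤ ‖x‖ + ‖t‖ := norm_sub_le _ _
          _ ≤ 2 * R := by linarith
      exact le_trans h3 (le_max_left _ _)
    set Kn : ℕ → EuclideanSpace ℝ (Fin d) → EuclideanSpace ℝ (Fin d) → ℝ :=
      fun n x t => Real.log (max ‖x - t‖ (Real.exp (-(n : ℝ)))) with hKn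
    have hKpos : ∀ n : ℕ, ∀ x t : EuclideanSpace ℝ (Fin d),
        0 < max ‖x - t‖ (Real.exp (-(n : ℝ))) :=
      fun n x t => lt_of_lt_of_le (Real.exp_pos _) (le_max_right _ _)
    have hKcont : ∀ n : ℕ, Continuous fun p : EuclideanSpace ℝ (Fin d) × EuclideanSpace ℝ (Fin d)
        => Kn n p.1 p.2 := by
      intro n
      exact ((continuous_fst.sub continuous_snd).norm.max continuous_const).log
        fun p => ne_of_gt (hKpos n p.1 p.2)
    have hKbound : ∀ n : ℕ, ∀ x ∈ Ω, ∀ t ∈ Ω, |Kn n x t| ≤ (n : ℝ) + |Real.log c| := by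
      intro n x hx t ht
      have h1 : Real.exp (-(n : ℝ)) ≤ max ‖x - t‖ (Real.exp (-(n : ℝ))) := le_max_right _ _
      have h2 : max ‖x - t‖ (Real.exp (-(n : ℝ))) ≤ c :=
        max_le (hfar x hx t ht)
          (le_trans (Real.exp_le_one_iff.2 (neg_nonpos.2 (Nat.cast_nonneg n))) hc1)
      have hl : -(n : ℝ) ≤ Kn n x t := by
        have := Real.log_le_log (Real.exp_pos _) h1
        rwa [Real.log_exp] at this
      have hr2 : Kn n x t ≤ Real.log c := Real.log_le_log (hKpos n x t) h2
      rw [abs_le]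
      constructor
      · have h3 : (0:ℝ) ≤ |Real.log c| := abs_nonneg _
        linarith
      · have h3 : Real.log c ≤ |Real.log c| := le_abs_self _
        have h0 : (0:ℝ) ≤ (n:ℝ) := Nat.cast_nonneg n
        linarith
    have hintKn : ∀ n : ℕ, ∀ x ∈ Ω,
        IntegrableOn (fun t => Kn n x t * S (x, t) * u t) Ω := by
      intro n x hx
      haveI : IsFiniteMeasure (volume.restrict Ω) :=
        ⟨by rw [Measure.restrict_apply_univ]; exact hΩ.measure_lt_top⟩
      refine Integrable.mono' (integrable_const (((n : ℝ) + |Real.log c|) * (MS * Mu)))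
        ((((hKcont n).comp (Continuous.prodMk_right x)).aestronglyMeasurable.mul (hmeasS x hx)).mul
          (hu.aestronglyMeasurable hmsΩ)) ?_
      refine (ae_restrict_iff' hmsΩ).2 (Filter.Eventually.of_forall fun t ht => ?_)
      rw [Real.norm_eq_abs, abs_mul, abs_mul, mul_assoc]
      refine mul_le_mul (hKbound n x hx t ht)
        (mul_le_mul (hMS x hx t ht) (hMu t ht) (abs_nonneg _) hMSnn)
        (mul_nonneg (abs_nonneg _) (abs_nonneg _)) (by positivity)
    have hA : ∀ n : ℕ, ContinuousOn (fun x => ∫ t in Ω, Kn n x t * S (x, t) * u t) Ω := by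
      intro n x₀ hx₀
      have hx₀mem : Ω ∈ nhdsWithin x₀ Ω := self_mem_nhdsWithin
      refine tendsto_integral_filter_of_dominated_convergence
        (fun _ => ((n : ℝ) + |Real.log c|) * (MS * Mu)) ?_ ?_ ?_ ?_
      · filter_upwards [hx₀mem] with x hx
        exact (((hKcont n).comp (Continuous.prodMk_right x)).aestronglyMeasurable.mul
          (hmeasS x hx)).mul (hu.aestronglyMeasurable hmsΩ)
      · filter_upwards [hx₀mem] with x hx
        refine (ae_restrict_iff' hmsΩ).2 (Filter.Eventually.of_forall fun t ht => ?_)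
        rw [Real.norm_eq_abs, abs_mul, abs_mul, mul_assoc]
        refine mul_le_mul (hKbound n x hx t ht)
          (mul_le_mul (hMS x hx t ht) (hMu t ht) (abs_nonneg _) hMSnn)
          (mul_nonneg (abs_nonneg _) (abs_nonneg _)) (by positivity)
      · exact integrableOn_const hΩ.measure_lt_top.ne
      · refine (ae_restrict_iff' hmsΩ).2 (Filter.Eventually.of_forall fun t ht => ?_)
        have h1 : Filter.Tendsto (fun x => Kn n x t) (nhdsWithin x₀ Ω) (nhds (Kn n x₀ t)) :=
          (((hKcont n).comp (continuous_id.prodMk continuous_const)).continuousAt).continuousWithinAt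
        have h2 : Filter.Tendsto (fun x => S (x, t)) (nhdsWithin x₀ Ω) (nhds (S (x₀, t))) := by
          have hg : ContinuousWithinAt (fun x : EuclideanSpace ℝ (Fin d) => (x, t)) Ω x₀ :=
            (continuous_id.prodMk continuous_const).continuousWithinAt
          have hg' := hg.tendsto_nhdsWithin
            (fun x (hx : x ∈ Ω) => Set.mk_mem_prod hx ht)
          exact Filter.Tendsto.comp (hS (x₀, t) ⟨hx₀, ht⟩) hg'
        exact (h1.mul h2).mul tendsto_const_nhds
    have hB : TendstoUniformlyOn (fun n x => ∫ t in Ω, Kn n x t * S (x, t) * u t)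
        (fun x => ∫ t in Ω, Real.log ‖x - t‖ * S (x, t) * u t) Filter.atTop Ω := by
      rw [Metric.tendstoUniformlyOn_iff]
      intro ε hε
      have hten : Filter.Tendsto (fun n : ℕ => (MS * Mu) *
          ∫ y in ball (0 : EuclideanSpace ℝ (Fin d)) (Real.exp (-(n : ℝ))), |Real.log ‖y‖|)
          Filter.atTop (nhds 0) := by
        simpa using (tendsto_L hd).const_mul (MS * Mu)
      filter_upwards [hten.eventually (gt_mem_nhds hε)] with n hn x hx
      rw [Real.dist_eq]
      refine lt_of_le_of_lt ?_ hn
      set δ : ℝ := Real.exp (-(n : ℝ)) with hδ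
      have haex : ∀ᵐ t : EuclideanSpace ℝ (Fin d) ∂volume, t ≠ x := by
        refine ae_iff.2 ?_
        simp only [ne_eq, not_not]
        have hset : {t : EuclideanSpace ℝ (Fin d) | t = x} = {x} := by ext t; simp
        rw [hset]; exact measure_singleton x
      have key : |(∫ t in Ω, Real.log ‖x - t‖ * S (x, t) * u t)
          - ∫ t in Ω, Kn n x t * S (x, t) * u t|
          ≤ (∫ y in ball (0 : EuclideanSpace ℝ (Fin d)) δ, |Real.log ‖y‖|) * (MS * Mu) := by
        rw [← integral_sub (hint u hu x hx) (hintKn n x hx)]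
        calc |∫ t in Ω, (Real.log ‖x - t‖ * S (x, t) * u t - Kn n x t * S (x, t) * u t)|
            ≤ ∫ t in Ω, |Real.log ‖x - t‖ * S (x, t) * u t - Kn n x t * S (x, t) * u t| := by
              simpa only [Real.norm_eq_abs] using
                norm_integral_le_integral_norm (μ := volume.restrict Ω)
                  (fun t => Real.log ‖x - t‖ * S (x, t) * u t - Kn n x t * S (x, t) * u t)
          _ ≤ ∫ t in Ω, (ball x δ).indicator
                (fun t => |Real.log ‖x - t‖|) t * (MS * Mu) := by
              refine integral_mono_of_nonneg
                ((ae_restrict_iff' hmsΩ).2 (Filter.Eventually.of_forall fun t _ => abs_nonneg _))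
                (((hAbs x hx).indicator measurableSet_ball).mul_const (MS * Mu)) ?_
              have hmem : ∀ᵐ t ∂(volume.restrict Ω), t ∈ Ω :=
                (ae_restrict_iff' hmsΩ).2 (Filter.Eventually.of_forall fun t ht => ht)
              filter_upwards [hmem, ae_restrict_of_ae haex] with t ht htx
              have hfactor : Real.log ‖x - t‖ * S (x, t) * u t - Kn n x t * S (x, t) * u t
                  = (Real.log ‖x - t‖ - Kn n x t) * (S (x, t) * u t) := by ring
              rw [hfactor, abs_mul]
              by_cases hcase : δ ≤ ‖x - t‖
              · have heq : Kn n x t = Real.log ‖x - t‖ := by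
                  simp only [hKn]; rw [max_eq_left hcase]
                rw [heq]
                simp only [sub_self, abs_zero, zero_mul]
                exact mul_nonneg (indicator_nonneg (fun y _ => abs_nonneg _) _) (by positivity)
              · push_neg at hcase
                have htball : t ∈ ball x δ := by
                  rw [mem_ball, dist_eq_norm, norm_sub_rev]
                  exact hcase
                rw [indicator_of_mem htball]
                have hpos : 0 < ‖x - t‖ := by
                  rw [norm_pos_iff, sub_ne_zero]
                  exact fun h => htx h.symm
                have hloge : Real.log ‖x - t‖ ≤ -(n : ℝ) := by
                  have := Real.log_le_log hpos hcase.le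
                  rwa [hδ, Real.log_exp] at this
                have hKneq : Kn n x t = -(n : ℝ) := by
                  simp only [hKn]
                  rw [max_eq_right hcase.le, hδ, Real.log_exp]
                have habs1 : |Real.log ‖x - t‖ - Kn n x t| ≤ |Real.log ‖x - t‖| := by
                  rw [hKneq]
                  have hn0 : (0:ℝ) ≤ (n:ℝ) := Nat.cast_nonneg n
                  rw [abs_of_nonpos (by linarith), abs_of_nonpos (by linarith)]
                  linarith
                refine mul_le_mul habs1 ?_ (abs_nonneg _) (abs_nonneg _)
                rw [abs_mul]
                exact mul_le_mul (hMS x hx t ht) (hMu t ht) (abs_nonneg _) hMSnn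
          _ = (∫ t in Ω, (ball x δ).indicator (fun t => |Real.log ‖x - t‖|) t) * (MS * Mu) := by
              rw [integral_mul_const]
          _ ≤ (∫ y in ball (0 : EuclideanSpace ℝ (Fin d)) δ, |Real.log ‖y‖|) * (MS * Mu) := by
              refine mul_le_mul_of_nonneg_right ?_ (by positivity)
              rw [integral_indicator measurableSet_ball,
                Measure.restrict_restrict measurableSet_ball]
              exact setIntegral_abs_log_le hd x (measurableSet_ball.inter hmsΩ) inter_subset_left
      exact key.trans (le_of_eq (mul_comm _ _))
    exact hB.continuousOn (Filter.Eventually.of_forall hA).frequently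
  · -- additivity
    intro v hv x hx
    simp only [mul_add]
    exact integral_add (hint u hu x hx) (hint v hv x hx)
  · -- homogeneity
    intro a x hx
    have h : ∀ t, Real.log ‖x - t‖ * S (x, t) * (a * u t)
        = a * (Real.log ‖x - t‖ * S (x, t) * u t) := fun t => by ring
    simp only [h]
    exact integral_const_mul a _
  · -- norm bound
    intro x hx
    set M2 : ℝ := sSup ((fun t => |u t|) '' Ω) with hM2def
    have hbddu : BddAbove ((fun t => |u t|) '' Ω) :=
      (hΩ.image_of_continuousOn hu.abs).bddAbove
    have hM2 : ∀ t ∈ Ω, |u t| ≤ M2 := fun t ht => le_csSup hbddu ⟨t, ht, rfl⟩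
    have hM2nn : 0 ≤ M2 := le_trans (abs_nonneg _) (hM2 _ hne.some_mem)
    calc |∫ t in Ω, Real.log ‖x - t‖ * S (x, t) * u t|
        ≤ ∫ t in Ω, |Real.log ‖x - t‖ * S (x, t) * u t| := by
          simpa only [Real.norm_eq_abs] using
            norm_integral_le_integral_norm (μ := volume.restrict Ω)
              (fun t => Real.log ‖x - t‖ * S (x, t) * u t)
      _ ≤ ∫ t in Ω, |Real.log ‖x - t‖ * S (x, t)| * M2 := by
          refine integral_mono_of_nonneg
            ((ae_restrict_iff' hmsΩ).2 (Filter.Eventually.of_forall fun t _ => abs_nonneg _))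
            ((hAbsKS x hx).mul_const M2)
            ((ae_restrict_iff' hmsΩ).2 (Filter.Eventually.of_forall fun t ht => ?_))
          simp only [abs_mul]
          exact mul_le_mul_of_nonneg_left (hM2 t ht) (mul_nonneg (abs_nonneg _) (abs_nonneg _))
      _ = (∫ t in Ω, |Real.log ‖x - t‖ * S (x, t)|) * M2 := by rw [integral_mul_const]
      _ ≤ sSup ((fun x => ∫ t in Ω, |Real.log ‖x - t‖ * S (x, t)|) '' Ω) * M2 :=
          mul_le_mul_of_nonneg_right (le_csSup hBdd ⟨x, hx, rfl⟩) hM2nn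
end

section
/- Let X be a real Banach space, let T : X → X be a compact bounded linear operator, and let (T_m)_{m≥1} be a sequence of bounded linear operators on X such that (i) T_m x → T x in X for every x ∈ X, and (ii) the family (T_m) is collectively compact, i.e. the set ⋃_m { T_m x : ‖x‖ ≤ 1 } has compact closure in X. Let λ ∈ ℝ and suppose the operator I − λT is bijective. Then there exist N ∈ ℕ and a constant C > 0 such that for every m ≥ N the operator I − λT_m is bijective and its inverse satisfies ‖(I − λT_m)^{-1} y‖ ≤ C ‖y‖ for all y ∈ X. -/
set_option maxHeartbeats 1000000

open Filter

section Aux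
variable {X : Type*} [NormedAddCommGroup X] [NormedSpace ℝ X]

/-- Scaling: if `A` maps the unit ball into `K` and `‖B‖ ≤ ε` on `K`, then
`‖B (A x)‖ ≤ ε * ‖x‖`. -/
lemma cc_aux_scale (B A : X →L[ℝ] X) (K : Set X) (ε : ℝ)
    (hε : 0 ≤ ε) (hA : ∀ x : X, ‖x‖ ≤ 1 → A x ∈ K) (hB : ∀ y ∈ K, ‖B y‖ ≤ ε) :
    ∀ x : X, ‖B (A x)‖ ≤ ε * ‖x‖ := by
  intro x
  rcases eq_or_ne x 0 with rfl | hx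
  · simp [hε]
  · have hxn : (0:ℝ) < ‖x‖ := norm_pos_iff.mpr hx
    set u : X := ‖x‖⁻¹ • x with hu
    have hun : ‖u‖ ≤ 1 := by
      rw [hu, norm_smul, norm_inv, norm_norm, inv_mul_cancel₀ hxn.ne']
    have hxu : x = ‖x‖ • u := by
      rw [hu, smul_smul, mul_inv_cancel₀ hxn.ne', one_smul]
    have hBA : B (A x) = ‖x‖ • B (A u) := by
      conv_lhs => rw [hxu]
      rw [map_smul, map_smul]
    rw [hBA, norm_smul, norm_norm, mul_comm]
    exact mul_le_mul_of_nonneg_right (hB _ (hA u hun)) hxn.le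

/-- Pointwise convergence + uniform norm bound gives uniform convergence on a compact set. -/
lemma cc_aux_unif (T : X →L[ℝ] X) (Tm : ℕ → X →L[ℝ] X)
    (hconv : ∀ x : X, Tendsto (fun m => Tm m x) atTop (nhds (T x)))
    (M : ℝ) (hM : ∀ m, ‖Tm m‖ ≤ M)
    (K : Set X) (hK : IsCompact K) (ε : ℝ) (hε : 0 < ε) :
    ∃ N : ℕ, ∀ m ≥ N, ∀ y ∈ K, ‖T y - Tm m y‖ ≤ ε := by
  have hM0 : (0:ℝ) ≤ M := le_trans (norm_nonneg _) (hM 0)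
  set c : ℝ := M + ‖T‖ + 1 with hc
  have hc0 : (0:ℝ) < c := by positivity
  set δ : ℝ := ε / (3 * c) with hδdef
  have hδ : (0:ℝ) < δ := by positivity
  -- finite cover of K by δ-balls centered in K
  obtain ⟨t, htK, htfin, hcov⟩ :=
    hK.elim_finite_subcover_image (b := K) (c := fun z => Metric.ball z δ)
      (fun z _ => Metric.isOpen_ball)
      (fun y hy => Set.mem_biUnion hy (Metric.mem_ball_self hδ))
  -- eventually all centers are ε/3-close
  have hev : ∀ᶠ m in atTop, ∀ z ∈ t, ‖Tm m z - T z‖ ≤ ε / 3 := by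
    rw [eventually_all_finite htfin]
    intro z _
    obtain ⟨Nz, hNz⟩ := Metric.tendsto_atTop.mp (hconv z) (ε/3) (by positivity)
    refine eventually_atTop.mpr ⟨Nz, fun m hm => ?_⟩
    have := hNz m hm
    rw [dist_eq_norm] at this
    exact this.le
  obtain ⟨N, hN⟩ := eventually_atTop.mp hev
  refine ⟨N, fun m hm y hy => ?_⟩
  obtain ⟨z, hz, hyz⟩ := Set.mem_iUnion₂.mp (hcov hy)
  have hyz' : ‖y - z‖ < δ := by rwa [Metric.mem_ball, dist_eq_norm] at hyz
  have h1 : ‖T y - T z‖ ≤ ‖T‖ * δ := by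
    calc ‖T y - T z‖ = ‖T (y - z)‖ := by rw [map_sub]
    _ ≤ ‖T‖ * ‖y - z‖ := T.le_opNorm _
    _ ≤ ‖T‖ * δ := mul_le_mul_of_nonneg_left hyz'.le (norm_nonneg _)
  have h2 : ‖T z - Tm m z‖ ≤ ε / 3 := by
    have := hN m hm z hz
    rwa [norm_sub_rev]
  have h3 : ‖Tm m z - Tm m y‖ ≤ M * δ := by
    calc ‖Tm m z - Tm m y‖ = ‖Tm m (z - y)‖ := by rw [map_sub]
    _ ≤ ‖Tm m‖ * ‖z - y‖ := (Tm m).le_opNorm _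
    _ ≤ M * δ := by
        apply mul_le_mul (hM m) _ (norm_nonneg _) hM0
        rw [norm_sub_rev]; exact hyz'.le
  have h₂ : c * δ = ε / 3 := by
    have hcne : c ≠ 0 := hc0.ne'
    rw [hδdef]; field_simp
  have hδc : (‖T‖ + M) * δ ≤ 2 * (ε / 3) := by
    have h₁ : (‖T‖ + M) * δ ≤ c * δ := by
      apply mul_le_mul_of_nonneg_right _ hδ.le
      rw [hc]; linarith [norm_nonneg T]
    linarith
  calc ‖T y - Tm m y‖ = ‖(T y - T z) + (T z - Tm m z) + (Tm m z - Tm m y)‖ := by abel_nf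
  _ ≤ ‖(T y - T z) + (T z - Tm m z)‖ + ‖Tm m z - Tm m y‖ := norm_add_le _ _
  _ ≤ ‖T y - T z‖ + ‖T z - Tm m z‖ + ‖Tm m z - Tm m y‖ := by
      gcongr; exact norm_add_le _ _
  _ ≤ ‖T‖ * δ + ε/3 + M * δ := by gcongr
  _ ≤ ε := by nlinarith

end Aux

/-- Collectively compact operator approximation: if `T` is a compact bounded linear
operator on a Banach space `X`, `(T_m)` is a pointwise convergent, collectively compact
sequence of bounded operators with limit `T`, and `I − λT` is bijective, then for all
sufficiently large `m` the operators `I − λT_m` are bijective with uniformly bounded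
inverses. -/
theorem collectively_compact_inverse_uniform_bound
    (X : Type*) [NormedAddCommGroup X] [NormedSpace ℝ X] [CompleteSpace X]
    (T : X →L[ℝ] X) (hT : IsCompact (closure (⇑T '' Metric.closedBall 0 1)))
    (Tm : ℕ → X →L[ℝ] X)
    (hconv : ∀ x : X, Tendsto (fun m => Tm m x) atTop (nhds (T x)))
    (hcc : IsCompact (closure (⋃ m : ℕ, ⇑(Tm m) '' Metric.closedBall 0 1)))
    (lam : ℝ)
    (hbij : Function.Bijective ⇑(ContinuousLinearMap.id ℝ X - lam • T)) :
    ∃ N : ℕ, ∃ C : ℝ, 0 < C ∧ ∀ m ≥ N,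
      Function.Bijective ⇑(ContinuousLinearMap.id ℝ X - lam • Tm m) ∧
      ∀ x y : X, (ContinuousLinearMap.id ℝ X - lam • Tm m) x = y → ‖x‖ ≤ C * ‖y‖ := by
  classical
  set A : X →L[ℝ] X := ContinuousLinearMap.id ℝ X - lam • T with hA
  have hker : LinearMap.ker (A : X →ₗ[ℝ] X) = ⊥ := (LinearMap.ker_eq_bot (f := (A : X →ₗ[ℝ] X))).mpr hbij.1
  have hrange : LinearMap.range (A : X →ₗ[ℝ] X) = ⊤ := (LinearMap.range_eq_top (f := (A : X →ₗ[ℝ] X))).mpr hbij.2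
  set e : X ≃L[ℝ] X := ContinuousLinearEquiv.ofBijective A hker hrange with he
  set S : X →L[ℝ] X := (e.symm : X →L[ℝ] X) with hSdef
  have hSA : ∀ w : X, S (A w) = w := fun w => e.symm_apply_apply w
  have hAS : ∀ w : X, A (S w) = w := fun w => e.apply_symm_apply w
  have hAx : ∀ w : X, A w = w - lam • T w := by
    intro w; simp [hA, ContinuousLinearMap.sub_apply, ContinuousLinearMap.smul_apply]
  have hS1 : ∀ w : X, S w - w = lam • S (T w) := by
    intro w
    have h := hSA w
    rw [hAx w, map_sub, map_smul] at h
    nth_rewrite 2 [← h]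
    abel
  have hS2 : ∀ w : X, S w - w = lam • T (S w) := by
    intro w
    have h := hAS w
    rw [hAx (S w)] at h
    nth_rewrite 2 [← h]
    abel
  have hll : (0:ℝ) ≤ lam * lam := mul_self_nonneg lam
  have hllS : (0:ℝ) ≤ lam * lam * ‖S‖ := mul_nonneg hll (norm_nonneg _)
  -- uniform bound on ‖Tm m‖
  obtain ⟨M, hM⟩ : ∃ M : ℝ, ∀ m, ‖Tm m‖ ≤ M := by
    apply banach_steinhaus
    intro x
    obtain ⟨b, hb⟩ := ((hconv x).norm).bddAbove_range
    exact ⟨b, fun m => hb ⟨m, rfl⟩⟩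
  have hM0 : (0:ℝ) ≤ M := le_trans (norm_nonneg _) (hM 0)
  -- the compact sets
  set K : Set X := closure (⋃ m : ℕ, ⇑(Tm m) '' Metric.closedBall 0 1) with hKdef
  have hKmem : ∀ (m : ℕ) (x : X), ‖x‖ ≤ 1 → (Tm m) x ∈ K := by
    intro m x hx
    exact subset_closure (Set.mem_iUnion.mpr ⟨m, ⟨x, by
      simpa [Metric.mem_closedBall, dist_eq_norm] using hx, rfl⟩⟩)
  set K' : Set X := S '' K with hK'def
  have hK' : IsCompact K' := hcc.image S.continuous
  have hK'mem : ∀ (m : ℕ) (x : X), ‖x‖ ≤ 1 → S ((Tm m) x) ∈ K' :=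
    fun m x hx => ⟨(Tm m) x, hKmem m x hx, rfl⟩
  -- choose N₁ and N₂
  set ε₁ : ℝ := 1 / (2 * ((lam * lam) * ‖S‖ + 1)) with hε₁def
  have hε₁ : (0:ℝ) < ε₁ := by
    rw [hε₁def]; apply div_pos one_pos; nlinarith
  obtain ⟨N₁, hN₁⟩ := cc_aux_unif T Tm hconv M hM K hcc ε₁ hε₁
  set ε₂ : ℝ := 1 / (2 * (lam * lam) + 2) with hε₂def
  have hε₂ : (0:ℝ) < ε₂ := by
    rw [hε₂def]; apply div_pos one_pos; nlinarith
  obtain ⟨N₂, hN₂⟩ := cc_aux_unif T Tm hconv M hM K' hK' ε₂ hε₂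
  set C : ℝ := 2 * (1 + |lam| * ‖S‖ * M) + 1 with hCdef
  have hsn : (0:ℝ) ≤ |lam| * ‖S‖ * M :=
    mul_nonneg (mul_nonneg (abs_nonneg _) (norm_nonneg _)) hM0
  have hC : (0:ℝ) < C := by rw [hCdef]; linarith
  refine ⟨max N₁ N₂, C, hC, fun m hm => ?_⟩
  set Bm : X →L[ℝ] X := ContinuousLinearMap.id ℝ X - lam • Tm m with hBmdef
  have hBmx : ∀ w : X, Bm w = w - lam • Tm m w := by
    intro w; simp [hBmdef, ContinuousLinearMap.sub_apply, ContinuousLinearMap.smul_apply]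
  -- key identity 1
  have key1 : ∀ x : X,
      Bm x + lam • S (Tm m (Bm x)) = x + (lam * lam) • S (T (Tm m x) - Tm m (Tm m x)) := by
    intro x
    set z : X := Tm m x with hz
    have hTmB : Tm m (Bm x) = z - lam • Tm m z := by
      rw [hBmx, map_sub, map_smul]
    have hh2 : lam • S z = lam • z + (lam * lam) • S (T z) := by
      have h := hS1 z
      rw [← smul_smul, ← h, smul_sub]
      abel
    rw [hTmB, hBmx]
    simp only [map_sub, map_smul, smul_sub, smul_smul]
    rw [← smul_smul, hh2]
    abel
  -- key identity 2
  have key2 : ∀ y : X,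
      Bm (y + lam • S (Tm m y)) =
        y + (lam * lam) • (T (S (Tm m y)) - Tm m (S (Tm m y))) := by
    intro y
    set z : X := Tm m y with hz
    have hh3 : lam • S z = lam • z + (lam * lam) • T (S z) := by
      have h := hS2 z
      rw [← smul_smul, ← h, smul_sub]
      abel
    rw [hBmx]
    simp only [map_add, map_smul, smul_add, smul_sub, smul_smul]
    rw [← smul_smul, hh3]
    abel
  -- smallness estimates
  have hB1 : ∀ y ∈ K, ‖(T - Tm m) y‖ ≤ ε₁ := by
    intro y hy
    simpa [ContinuousLinearMap.sub_apply] using hN₁ m (le_trans (le_max_left _ _) hm) y hy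
  have hB2 : ∀ y ∈ K', ‖(T - Tm m) y‖ ≤ ε₂ := by
    intro y hy
    simpa [ContinuousLinearMap.sub_apply] using hN₂ m (le_trans (le_max_right _ _) hm) y hy
  have hsmall1 : ∀ x : X, ‖T (Tm m x) - Tm m (Tm m x)‖ ≤ ε₁ * ‖x‖ := by
    intro x
    have := cc_aux_scale (T - Tm m) (Tm m) K ε₁ hε₁.le (hKmem m) hB1 x
    simpa [ContinuousLinearMap.sub_apply] using this
  have hsmall2 : ∀ x : X, ‖T (S (Tm m x)) - Tm m (S (Tm m x))‖ ≤ ε₂ * ‖x‖ := by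
    intro x
    have := cc_aux_scale (T - Tm m) (S.comp (Tm m)) K' ε₂ hε₂.le
      (fun x hx => hK'mem m x hx) hB2 x
    simpa [ContinuousLinearMap.sub_apply, ContinuousLinearMap.comp_apply] using this
  -- uniform bound
  have hbound : ∀ x y : X, Bm x = y → ‖x‖ ≤ C * ‖y‖ := by
    intro x y hxy
    have hx : x = y + lam • S (Tm m y) - (lam * lam) • S (T (Tm m x) - Tm m (Tm m x)) := by
      have h := key1 x
      rw [hxy] at h
      rw [h]
      abel
    have h1 : ‖lam • S (Tm m y)‖ ≤ |lam| * ‖S‖ * M * ‖y‖ := by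
      rw [norm_smul, Real.norm_eq_abs]
      calc |lam| * ‖S (Tm m y)‖ ≤ |lam| * (‖S‖ * ‖Tm m y‖) :=
        mul_le_mul_of_nonneg_left (S.le_opNorm _) (abs_nonneg _)
      _ ≤ |lam| * (‖S‖ * (M * ‖y‖)) := by
          gcongr
          calc ‖Tm m y‖ ≤ ‖Tm m‖ * ‖y‖ := (Tm m).le_opNorm _
          _ ≤ M * ‖y‖ := mul_le_mul_of_nonneg_right (hM m) (norm_nonneg _)
      _ = |lam| * ‖S‖ * M * ‖y‖ := by ring
    have h2 : ‖(lam * lam) • S (T (Tm m x) - Tm m (Tm m x))‖ ≤ (1/2) * ‖x‖ := by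
      rw [norm_smul, Real.norm_eq_abs, abs_of_nonneg hll]
      have hεb : lam * lam * ‖S‖ * ε₁ ≤ 1/2 := by
        rw [hε₁def, mul_one_div, div_le_iff₀ (by nlinarith : (0:ℝ) < 2 * ((lam*lam)*‖S‖ + 1))]
        nlinarith
      calc lam * lam * ‖S (T (Tm m x) - Tm m (Tm m x))‖
          ≤ lam * lam * (‖S‖ * ‖T (Tm m x) - Tm m (Tm m x)‖) :=
            mul_le_mul_of_nonneg_left (S.le_opNorm _) hll
      _ ≤ lam * lam * (‖S‖ * (ε₁ * ‖x‖)) := by gcongr; exact hsmall1 x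
      _ = (lam * lam * ‖S‖ * ε₁) * ‖x‖ := by ring
      _ ≤ (1/2) * ‖x‖ := mul_le_mul_of_nonneg_right hεb (norm_nonneg _)
    have hkey : ‖x‖ ≤ (1 + |lam| * ‖S‖ * M) * ‖y‖ + (1/2) * ‖x‖ := by
      calc ‖x‖ ≤ ‖y + lam • S (Tm m y)‖ + ‖(lam*lam) • S (T (Tm m x) - Tm m (Tm m x))‖ := by
            conv_lhs => rw [hx]
            exact norm_sub_le _ _
      _ ≤ (‖y‖ + |lam| * ‖S‖ * M * ‖y‖) + (1/2) * ‖x‖ := by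
          gcongr
          exact le_trans (norm_add_le _ _) (by gcongr)
      _ = (1 + |lam| * ‖S‖ * M) * ‖y‖ + (1/2) * ‖x‖ := by ring
    rw [hCdef]
    nlinarith [norm_nonneg x, norm_nonneg y]
  -- injectivity
  have hinj : Function.Injective ⇑Bm := by
    intro x₁ x₂ h
    have h0 : Bm (x₁ - x₂) = 0 := by rw [map_sub, h, sub_self]
    have hb := hbound (x₁ - x₂) 0 h0
    simp only [norm_zero, mul_zero] at hb
    have := le_antisymm hb (norm_nonneg _)
    rwa [norm_eq_zero, sub_eq_zero] at this
  -- surjectivity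
  have hsurj : Function.Surjective ⇑Bm := by
    set Gm : X →L[ℝ] X := 1 + lam • (S.comp (Tm m)) with hGm
    set Fm : X →L[ℝ] X := (lam * lam) • ((T - Tm m).comp (S.comp (Tm m))) with hFm
    have hBG : Bm * Gm = 1 + Fm := by
      ext y
      simp only [ContinuousLinearMap.mul_apply, ContinuousLinearMap.add_apply,
        ContinuousLinearMap.one_apply, ContinuousLinearMap.smul_apply,
        ContinuousLinearMap.comp_apply, ContinuousLinearMap.sub_apply, hGm, hFm]
      exact key2 y
    have hFnorm : ‖Fm‖ < 1 := by
      have hop : ‖(T - Tm m).comp (S.comp (Tm m))‖ ≤ ε₂ := by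
        apply ContinuousLinearMap.opNorm_le_bound _ hε₂.le
        intro x
        simpa [ContinuousLinearMap.sub_apply, ContinuousLinearMap.comp_apply] using hsmall2 x
      calc ‖Fm‖ = |lam * lam| * ‖(T - Tm m).comp (S.comp (Tm m))‖ := by
            rw [hFm, ← Real.norm_eq_abs]
            exact norm_smul (lam * lam) ((T - Tm m).comp (S.comp (Tm m)))
      _ ≤ (lam * lam) * ε₂ := by
            rw [abs_of_nonneg hll]
            exact mul_le_mul_of_nonneg_left hop hll
      _ < 1 := by
            rw [hε₂def, mul_one_div, div_lt_one (by nlinarith : (0:ℝ) < 2*(lam*lam) + 2)]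
            nlinarith
    have hFnorm' : ‖-Fm‖ < 1 := by rwa [norm_neg]
    set u : (X →L[ℝ] X)ˣ := Units.oneSub (-Fm) hFnorm' with hu
    have huval : (u : X →L[ℝ] X) = 1 + Fm := by
      rw [hu, Units.val_oneSub, sub_neg_eq_add]
    intro y
    refine ⟨(Gm * ↑u⁻¹) y, ?_⟩
    have hone : Bm * (Gm * ↑u⁻¹) = 1 := by
      rw [← mul_assoc, hBG, ← huval, Units.mul_inv]
    calc Bm ((Gm * ↑u⁻¹) y) = (Bm * (Gm * ↑u⁻¹)) y := rfl
    _ = y := by rw [hone]; rfl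
  exact ⟨⟨hinj, hsurj⟩, hbound⟩
end

section
/- Let X be a real Banach space, let F, F_m, Q_n be bounded linear operators on X, let λ ∈ ℝ, and let f, u* ∈ X with u* − λ·F u* = f. Suppose I − λ·(F_m ∘ Q_n) is bijective with ‖(I − λ F_m Q_n)^{-1}‖ ≤ γ₁ and ‖F_m‖ ≤ γ₂, and set ū := (I − λ F_m Q_n)^{-1} f. Then ‖ū − u*‖ ≤ |λ| · γ₁ · ( γ₂ · ‖u* − Q_n u*‖ + ‖F u* − F_m u*‖ ). -/
/-- Error bound for the iterated discrete collocation solution: if `u*` solves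
`u* − λ·F u* = f`, the operator `I − λ·F_m Q_n` is bijective with inverse of norm at most
`γ₁`, `‖F_m‖ ≤ γ₂`, and `ū := (I − λ F_m Q_n)⁻¹ f`, then
`‖ū − u*‖ ≤ |λ| γ₁ (γ₂‖u* − Q_n u*‖ + ‖F u* − F_m u*‖)`. -/
theorem discrete_collocation_error_bound
    (X : Type*) [NormedAddCommGroup X] [NormedSpace ℝ X]
    (F Fm Qn : X →L[ℝ] X) (lam γ1 γ2 : ℝ) (f ustar : X)
    (h : ustar - lam • F ustar = f)
    (inv : X →L[ℝ] X)
    (hinv1 : ∀ x : X, inv ((ContinuousLinearMap.id ℝ X - lam • (Fm.comp Qn)) x) = x)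
    (hinv2 : ∀ y : X, (ContinuousLinearMap.id ℝ X - lam • (Fm.comp Qn)) (inv y) = y)
    (hγ1 : ‖inv‖ ≤ γ1) (hγ2 : ‖Fm‖ ≤ γ2)
    (ubar : X) (hubar : ubar = inv f) :
    ‖ubar - ustar‖ ≤ |lam| * γ1 * (γ2 * ‖ustar - Qn ustar‖ + ‖F ustar - Fm ustar‖) := by
  have key : ubar - ustar
      = lam • inv (Fm (Qn ustar) - F ustar) := by
    have h1 := hinv1 ustar
    simp only [ContinuousLinearMap.sub_apply, ContinuousLinearMap.id_apply,
      ContinuousLinearMap.smul_apply, ContinuousLinearMap.comp_apply] at h1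
    calc ubar - ustar = inv f - inv (ustar - lam • Fm (Qn ustar)) := by rw [hubar, h1]
      _ = inv (f - (ustar - lam • Fm (Qn ustar))) := (map_sub inv f _).symm
      _ = inv (lam • (Fm (Qn ustar) - F ustar)) := by
          rw [← h]; congr 1
          rw [smul_sub]; abel
      _ = lam • inv (Fm (Qn ustar) - F ustar) := by rw [map_smul]
  rw [key]
  rw [norm_smul, Real.norm_eq_abs, mul_assoc]
  apply mul_le_mul_of_nonneg_left _ (abs_nonneg lam)
  have hγ1' : (0:ℝ) ≤ γ1 := le_trans (norm_nonneg _) hγ1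
  calc ‖inv (Fm (Qn ustar) - F ustar)‖ ≤ ‖inv‖ * ‖Fm (Qn ustar) - F ustar‖ :=
        inv.le_opNorm _
    _ ≤ γ1 * ‖Fm (Qn ustar) - F ustar‖ :=
        mul_le_mul_of_nonneg_right hγ1 (norm_nonneg _)
    _ ≤ γ1 * (γ2 * ‖ustar - Qn ustar‖ + ‖F ustar - Fm ustar‖) := by
        apply mul_le_mul_of_nonneg_left _ hγ1'
        have heq : Fm (Qn ustar) - F ustar
            = Fm (Qn ustar - ustar) + (Fm ustar - F ustar) := by
          rw [map_sub]; abel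
        rw [heq]
        refine le_trans (norm_add_le _ _) (add_le_add ?_ ?_)
        · calc ‖Fm (Qn ustar - ustar)‖ ≤ ‖Fm‖ * ‖Qn ustar - ustar‖ := Fm.le_opNorm _
            _ ≤ γ2 * ‖ustar - Qn ustar‖ := by
                rw [norm_sub_rev]
                exact mul_le_mul_of_nonneg_right hγ2 (norm_nonneg _)
        · rw [norm_sub_rev]
end

section
/- Let m ≥ 1 be an integer, σ ∈ (0, 1), and s ≥ (2m + 1)/(1 − σ). Then there exists a constant C > 0, depending only on m, σ, s, such that for every integer L ≥ 2, Σ_{q=2}^{L} ( (q/L)^s − ((q−1)/L)^s )^{2m+1} · ( ((q−1)/L)^s )^{−σ−2m} ≤ C · L^{−2m}. -/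
lemma rpow_sub_rpow_le_mvt {a b s : ℝ} (hb : 0 < b) (hba : b ≤ a) (hs : 1 ≤ s) :
    a ^ s - b ^ s ≤ s * a ^ (s - 1) * (a - b) := by
  rcases eq_or_lt_of_le hba with rfl | hlt
  · simp
  have hderiv : ∀ x ∈ Set.Ioo b a, HasDerivAt (fun t : ℝ => t ^ s) (s * x ^ (s - 1)) x := by
    intro x hx
    exact Real.hasDerivAt_rpow_const (Or.inr hs)
  have hcont : ContinuousOn (fun t : ℝ => t ^ s) (Set.Icc b a) := by
    intro x hx
    exact ((Real.hasDerivAt_rpow_const (p := s) (x := x) (Or.inr hs)).continuousAt).continuousWithinAt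
  obtain ⟨c, hc, hceq⟩ := exists_hasDerivAt_eq_slope (fun t : ℝ => t ^ s)
    (fun x => s * x ^ (s - 1)) hlt hcont hderiv
  have hca : c ≤ a := hc.2.le
  have hc0 : 0 ≤ c := (hb.trans hc.1).le
  have : a ^ s - b ^ s = s * c ^ (s - 1) * (a - b) := by
    rw [hceq, div_mul_cancel₀]
    exact sub_ne_zero_of_ne (ne_of_gt hlt)
  rw [this]
  have h1 : c ^ (s - 1) ≤ a ^ (s - 1) := Real.rpow_le_rpow hc0 hca (by linarith)
  have hs0 : (0:ℝ) ≤ s := by linarith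
  have hab : (0:ℝ) ≤ a - b := by linarith
  have := mul_le_mul_of_nonneg_left h1 hs0
  nlinarith

/-- Graded-mesh estimate: for `m ≥ 1`, `σ ∈ (0,1)` and `s ≥ (2m+1)/(1−σ)` there is a
constant `C > 0` such that for every integer `L ≥ 2`,
`Σ_{q=2}^{L} ((q/L)^s − ((q−1)/L)^s)^{2m+1} (((q−1)/L)^s)^{−σ−2m} ≤ C · L^{−2m}`. -/
theorem graded_mesh_sum_bound (m : ℕ) (hm : 1 ≤ m) (σ : ℝ) (hσ : σ ∈ Set.Ioo (0 : ℝ) 1)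
    (s : ℝ) (hs : (2 * m + 1) / (1 - σ) ≤ s) :
    ∃ C : ℝ, 0 < C ∧ ∀ L : ℕ, 2 ≤ L →
      ∑ q ∈ Finset.Icc 2 L,
          ((((q : ℝ) / L) ^ s - (((q : ℝ) - 1) / L) ^ s) ^ (2 * m + 1) *
            ((((q : ℝ) - 1) / L) ^ s) ^ (-σ - 2 * m)) ≤
        C * (L : ℝ) ^ (-(2 * (m : ℝ))) := by
  obtain ⟨hσ0, hσ1⟩ := hσ
  have h1σ : (0:ℝ) < 1 - σ := by linarith
  have hm1 : (1:ℝ) ≤ (m:ℝ) := by exact_mod_cast hm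
  have hs1 : 1 ≤ s := by
    refine le_trans ?_ hs
    rw [le_div_iff₀ h1σ]
    nlinarith
  have hs0 : 0 < s := by linarith
  have hα : (2*(m:ℝ)+1) ≤ s * (1-σ) := by
    rw [div_le_iff₀ h1σ] at hs
    push_cast at hs
    linarith
  set C : ℝ := s ^ (2*m+1) * 2 ^ (s*(σ+2*m)) with hC
  have hCpos : 0 < C := by positivity
  refine ⟨C, hCpos, ?_⟩
  intro L hL
  have hL0 : (0:ℝ) < L := by positivity
  have key : ∀ q ∈ Finset.Icc 2 L,
      ((((q : ℝ) / L) ^ s - (((q : ℝ) - 1) / L) ^ s) ^ (2 * m + 1) *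
        ((((q : ℝ) - 1) / L) ^ s) ^ (-σ - 2 * m)) ≤ C * (1/(L:ℝ)) ^ (2*m+1) := by
    intro q hq
    rw [Finset.mem_Icc] at hq
    have hx2 : (2:ℝ) ≤ (q:ℝ) := by exact_mod_cast hq.1
    have hxL : (q:ℝ) ≤ (L:ℝ) := by exact_mod_cast hq.2
    set x : ℝ := (q:ℝ) with hxdef
    set a : ℝ := x / L with ha
    set b : ℝ := (x-1) / L with hbdef
    have hb : 0 < b := div_pos (by linarith) hL0
    have ha0 : 0 < a := div_pos (by linarith) hL0
    have hba : b ≤ a := by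
      rw [ha, hbdef]
      gcongr
      linarith
    have hab2 : a/2 ≤ b := by
      rw [ha, hbdef, div_div, div_le_div_iff₀ (by positivity) hL0]
      nlinarith
    have ha1 : a ≤ 1 := by rw [ha, div_le_one hL0]; exact hxL
    have hdiff : a^s - b^s ≤ s * a^(s-1) * (1/(L:ℝ)) := by
      have h := rpow_sub_rpow_le_mvt hb hba hs1
      have hab : a - b = 1/(L:ℝ) := by rw [ha, hbdef]; field_simp; ring
      rwa [hab] at h
    have hdiff0 : 0 ≤ a^s - b^s := by
      have := Real.rpow_le_rpow hb.le hba hs0.le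
      linarith
    have ht : s * (-σ - 2*(m:ℝ)) ≤ 0 := by nlinarith
    have h1 : (a^s - b^s)^(2*m+1) ≤ (s * a^(s-1) * (1/(L:ℝ)))^(2*m+1) :=
      pow_le_pow_left₀ hdiff0 hdiff _
    have h2 : ((b^s)^(-σ-2*(m:ℝ)) : ℝ) = b^(s*(-σ-2*(m:ℝ))) := (Real.rpow_mul hb.le _ _).symm
    have h3 : b^(s*(-σ-2*(m:ℝ))) ≤ (a/2)^(s*(-σ-2*(m:ℝ))) :=
      Real.rpow_le_rpow_of_nonpos (by positivity) hab2 ht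
    have h4 : (a/2)^(s*(-σ-2*(m:ℝ))) = a^(s*(-σ-2*(m:ℝ))) * 2^(s*(σ+2*(m:ℝ))) := by
      rw [Real.div_rpow ha0.le (by norm_num : (0:ℝ) ≤ 2), div_eq_mul_inv,
        ← Real.rpow_neg (by norm_num : (0:ℝ) ≤ 2)]
      congr 1
      ring
    calc (a^s - b^s)^(2*m+1) * (b^s)^(-σ-2*(m:ℝ))
        ≤ (s * a^(s-1) * (1/(L:ℝ)))^(2*m+1) * ((a/2)^(s*(-σ-2*(m:ℝ)))) := by
          apply mul_le_mul h1 ?_ (Real.rpow_nonneg (Real.rpow_nonneg hb.le s) _) (by positivity)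
          rw [h2]; exact h3
      _ = C * (1/(L:ℝ))^(2*m+1) * (a^((s-1) * ((2*m+1:ℕ):ℝ) + s*(-σ-2*(m:ℝ)))) := by
          rw [h4, mul_pow, mul_pow, ← Real.rpow_natCast (a^(s-1)) (2*m+1),
            ← Real.rpow_mul ha0.le, Real.rpow_add ha0, hC]
          ring
      _ ≤ C * (1/(L:ℝ))^(2*m+1) * 1 := by
          apply mul_le_mul_of_nonneg_left ?_ (by positivity)
          apply Real.rpow_le_one ha0.le ha1
          push_cast
          nlinarith
      _ = C * (1/(L:ℝ))^(2*m+1) := mul_one _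
  calc ∑ q ∈ Finset.Icc 2 L,
          ((((q : ℝ) / L) ^ s - (((q : ℝ) - 1) / L) ^ s) ^ (2 * m + 1) *
            ((((q : ℝ) - 1) / L) ^ s) ^ (-σ - 2 * m))
      ≤ ∑ q ∈ Finset.Icc 2 L, C * (1/(L:ℝ))^(2*m+1) := Finset.sum_le_sum key
    _ = ((Finset.Icc 2 L).card : ℝ) * (C * (1/(L:ℝ))^(2*m+1)) := by
        rw [Finset.sum_const, nsmul_eq_mul]
    _ ≤ (L:ℝ) * (C * (1/(L:ℝ))^(2*m+1)) := by
        apply mul_le_mul_of_nonneg_right ?_ (by positivity)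
        rw [Nat.card_Icc]
        exact_mod_cast (by omega : L + 1 - 2 ≤ L)
    _ = C * ((L:ℝ)^(2*m:ℕ))⁻¹ := by
        rw [one_div, inv_pow, pow_succ]
        field_simp
    _ = C * (L:ℝ) ^ (-(2*(m:ℝ))) := by
        rw [← Real.rpow_natCast (L:ℝ) (2*m)]
        have h5 : ((2*m:ℕ):ℝ) = 2*(m:ℝ) := by push_cast; ring
        rw [h5, ← Real.rpow_neg hL0.le]
end
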